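/- arXiv:1406.5776 — 13 statements merged into one kernel-verified Lean document; each statement's English description precedes it below -/
import Mathlib

section
/- For every real α > −1, every real r > 0 and every integer i ≥ 0, ∫_0^∞ q^{α+r} e^{−q} (L_i^α(q))^2 dq = ∑_{k=0}^i C(i,k)·(−1)^{i−k}·(Γ(i+α+1)/Γ(k+α+1)) · (∏_{j=1}^i (r+k+1−j)) · Γ(α+r+k+1). -/
open Finset Real MeasureTheory

noncomputable def lagT (i : ℕ) (g : ℕ → ℝ) : ℝ :=
  ∑ m ∈ Finset.range (i + 1), (i.choose m : ℝ) * (-1 : ℝ) ^ m * g m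

lemma lagT_succ (i : ℕ) (g : ℕ → ℝ) :
    lagT (i + 1) g = lagT i g - lagT i (fun m => g (m + 1)) := by
  unfold lagT
  rw [Finset.sum_range_succ' (fun m => ((i+1).choose m : ℝ) * (-1 : ℝ) ^ m * g m)]
  have h1 : ∀ m, (((i+1).choose (m+1) : ℝ)) = (i.choose m : ℝ) + (i.choose (m+1) : ℝ) := by
    intro m; rw [Nat.choose_succ_succ]; push_cast; ring
  have e1 : ∑ m ∈ Finset.range (i + 1),
      ((i+1).choose (m+1) : ℝ) * (-1 : ℝ) ^ (m+1) * g (m+1)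
      = (∑ m ∈ Finset.range (i + 1), (i.choose m : ℝ) * (-1 : ℝ) ^ (m+1) * g (m+1))
      + ∑ m ∈ Finset.range (i + 1), (i.choose (m+1) : ℝ) * (-1 : ℝ) ^ (m+1) * g (m+1) := by
    rw [← Finset.sum_add_distrib]
    exact Finset.sum_congr rfl fun m _ => by rw [h1]; ring
  have e2 : ∑ m ∈ Finset.range (i + 1), (i.choose (m+1) : ℝ) * (-1 : ℝ) ^ (m+1) * g (m+1)
      = (∑ m ∈ Finset.range (i + 2), (i.choose m : ℝ) * (-1 : ℝ) ^ m * g m)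
        - (i.choose 0 : ℝ) * (-1 : ℝ)^0 * g 0 := by
    rw [Finset.sum_range_succ' (fun m => (i.choose m : ℝ) * (-1 : ℝ) ^ m * g m)]
    ring
  have e3 : ∑ m ∈ Finset.range (i + 2), (i.choose m : ℝ) * (-1 : ℝ) ^ m * g m
      = ∑ m ∈ Finset.range (i + 1), (i.choose m : ℝ) * (-1 : ℝ) ^ m * g m := by
    rw [Finset.sum_range_succ]
    simp [Nat.choose_succ_self]
  have e4 : ∑ m ∈ Finset.range (i + 1), (i.choose m : ℝ) * (-1 : ℝ) ^ (m+1) * g (m+1)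
      = - ∑ m ∈ Finset.range (i + 1), (i.choose m : ℝ) * (-1 : ℝ) ^ m * g (m+1) := by
    rw [← Finset.sum_neg_distrib]
    exact Finset.sum_congr rfl fun m _ => by ring
  rw [e1, e2, e3, e4]
  simp
  ring

lemma lagT_gamma (i : ℕ) : ∀ α t : ℝ, -1 < α → -1 < t →
    lagT i (fun m => Real.Gamma (t + m + 1) / Real.Gamma (α + m + 1)) =
      (-1 : ℝ) ^ i * (Real.Gamma (t + 1) / Real.Gamma (α + i + 1)) *
        ∏ j ∈ Finset.range i, (t - α - j) := by
  induction i with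
  | zero => intro α t hα ht; simp [lagT]
  | succ i ih =>
    intro α t hα ht
    rw [lagT_succ]
    have hdiff : (lagT i fun m => Real.Gamma (t + m + 1) / Real.Gamma (α + m + 1))
        - (lagT i fun m => Real.Gamma (t + (m+1 : ℕ) + 1) / Real.Gamma (α + (m+1 : ℕ) + 1))
        = -(t - α) * lagT i (fun m => Real.Gamma (t + m + 1) / Real.Gamma ((α+1) + m + 1)) := by
      unfold lagT
      rw [← Finset.sum_sub_distrib, Finset.mul_sum]
      refine Finset.sum_congr rfl fun m _ => ?_
      have hm : (0:ℝ) ≤ (m:ℝ) := Nat.cast_nonneg m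
      have hαm : (0:ℝ) < α + m + 1 := by linarith
      have htm : (0:ℝ) < t + m + 1 := by linarith
      have h1 : Real.Gamma (t + (m+1 : ℕ) + 1) = (t + m + 1) * Real.Gamma (t + m + 1) := by
        push_cast
        rw [show t + ((m:ℝ)+1) + 1 = (t + m + 1) + 1 by ring, Real.Gamma_add_one htm.ne']
      have h2 : Real.Gamma (α + (m+1 : ℕ) + 1) = (α + m + 1) * Real.Gamma (α + m + 1) := by
        push_cast
        rw [show α + ((m:ℝ)+1) + 1 = (α + m + 1) + 1 by ring, Real.Gamma_add_one hαm.ne']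
      have h3 : (α+1) + m + 1 = α + (m+1 : ℕ) + 1 := by push_cast; ring
      beta_reduce
      rw [h1, h2, h3, h2]
      have h4 : Real.Gamma (α + m + 1) ≠ 0 := (Real.Gamma_pos_of_pos hαm).ne'
      field_simp
      ring
    rw [hdiff, ih (α+1) t (by linarith) ht]
    have hG : Real.Gamma (α + 1 + i + 1) = Real.Gamma (α + (i+1 : ℕ) + 1) := by
      push_cast; ring_nf
    have hprod : ∏ j ∈ Finset.range (i+1), (t - α - j)
        = (∏ j ∈ Finset.range i, (t - (α+1) - j)) * (t - α) := by
      rw [Finset.prod_range_succ' (fun j => t - α - (j:ℝ))]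
      push_cast
      rw [show t - α - (0:ℝ) = t - α by ring]
      congr 1
      exact Finset.prod_congr rfl fun j _ => by ring
    rw [hG] at *
    rw [hprod]
    ring

lemma lag_inner_sum (i : ℕ) (α t : ℝ) (hα : -1 < α) (ht : -1 < t) :
    ∑ m ∈ Finset.range (i+1), (i.choose m : ℝ) * (-1 : ℝ)^(i-m) *
        (Real.Gamma ((i:ℝ)+α+1) / Real.Gamma ((m:ℝ)+α+1)) * Real.Gamma (t + m + 1)
    = (∏ j ∈ Finset.range i, (t - α - j)) * Real.Gamma (t+1) := by
  have h0 : ∑ m ∈ Finset.range (i+1), (i.choose m : ℝ) * (-1 : ℝ)^(i-m) *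
        (Real.Gamma ((i:ℝ)+α+1) / Real.Gamma ((m:ℝ)+α+1)) * Real.Gamma (t + m + 1)
      = Real.Gamma ((i:ℝ)+α+1) * ((-1:ℝ)^i *
          lagT i (fun m => Real.Gamma (t + m + 1) / Real.Gamma (α + m + 1))) := by
    unfold lagT
    rw [Finset.mul_sum, Finset.mul_sum]
    refine Finset.sum_congr rfl fun m hm => ?_
    have hmi : m ≤ i := Nat.lt_succ_iff.mp (Finset.mem_range.mp hm)
    have hsign : ((-1:ℝ))^(i-m) * (-1:ℝ)^m = (-1:ℝ)^i := by
      rw [← pow_add, Nat.sub_add_cancel hmi]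
    have hsign' : ((-1:ℝ))^(i-m) = (-1:ℝ)^i * (-1:ℝ)^m := by
      have : ((-1:ℝ))^m * (-1:ℝ)^m = 1 := by
        rw [← pow_add]; exact Even.neg_one_pow ⟨m, rfl⟩
      calc ((-1:ℝ))^(i-m) = ((-1:ℝ))^(i-m) * ((-1:ℝ)^m * (-1:ℝ)^m) := by rw [this]; ring
        _ = (-1:ℝ)^i * (-1:ℝ)^m := by rw [← mul_assoc, hsign]
    rw [hsign', show ((m:ℝ)+α+1) = α+(m:ℝ)+1 by ring]
    ring
  rw [h0, lagT_gamma i α t hα ht]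
  have hpos : (0:ℝ) < α + i + 1 := by
    have : (0:ℝ) ≤ (i:ℝ) := Nat.cast_nonneg i
    linarith
  have h2 : Real.Gamma (α+(i:ℝ)+1) ≠ 0 := (Real.Gamma_pos_of_pos hpos).ne'
  have h1 : Real.Gamma ((i:ℝ)+α+1) = Real.Gamma (α+(i:ℝ)+1) := by
    rw [show ((i:ℝ)+α+1) = α+(i:ℝ)+1 by ring]
  have hsq : ((-1:ℝ))^i * (-1:ℝ)^i = 1 := by
    rw [← pow_add]; exact Even.neg_one_pow ⟨i, rfl⟩
  rw [h1]
  field_simp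
  suffices ((-1:ℝ)) ^ i * ((-1:ℝ) ^ i * Real.Gamma (t + 1) * ∏ j ∈ Finset.range i, (t - α - (j:ℝ))) = (∏ j ∈ Finset.range i, (t - α - (j:ℝ))) * Real.Gamma (t+1) by linear_combination this
  calc ((-1:ℝ)) ^ i * ((-1:ℝ) ^ i * Real.Gamma (t + 1) * ∏ j ∈ Finset.range i, (t - α - (j:ℝ)))
      = ((-1:ℝ)^i * (-1:ℝ)^i) * (Real.Gamma (t+1) * ∏ j ∈ Finset.range i, (t - α - (j:ℝ))) := by ring
    _ = (∏ j ∈ Finset.range i, (t - α - (j:ℝ))) * Real.Gamma (t+1) := by rw [hsq]; ring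

/-- The monic generalised Laguerre polynomial
`L_i^α(q) = ∑_{k=0}^i C(i,k)(−1)^{i−k}(Γ(i+α+1)/Γ(k+α+1)) q^k`. -/
noncomputable def laguerreL (i : ℕ) (α : ℝ) (q : ℝ) : ℝ :=
  ∑ k ∈ Finset.range (i + 1),
    (i.choose k : ℝ) * (-1 : ℝ) ^ (i - k) *
      (Real.Gamma ((i : ℝ) + α + 1) / Real.Gamma ((k : ℝ) + α + 1)) * q ^ k

/-- The moment-perturbed diagonal Laguerre integral: for real `α > −1`, real `r > 0` and
integer `i ≥ 0`,
`∫₀^∞ q^{α+r} e^{−q} (L_i^α(q))² dq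
  = ∑_{k=0}^i C(i,k)(−1)^{i−k}(Γ(i+α+1)/Γ(k+α+1))·(∏_{j=1}^i (r+k+1−j))·Γ(α+r+k+1)`. -/
theorem laguerre_diagonal_moment_integral (α : ℝ) (hα : -1 < α) (r : ℝ) (hr : 0 < r)
    (i : ℕ) :
    (∫ q in Set.Ioi (0 : ℝ), q ^ (α + r) * Real.exp (-q) * (laguerreL i α q) ^ 2) =
      ∑ k ∈ Finset.range (i + 1),
        (i.choose k : ℝ) * (-1 : ℝ) ^ (i - k) *
          (Real.Gamma ((i : ℝ) + α + 1) / Real.Gamma ((k : ℝ) + α + 1)) *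
          (∏ j ∈ Finset.range i, (r + (k : ℝ) + 1 - ((j : ℝ) + 1))) *
          Real.Gamma (α + r + (k : ℝ) + 1) := by
  set c : ℕ → ℝ := fun k =>
    (i.choose k : ℝ) * (-1 : ℝ) ^ (i - k) *
      (Real.Gamma ((i : ℝ) + α + 1) / Real.Gamma ((k : ℝ) + α + 1)) with hc
  have hpos : ∀ k m : ℕ, (0:ℝ) < α + r + k + m + 1 := by
    intro k m
    have h1 : (0:ℝ) ≤ (k:ℝ) := Nat.cast_nonneg k
    have h2 : (0:ℝ) ≤ (m:ℝ) := Nat.cast_nonneg m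
    linarith
  have step1 : Set.EqOn (fun q : ℝ => q ^ (α + r) * Real.exp (-q) * (laguerreL i α q) ^ 2)
      (fun q : ℝ => ∑ k ∈ Finset.range (i+1), ∑ m ∈ Finset.range (i+1),
        (c k * c m) * (Real.exp (-q) * q ^ (α + r + (k:ℝ) + (m:ℝ) + 1 - 1)))
      (Set.Ioi 0) := by
    intro q hq
    have hq' : (0:ℝ) < q := hq
    simp only
    unfold laguerreL
    rw [sq, Finset.sum_mul_sum]
    rw [Finset.mul_sum]
    refine Finset.sum_congr rfl fun k _ => ?_
    rw [Finset.mul_sum]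
    refine Finset.sum_congr rfl fun m _ => ?_
    have he : q ^ (α + r + (k:ℝ) + (m:ℝ) + 1 - 1) = q ^ (α + r) * q ^ k * q ^ m := by
      rw [show α + r + (k:ℝ) + (m:ℝ) + 1 - 1 = (α + r) + ((k:ℝ) + (m:ℝ)) by ring,
        Real.rpow_add hq', show ((k:ℝ)+(m:ℝ)) = ((k+m : ℕ) : ℝ) by push_cast; ring,
        Real.rpow_natCast, pow_add]
      ring
    rw [he, hc]
    ring
  rw [setIntegral_congr_fun measurableSet_Ioi step1]
  have hint : ∀ k m : ℕ, IntegrableOn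
      (fun q : ℝ => (c k * c m) * (Real.exp (-q) * q ^ (α + r + (k:ℝ) + (m:ℝ) + 1 - 1)))
      (Set.Ioi 0) := fun k m => (Real.GammaIntegral_convergent (hpos k m)).const_mul _
  rw [integral_finset_sum _ (fun k _ => integrable_finset_sum _ (fun m _ => hint k m))]
  refine Finset.sum_congr rfl fun k hk => ?_
  rw [integral_finset_sum _ (fun m _ => hint k m)]
  have hstep : ∀ m : ℕ, (∫ q in Set.Ioi (0:ℝ),
      (c k * c m) * (Real.exp (-q) * q ^ (α + r + (k:ℝ) + (m:ℝ) + 1 - 1)))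
      = c k * (c m * Real.Gamma (α + r + (k:ℝ) + (m:ℝ) + 1)) := by
    intro m
    rw [MeasureTheory.integral_const_mul, ← Real.Gamma_eq_integral (hpos k m)]
    ring
  rw [Finset.sum_congr rfl fun m _ => hstep m, ← Finset.mul_sum]
  have ht : -1 < α + r + (k:ℝ) := by
    have : (0:ℝ) ≤ (k:ℝ) := Nat.cast_nonneg k
    linarith
  have hin : ∑ m ∈ Finset.range (i+1), c m * Real.Gamma (α + r + (k:ℝ) + (m:ℝ) + 1)
      = (∏ j ∈ Finset.range i, (α + r + (k:ℝ) - α - j)) * Real.Gamma (α + r + (k:ℝ) + 1) := by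
    rw [← lag_inner_sum i α (α + r + (k:ℝ)) hα ht]
  rw [hin]
  have hprod : (∏ j ∈ Finset.range i, (α + r + (k:ℝ) - α - j))
      = ∏ j ∈ Finset.range i, (r + (k:ℝ) + 1 - ((j:ℝ) + 1)) :=
    Finset.prod_congr rfl fun j _ => by ring
  rw [hprod, hc]
  ring
end

section
/- For every integer i ≥ 0, every real α > −1 and every real β > 0, ∫_0^∞ q^{β−1} e^{−q} L_i^α(q) dq = (−1)^i · (1+α−β)(2+α−β)⋯(i+α−β) · Γ(β), where the product (1+α−β)(2+α−β)⋯(i+α−β) is the Pochhammer rising factorial (1−β+α)_i (interpreted as 1 when i = 0). -/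
open Finset MeasureTheory

lemma keyT : ∀ (i : ℕ) (α β : ℝ), -1 < α → 0 < β →
    ∑ k ∈ Finset.range (i + 1),
        (i.choose k : ℝ) * (-1) ^ k * (Real.Gamma (β + k) / Real.Gamma ((k : ℝ) + α + 1))
      = (∏ j ∈ Finset.range i, ((j : ℝ) + 1 + α - β)) * Real.Gamma β /
          Real.Gamma ((i : ℝ) + α + 1) := by
  intro i
  induction i with
  | zero => intro α β hα hβ; simp
  | succ i ih =>
    intro α β hα hβ
    have hG : 0 < Real.Gamma ((i : ℝ) + α + 1) :=
      Real.Gamma_pos_of_pos (by push_cast; linarith)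
    have hne : ((i : ℝ) + α + 1) ≠ 0 := by push_cast; linarith
    set g : ℕ → ℝ := fun k => Real.Gamma (β + k) / Real.Gamma ((k : ℝ) + α + 1) with hg
    have step1 : ∑ k ∈ Finset.range (i + 2), ((i+1).choose k : ℝ) * (-1) ^ k * g k
        = (∑ k ∈ Finset.range (i + 1), ((i+1).choose (k+1) : ℝ) * (-1) ^ (k+1) * g (k+1))
          + ((i+1).choose 0 : ℝ) * (-1) ^ (0:ℕ) * g 0 :=
      Finset.sum_range_succ' _ _
    have step2 : ∑ k ∈ Finset.range (i + 1), ((i+1).choose (k+1) : ℝ) * (-1) ^ (k+1) * g (k+1)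
        = (-(∑ k ∈ Finset.range (i + 1), (i.choose k : ℝ) * (-1) ^ k * g (k+1)))
          + ∑ k ∈ Finset.range (i + 1), (i.choose (k+1) : ℝ) * (-1) ^ (k+1) * g (k+1) := by
      rw [← Finset.sum_neg_distrib, ← Finset.sum_add_distrib]
      refine Finset.sum_congr rfl fun k _ => ?_
      push_cast [Nat.choose_succ_succ]
      ring
    have step3 : ∑ k ∈ Finset.range (i + 1), (i.choose (k+1) : ℝ) * (-1) ^ (k+1) * g (k+1)
        = (∑ k ∈ Finset.range (i + 1), (i.choose k : ℝ) * (-1) ^ k * g k)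
          - (i.choose 0 : ℝ) * (-1) ^ (0:ℕ) * g 0 := by
      have := Finset.sum_range_succ' (fun k => (i.choose k : ℝ) * (-1) ^ k * g k) (i + 1)
      rw [Finset.sum_range_succ (fun k => (i.choose k : ℝ) * (-1) ^ k * g k) (i+1)] at this
      simp only [Nat.choose_succ_self, Nat.cast_zero, zero_mul, add_zero] at this
      linarith [this]
    -- the shifted sum equals the (α+1, β+1) sum of ih
    have step4 : ∑ k ∈ Finset.range (i + 1), (i.choose k : ℝ) * (-1) ^ k * g (k+1)
        = ∑ k ∈ Finset.range (i + 1),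
            (i.choose k : ℝ) * (-1) ^ k *
              (Real.Gamma ((β+1) + k) / Real.Gamma ((k : ℝ) + (α+1) + 1)) := by
      refine Finset.sum_congr rfl fun k _ => ?_
      have h1 : β + ((k+1 : ℕ) : ℝ) = (β + 1) + k := by push_cast; ring
      have h2 : ((k+1 : ℕ) : ℝ) + α + 1 = (k : ℝ) + (α + 1) + 1 := by push_cast; ring
      simp only [hg, h1, h2]
    have ih1 := ih α β hα hβ
    have ih2 := ih (α+1) (β+1) (by linarith) (by linarith)
    have goalsum : ∑ k ∈ Finset.range (i + 1 + 1),
        ((i+1).choose k : ℝ) * (-1) ^ k * (Real.Gamma (β + k) / Real.Gamma ((k : ℝ) + α + 1))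
        = (∑ k ∈ Finset.range (i + 1), (i.choose k : ℝ) * (-1) ^ k * g k)
          - ∑ k ∈ Finset.range (i + 1), (i.choose k : ℝ) * (-1) ^ k * g (k+1) := by
      show ∑ k ∈ Finset.range (i + 2), ((i+1).choose k : ℝ) * (-1) ^ k * g k = _
      rw [step1, step2, step3]
      simp only [Nat.choose_zero_right, Nat.cast_one, one_mul, pow_zero]
      ring
    rw [goalsum, step4, ih1, ih2]
    have hGadd : Real.Gamma (((i:ℝ)+1) + α + 1) = ((i:ℝ) + α + 1) * Real.Gamma ((i:ℝ)+α+1) := by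
      have : ((i:ℝ)+1) + α + 1 = ((i:ℝ) + α + 1) + 1 := by ring
      rw [this, Real.Gamma_add_one hne]
    have hBadd : Real.Gamma (β + 1) = β * Real.Gamma β := Real.Gamma_add_one (ne_of_gt hβ)
    have hprod : ∀ γ : ℝ, ∏ j ∈ Finset.range i, ((j:ℝ) + 1 + (α+1) - (β+1))
        = ∏ j ∈ Finset.range i, ((j:ℝ) + 1 + α - β) := by
      intro _; exact Finset.prod_congr rfl fun j _ => by ring
    rw [hprod 0, hBadd, Finset.prod_range_succ]
    have : Real.Gamma ((↑(i+1):ℝ) + α + 1) = ((i:ℝ) + α + 1) * Real.Gamma ((i:ℝ)+α+1) := by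
      push_cast; rw [← hGadd]
    rw [this]
    have h2 : Real.Gamma ((i:ℝ) + (α+1) + 1) = ((i:ℝ) + α + 1) * Real.Gamma ((i:ℝ)+α+1) := by
      rw [← hGadd]; ring_nf
    rw [h2]
    field_simp
    ring

/-- For integer `i ≥ 0`, real `α > −1` and real `β > 0`,
`∫₀^∞ q^{β−1} e^{−q} L_i^α(q) dq = (−1)^i·(1−β+α)_i·Γ(β)`, where
`(1−β+α)_i = (1+α−β)(2+α−β)⋯(i+α−β)` is the rising factorial (equal to `1` for `i = 0`). -/
theorem laguerre_moment_integral (i : ℕ) (α : ℝ) (hα : -1 < α) (β : ℝ) (hβ : 0 < β) :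
    (∫ q in Set.Ioi (0 : ℝ), q ^ (β - 1) * Real.exp (-q) * laguerreL i α q) =
      (-1 : ℝ) ^ i * (∏ j ∈ Finset.range i, ((j : ℝ) + 1 + α - β)) * Real.Gamma β := by
  have hI : ∀ k : ℕ, IntegrableOn (fun q : ℝ => Real.exp (-q) * q ^ (β + k - 1)) (Set.Ioi 0) :=
    fun k => Real.GammaIntegral_convergent (add_pos_of_pos_of_nonneg hβ (Nat.cast_nonneg k))
  have heq : Set.EqOn (fun q : ℝ => q ^ (β - 1) * Real.exp (-q) * laguerreL i α q)
      (fun q : ℝ => ∑ k ∈ Finset.range (i + 1),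
        ((i.choose k : ℝ) * (-1 : ℝ) ^ (i - k) *
            (Real.Gamma ((i : ℝ) + α + 1) / Real.Gamma ((k : ℝ) + α + 1))) *
          (Real.exp (-q) * q ^ (β + k - 1))) (Set.Ioi 0) := by
    intro q hq
    have hq0 : (0 : ℝ) < q := hq
    simp only [laguerreL, Finset.mul_sum]
    refine Finset.sum_congr rfl fun k _ => ?_
    have hpow : q ^ (β + (k : ℝ) - 1) = q ^ (β - 1) * q ^ (k : ℕ) := by
      rw [show β + (k : ℝ) - 1 = (β - 1) + (k : ℝ) by ring, Real.rpow_add hq0,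
        Real.rpow_natCast]
    rw [hpow]; ring
  rw [setIntegral_congr_fun measurableSet_Ioi heq]
  rw [integral_finset_sum _ fun k _ => ((hI k).const_mul _)]
  have hmom : ∀ k : ℕ, (∫ q in Set.Ioi (0:ℝ), Real.exp (-q) * q ^ (β + k - 1))
      = Real.Gamma (β + k) := fun k =>
    (Real.Gamma_eq_integral (add_pos_of_pos_of_nonneg hβ (Nat.cast_nonneg k))).symm
  simp_rw [MeasureTheory.integral_const_mul, hmom]
  -- algebra
  have hGne : Real.Gamma ((i : ℝ) + α + 1) ≠ 0 :=
    ne_of_gt (Real.Gamma_pos_of_pos (by have h0 : (0:ℝ) ≤ (i:ℝ) := Nat.cast_nonneg i; linarith))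
  have key := keyT i α β hα hβ
  have hstep : ∑ k ∈ Finset.range (i + 1),
      (i.choose k : ℝ) * (-1 : ℝ) ^ (i - k) *
        (Real.Gamma ((i : ℝ) + α + 1) / Real.Gamma ((k : ℝ) + α + 1)) * Real.Gamma (β + k)
      = (-1 : ℝ) ^ i * Real.Gamma ((i : ℝ) + α + 1) *
          ∑ k ∈ Finset.range (i + 1),
            (i.choose k : ℝ) * (-1) ^ k * (Real.Gamma (β + k) / Real.Gamma ((k : ℝ) + α + 1)) := by
    rw [Finset.mul_sum]
    refine Finset.sum_congr rfl fun k hk => ?_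
    have hk' : k ≤ i := Nat.lt_succ_iff.mp (Finset.mem_range.mp hk)
    have hsgn : (-1 : ℝ) ^ (i - k) = (-1) ^ i * (-1) ^ k := by
      have h3 : (-1 : ℝ) ^ (i - k) * (-1) ^ k = (-1) ^ i := by
        rw [← pow_add, Nat.sub_add_cancel hk']
      have h4 : ((-1 : ℝ) ^ k) * ((-1 : ℝ) ^ k) = 1 := by
        rw [← pow_add]; exact Even.neg_one_pow ⟨k, rfl⟩
      calc (-1 : ℝ) ^ (i - k) = (-1) ^ (i - k) * ((-1) ^ k * (-1) ^ k) := by rw [h4, mul_one]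
        _ = ((-1) ^ (i - k) * (-1) ^ k) * (-1) ^ k := by ring
        _ = (-1) ^ i * (-1) ^ k := by rw [h3]
    rw [hsgn]; ring
  rw [hstep, key]
  field_simp
end

section
/- For every real α > −1 and all integers i, j ≥ 0, the generalised Laguerre polynomials satisfy the orthogonality relation ∫_0^∞ q^α e^{−q} L_i^α(q) L_j^α(q) dq = i!·Γ(α+i+1) if i = j, and the integral equals 0 if i ≠ j. -/
open Finset MeasureTheory

/-- Coefficient of `q^k` in `laguerreL i α`. -/
noncomputable def lagCoeff (i : ℕ) (α : ℝ) (k : ℕ) : ℝ :=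
  (i.choose k : ℝ) * (-1 : ℝ) ^ (i - k) *
      (Real.Gamma ((i : ℝ) + α + 1) / Real.Gamma ((k : ℝ) + α + 1))

lemma laguerreL_eq (i : ℕ) (α : ℝ) (q : ℝ) :
    laguerreL i α q = ∑ k ∈ Finset.range (i + 1), lagCoeff i α k * q ^ k := rfl

/-- forward difference of a rising-factorial-type product. -/
lemma fwdDiff_rising (β : ℝ) (m : ℕ) :
    fwdDiff (1 : ℕ) (fun k : ℕ => ∏ t ∈ Finset.range (m + 1), (β + k + t)) =
      fun k : ℕ => ((m : ℝ) + 1) * ∏ t ∈ Finset.range m, ((β + 1) + k + t) := by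
  funext k
  simp only [fwdDiff]
  rw [Finset.prod_range_succ, Finset.prod_range_succ']
  have e1 : (∏ t ∈ Finset.range m, (β + ((k + 1 : ℕ) : ℝ) + t)) =
      ∏ t ∈ Finset.range m, ((β + 1) + k + t) :=
    Finset.prod_congr rfl fun t _ => by push_cast; ring
  have e2 : (∏ t ∈ Finset.range m, (β + k + ((t + 1 : ℕ) : ℝ))) =
      ∏ t ∈ Finset.range m, ((β + 1) + k + t) :=
    Finset.prod_congr rfl fun t _ => by push_cast; ring
  rw [e1, e2]
  push_cast
  ring

lemma fwdDiff_iter_zero_fun (n : ℕ) :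
    (fwdDiff (1 : ℕ))^[n] (fun _ : ℕ => (0 : ℝ)) = fun _ => 0 := by
  induction n with
  | zero => rfl
  | succ n ih =>
    rw [Function.iterate_succ_apply]
    simpa [fwdDiff_const] using ih

lemma fwdDiff_iter_rising (i : ℕ) : ∀ (β : ℝ) (m : ℕ), m ≤ i →
    (fwdDiff (1 : ℕ))^[i] (fun k : ℕ => ∏ t ∈ Finset.range m, (β + k + t)) 0 =
      if m = i then (i.factorial : ℝ) else 0 := by
  induction i with
  | zero =>
    intro β m hm
    interval_cases m
    simp
  | succ n ih =>
    intro β m hm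
    cases m with
    | zero =>
      have h1 : (fun k : ℕ => ∏ t ∈ Finset.range 0, (β + k + t)) = fun _ : ℕ => (1 : ℝ) := by
        funext k; simp
      rw [h1, Function.iterate_succ_apply]
      have h2 : fwdDiff (1 : ℕ) (fun _ : ℕ => (1 : ℝ)) = fun _ => 0 := by
        funext k; simp [fwdDiff]
      rw [h2, fwdDiff_iter_zero_fun]
      simp
    | succ m' =>
      rw [Function.iterate_succ_apply, fwdDiff_rising]
      have h3 : (fun k : ℕ => ((m' : ℝ) + 1) * ∏ t ∈ Finset.range m', ((β + 1) + k + t))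
          = ((m' : ℝ) + 1) • (fun k : ℕ => ∏ t ∈ Finset.range m', ((β + 1) + k + t)) := rfl
      rw [h3, fwdDiff_iter_const_smul, Pi.smul_apply, smul_eq_mul,
        ih (β + 1) m' (Nat.succ_le_succ_iff.mp hm)]
      by_cases h : m' = n
      · subst h
        simp [Nat.factorial_succ]
      · simp [h, fun hc : m' + 1 = n + 1 => h (Nat.succ_injective hc)]

lemma alt_sum_rising (i : ℕ) (β : ℝ) (m : ℕ) (hm : m ≤ i) :
    ∑ k ∈ Finset.range (i + 1),
        (-1 : ℝ) ^ (i - k) * (i.choose k : ℝ) * ∏ t ∈ Finset.range m, (β + k + t)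
      = if m = i then (i.factorial : ℝ) else 0 := by
  rw [← fwdDiff_iter_rising i β m hm,
    fwdDiff_iter_eq_sum_shift (1 : ℕ) (fun k : ℕ => ∏ t ∈ Finset.range m, (β + k + t)) i 0]
  refine Finset.sum_congr rfl fun k hk => ?_
  simp only [zero_add, smul_eq_mul, mul_one, zsmul_eq_mul]
  push_cast
  ring

lemma Gamma_add_nat (x : ℝ) (hx : 0 < x) (m : ℕ) :
    Real.Gamma (x + m) = (∏ t ∈ Finset.range m, (x + t)) * Real.Gamma x := by
  induction m with
  | zero => simp
  | succ m ih =>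
    have hpos : (0 : ℝ) < x + m := by positivity
    rw [show (x + ((m : ℕ) + 1 : ℕ) : ℝ) = (x + m) + 1 by push_cast; ring,
      Real.Gamma_add_one hpos.ne', ih, Finset.prod_range_succ]
    ring

lemma integrableOn_rpow_exp {β : ℝ} (hβ : -1 < β) :
    IntegrableOn (fun q : ℝ => q ^ β * Real.exp (-q)) (Set.Ioi 0) := by
  have h := Real.GammaIntegral_convergent (s := β + 1) (by linarith)
  have h2 : (fun x : ℝ => Real.exp (-x) * x ^ (β + 1 - 1)) =
      fun q : ℝ => q ^ β * Real.exp (-q) := by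
    funext q; rw [add_sub_cancel_right, mul_comm]
  exact h2 ▸ h

lemma integral_rpow_exp {β : ℝ} (hβ : -1 < β) :
    ∫ q in Set.Ioi (0 : ℝ), q ^ β * Real.exp (-q) = Real.Gamma (β + 1) := by
  rw [Real.Gamma_eq_integral (by linarith : (0 : ℝ) < β + 1)]
  have h2 : ∀ q : ℝ, Real.exp (-q) * q ^ (β + 1 - 1) = q ^ β * Real.exp (-q) := by
    intro q; rw [add_sub_cancel_right, mul_comm]
  simp only [h2]

lemma sum_lemma (α : ℝ) (hα : -1 < α) (i j : ℕ) (hij : j ≤ i) :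
    ∑ k ∈ Finset.range (i + 1), ∑ m ∈ Finset.range (j + 1),
        lagCoeff i α k * lagCoeff j α m * Real.Gamma (α + k + m + 1)
      = if i = j then (i.factorial : ℝ) * Real.Gamma (α + i + 1) else 0 := by
  rw [Finset.sum_comm]
  have hstep : ∀ m ∈ Finset.range (j + 1),
      (∑ k ∈ Finset.range (i + 1),
          lagCoeff i α k * lagCoeff j α m * Real.Gamma (α + k + m + 1))
        = (Real.Gamma ((i : ℝ) + α + 1) * lagCoeff j α m) *
            (if m = i then (i.factorial : ℝ) else 0) := by
    intro m hm
    have hmi : m ≤ i := le_trans (Nat.lt_succ_iff.mp (Finset.mem_range.mp hm)) hij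
    rw [← alt_sum_rising i (α + 1) m hmi, Finset.mul_sum]
    refine Finset.sum_congr rfl fun k _ => ?_
    have hk1 : (0 : ℝ) < (k : ℝ) + α + 1 := by
      have : (0 : ℝ) ≤ (k : ℝ) := Nat.cast_nonneg k
      linarith
    have hG : Real.Gamma (α + k + m + 1)
        = (∏ t ∈ Finset.range m, ((α + 1) + k + t)) * Real.Gamma ((k : ℝ) + α + 1) := by
      have h1 := Gamma_add_nat ((k : ℝ) + α + 1) hk1 m
      rw [show α + (k : ℝ) + (m : ℝ) + 1 = ((k : ℝ) + α + 1) + m by ring, h1]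
      congr 1
      exact Finset.prod_congr rfl fun t _ => by ring
    have hne : Real.Gamma ((k : ℝ) + α + 1) ≠ 0 := (Real.Gamma_pos_of_pos hk1).ne'
    rw [hG]
    simp only [lagCoeff]
    have hcancel : Real.Gamma ((i : ℝ) + α + 1) / Real.Gamma ((k : ℝ) + α + 1) *
        Real.Gamma ((k : ℝ) + α + 1) = Real.Gamma ((i : ℝ) + α + 1) :=
      div_mul_cancel₀ _ hne
    linear_combination ((i.choose k : ℝ) * (-1 : ℝ) ^ (i - k) *
      ((j.choose m : ℝ) * (-1 : ℝ) ^ (j - m) *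
        (Real.Gamma ((j : ℝ) + α + 1) / Real.Gamma ((m : ℝ) + α + 1))) *
      ∏ t ∈ Finset.range m, ((α + 1) + k + t)) * hcancel
  rw [Finset.sum_congr rfl hstep]
  by_cases h : i = j
  · subst h
    rw [Finset.sum_eq_single i]
    · have hi1 : (0 : ℝ) < (i : ℝ) + α + 1 := by
        have : (0 : ℝ) ≤ (i : ℝ) := Nat.cast_nonneg i
        linarith
      have hne : Real.Gamma ((i : ℝ) + α + 1) ≠ 0 := (Real.Gamma_pos_of_pos hi1).ne'
      rw [if_pos rfl, if_pos rfl]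
      simp only [lagCoeff, Nat.choose_self, Nat.sub_self, pow_zero, Nat.cast_one,
        div_self hne]
      rw [show α + (i : ℝ) + 1 = (i : ℝ) + α + 1 by ring]
      ring
    · intro m _ hmne
      rw [if_neg hmne, mul_zero]
    · intro hmem
      exact absurd (Finset.self_mem_range_succ i) hmem
  · have hji : j < i := lt_of_le_of_ne hij (fun hc => h hc.symm)
    rw [if_neg h]
    refine Finset.sum_eq_zero fun m hm => ?_
    have : m ≠ i := by
      have := Nat.lt_succ_iff.mp (Finset.mem_range.mp hm)
      omega
    rw [if_neg this, mul_zero]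

lemma laguerre_orthogonality_aux (α : ℝ) (hα : -1 < α) (i j : ℕ) (hij : j ≤ i) :
    (∫ q in Set.Ioi (0 : ℝ), q ^ α * Real.exp (-q) * laguerreL i α q * laguerreL j α q) =
      if i = j then (i.factorial : ℝ) * Real.Gamma (α + (i : ℝ) + 1) else 0 := by
  have hpos : ∀ k m : ℕ, (-1 : ℝ) < α + k + m := by
    intro k m
    have h1 : (0 : ℝ) ≤ (k : ℝ) := Nat.cast_nonneg k
    have h2 : (0 : ℝ) ≤ (m : ℝ) := Nat.cast_nonneg m
    linarith
  have hfun : Set.EqOn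
      (fun q : ℝ => q ^ α * Real.exp (-q) * laguerreL i α q * laguerreL j α q)
      (fun q : ℝ => ∑ k ∈ Finset.range (i + 1), ∑ m ∈ Finset.range (j + 1),
        (lagCoeff i α k * lagCoeff j α m) * (q ^ (α + k + m) * Real.exp (-q)))
      (Set.Ioi 0) := by
    intro q hq
    have hq0 : (0 : ℝ) < q := hq
    simp only [laguerreL_eq]
    rw [show q ^ α * Real.exp (-q) * (∑ k ∈ Finset.range (i + 1), lagCoeff i α k * q ^ k) *
          (∑ m ∈ Finset.range (j + 1), lagCoeff j α m * q ^ m)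
        = (q ^ α * Real.exp (-q)) *
          ((∑ k ∈ Finset.range (i + 1), lagCoeff i α k * q ^ k) *
            (∑ m ∈ Finset.range (j + 1), lagCoeff j α m * q ^ m)) by ring,
      Finset.sum_mul_sum, Finset.mul_sum]
    refine Finset.sum_congr rfl fun k _ => ?_
    rw [Finset.mul_sum]
    refine Finset.sum_congr rfl fun m _ => ?_
    rw [show q ^ (α + (k : ℝ) + (m : ℝ)) = q ^ α * q ^ k * q ^ m by
      rw [Real.rpow_add hq0, Real.rpow_add hq0, Real.rpow_natCast, Real.rpow_natCast]]
    ring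
  rw [setIntegral_congr_fun measurableSet_Ioi hfun]
  have hint : ∀ k m : ℕ, Integrable
      (fun q : ℝ => (lagCoeff i α k * lagCoeff j α m) * (q ^ (α + k + m) * Real.exp (-q)))
      (volume.restrict (Set.Ioi 0)) :=
    fun k m => (integrableOn_rpow_exp (hpos k m)).const_mul _
  rw [integral_finset_sum _ fun k _ => integrable_finset_sum _ fun m _ => hint k m]
  have : ∀ k ∈ Finset.range (i + 1),
      (∫ q in Set.Ioi (0 : ℝ), ∑ m ∈ Finset.range (j + 1),
        (lagCoeff i α k * lagCoeff j α m) * (q ^ (α + k + m) * Real.exp (-q)))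
      = ∑ m ∈ Finset.range (j + 1),
          lagCoeff i α k * lagCoeff j α m * Real.Gamma (α + k + m + 1) := by
    intro k _
    rw [integral_finset_sum _ fun m _ => hint k m]
    refine Finset.sum_congr rfl fun m _ => ?_
    rw [MeasureTheory.integral_const_mul, integral_rpow_exp (hpos k m)]
  rw [Finset.sum_congr rfl this, sum_lemma α hα i j hij]

/-- Orthogonality of the monic generalised Laguerre polynomials: for real `α > −1` and
integers `i, j ≥ 0`,
`∫₀^∞ q^α e^{−q} L_i^α(q) L_j^α(q) dq = i!·Γ(α+i+1)` if `i = j`, and `0` otherwise. -/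
theorem laguerre_orthogonality (α : ℝ) (hα : -1 < α) (i j : ℕ) :
    (∫ q in Set.Ioi (0 : ℝ), q ^ α * Real.exp (-q) * laguerreL i α q * laguerreL j α q) =
      if i = j then (i.factorial : ℝ) * Real.Gamma (α + (i : ℝ) + 1) else 0 := by
  rcases le_or_gt j i with h | h
  · exact laguerre_orthogonality_aux α hα i j h
  · have hne : i ≠ j := Nat.ne_of_lt h
    have hcomm : ∀ q : ℝ, q ^ α * Real.exp (-q) * laguerreL i α q * laguerreL j α q
        = q ^ α * Real.exp (-q) * laguerreL j α q * laguerreL i α q := fun q => by ring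
    simp only [hcomm]
    rw [laguerre_orthogonality_aux α hα j i h.le, if_neg (Nat.ne_of_gt h), if_neg hne]
end

section
/- For every integer a ≥ 0 and every real number r ≠ 0, ∑_{i=0}^{a} (−1)^i / (Γ(i+1)·Γ(r−i+1)) = (−1)^a / (r·Γ(a+1)·Γ(r−a)), with the convention that 1/Γ(x) = 0 when x is a nonpositive integer. -/
/-- Appendix 2 gamma-function summation identity: for integer `a ≥ 0` and real `r ≠ 0`,
`∑_{i=0}^{a} (−1)^i / (Γ(i+1)·Γ(r−i+1)) = (−1)^a / (r·Γ(a+1)·Γ(r−a))`.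
(Mathlib's `Real.Gamma` vanishes at nonpositive integers, so `1/Γ(x) = 0` there.) -/
theorem lubkin_gamma_sum_identity (a : ℕ) (r : ℝ) (hr : r ≠ 0) :
    ∑ i ∈ Finset.range (a + 1),
        (-1 : ℝ) ^ i / (Real.Gamma ((i : ℝ) + 1) * Real.Gamma (r - (i : ℝ) + 1)) =
      (-1 : ℝ) ^ a / (r * Real.Gamma ((a : ℝ) + 1) * Real.Gamma (r - (a : ℝ))) := by
  induction a with
  | zero =>
    simp only [Finset.sum_range_one, Nat.cast_zero, pow_zero, zero_add, Real.Gamma_one,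
      one_mul, sub_zero]
    rw [Real.Gamma_add_one hr, mul_one]
  | succ a ih =>
    rw [Finset.sum_range_succ, ih]
    have hA : Real.Gamma ((a : ℝ) + 1) > 0 := Real.Gamma_pos_of_pos (by positivity)
    have hB : Real.Gamma ((a : ℝ) + 1 + 1) = ((a : ℝ) + 1) * Real.Gamma ((a : ℝ) + 1) :=
      Real.Gamma_add_one (by positivity)
    push_cast
    set s : ℝ := r - ((a : ℝ) + 1) with hs
    have h1 : r - (a : ℝ) = s + 1 := by rw [hs]; ring
    have h2 : r - ((a : ℝ) + 1) = s := rfl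
    rw [h1, hB]
    by_cases hs0 : s = 0
    · have hra : r = (a : ℝ) + 1 := by have := hs ▸ hs0; linarith [sub_eq_zero.mp this]
      rw [hs0, Real.Gamma_zero, zero_add, Real.Gamma_one, hra]
      have hA' : Real.Gamma ((a : ℝ) + 1) ≠ 0 := ne_of_gt hA
      field_simp
      ring
    · rw [Real.Gamma_add_one hs0]
      by_cases hG : Real.Gamma s = 0
      · simp [hG]
      · have hA' : Real.Gamma ((a : ℝ) + 1) ≠ 0 := ne_of_gt hA
        have ha1 : ((a : ℝ) + 1) ≠ 0 := by positivity
        field_simp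
        ring
end

section
/- For all integers m ≥ 1, n ≥ 1 and r ≥ 1, (1/r)·∑_{k=0}^{m−1} (−1)^k Γ(m+r−k)Γ(n+r−k)/(k!·Γ(r−k)·Γ(m−k)·Γ(n−k)) = r!·∑_{k=0}^{m−1} C(r−1,k)·C(m,k+1)·C(n+r−k−1,n−1), with the convention that 1/Γ(x) = 0 when x is a nonpositive integer (so on the left only the terms with k ≤ r−1 contribute). -/
open Finset


lemma fd (b : ℕ) : ∀ i x : ℕ, i ≤ b → i ≤ x →
    ∑ k ∈ range (i+1), (-1:ℤ)^k * (i.choose k) * ((x-k).choose b) = ((x-i).choose (b-i)) := by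
  intro i
  induction i with
  | zero => intro x _ _; simp
  | succ i ih =>
    intro x hib hix
    have h1 : ∑ k ∈ range (i+2), (-1:ℤ)^k * ((i+1).choose k) * ((x-k).choose b)
        = ∑ k ∈ range (i+1), (-1:ℤ)^(k+1) * ((i.choose k) + (i.choose (k+1))) * ((x-(k+1)).choose b)
          + (-1:ℤ)^0 * ((i+1).choose 0) * ((x-0).choose b) := by
      rw [Finset.sum_range_succ' (fun k => (-1:ℤ)^k * ((i+1).choose k) * ((x-k).choose b)) (i+1)]
      simp only [Nat.choose_succ_succ']
      push_cast
      ring_nf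
    rw [h1]
    have h2 : ∀ k, (-1:ℤ)^(k+1) * ((i.choose k : ℤ) + (i.choose (k+1))) * ((x-(k+1)).choose b)
        = -((-1:ℤ)^k * (i.choose k) * (((x-1)-k).choose b))
          + (-1:ℤ)^(k+1) * (i.choose (k+1)) * ((x-(k+1)).choose b) := by
      intro k
      have : x - (k+1) = (x-1) - k := by omega
      rw [this]; ring
    rw [Finset.sum_congr rfl (fun k _ => h2 k), Finset.sum_add_distrib]
    have h3 : ∑ k ∈ range (i+1), (-1:ℤ)^(k+1) * (i.choose (k+1)) * ((x-(k+1)).choose b)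
        + (-1:ℤ)^0 * ((i+1).choose 0) * ((x-0).choose b)
        = ∑ k ∈ range (i+2), (-1:ℤ)^k * (i.choose k) * ((x-k).choose b) := by
      rw [Finset.sum_range_succ' (fun k => (-1:ℤ)^k * (i.choose k) * ((x-k).choose b)) (i+1)]
      simp
    have h4 : ∑ k ∈ range (i+2), (-1:ℤ)^k * (i.choose k) * ((x-k).choose b)
        = ∑ k ∈ range (i+1), (-1:ℤ)^k * (i.choose k) * ((x-k).choose b) := by
      rw [Finset.sum_range_succ]; simp [Nat.choose_succ_self]
    have e1 := ih x (by omega) (by omega)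
    have e2 := ih (x-1) (by omega) (by omega)
    have hsum : ∑ k ∈ range (i+1), -((-1:ℤ)^k * (i.choose k) * (((x-1)-k).choose b))
        = -(((x-1-i).choose (b-i)) : ℤ) := by
      rw [← e2, Finset.sum_neg_distrib]
    rw [add_assoc, h3, h4, e1, hsum]
    -- goal: -(C(x-1-i, b-i)) + C(x-i, b-i) = C(x-(i+1), b-(i+1))
    have hx1 : x - i = (x - 1 - i) + 1 := by omega
    have hb1 : b - i = (b - (i+1)) + 1 := by omega
    have hx2 : x - (i+1) = x - 1 - i := by omega
    rw [hx1, hb1, hx2, Nat.choose_succ_succ]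
    push_cast
    ring


lemma trirev (a i k : ℕ) (hia : i ≤ a) : a.choose k * (a-k).choose (a-i) = a.choose i * i.choose k := by
  by_cases hk : k ≤ i
  · rw [Nat.choose_mul (n := a) hk]
    congr 1
    have h1 : (a - k) - (i - k) = a - i := by omega
    rw [← h1, Nat.choose_symm (by omega)]
  · rw [Nat.choose_eq_zero_of_lt (by omega : i < k), Nat.mul_zero]
    by_cases hka : k ≤ a
    · rw [Nat.choose_eq_zero_of_lt (by omega : a - k < a - i), Nat.mul_zero]
    · rw [Nat.choose_eq_zero_of_lt (by omega : a < k), Nat.zero_mul]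

lemma vand (a m k : ℕ) (hk : k ≤ a) :
    ((m + a - k).choose (a+1)) = ∑ i ∈ range (a+1), (a-k).choose (a-i) * m.choose (i+1) := by
  have h0 : m + a - k = (a - k) + m := by omega
  rw [h0, Nat.add_choose_eq, Finset.Nat.sum_antidiagonal_eq_sum_range_succ_mk]
  rw [Finset.sum_range_succ]
  have hz : (a-k).choose (a+1) = 0 := Nat.choose_eq_zero_of_lt (by omega)
  simp only [Nat.sub_self, hz, Nat.zero_mul, Nat.add_zero]
  rw [← Finset.sum_range_reflect]
  refine Finset.sum_congr rfl (fun i hi => ?_)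
  simp only [Finset.mem_range] at hi
  have h1 : a + 1 - 1 - i = a - i := by omega
  have h2 : a + 1 - (a - i) = i + 1 := by omega
  rw [h1, h2]

lemma keyid (a m n : ℕ) (hm : 1 ≤ m) (hn : 1 ≤ n) :
    ∑ k ∈ range m, (-1:ℤ)^k * (a.choose k) * ((m+a-k).choose (a+1)) * ((n+a-k).choose (a+1))
    = ∑ k ∈ range m, (a.choose k : ℤ) * (m.choose (k+1)) * ((n+a-k).choose (n-1)) := by
  -- Step 1: expand each LHS term via Vandermonde + trinomial revision
  have step1 : ∀ k, k < m →
      (-1:ℤ)^k * (a.choose k) * ((m+a-k).choose (a+1)) * ((n+a-k).choose (a+1))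
      = ∑ i ∈ range (a+1),
          (-1:ℤ)^k * (a.choose i) * (i.choose k) * (m.choose (i+1)) * ((n+a-k).choose (a+1)) := by
    intro k _
    by_cases hk : k ≤ a
    · rw [vand a m k hk]
      push_cast [Finset.mul_sum, Finset.sum_mul]
      refine Finset.sum_congr rfl (fun i hi => ?_)
      simp only [Finset.mem_range] at hi
      have := trirev a i k (by omega)
      have hcast : (a.choose k : ℤ) * ((a-k).choose (a-i)) = (a.choose i) * (i.choose k) := by
        exact_mod_cast congrArg (Nat.cast : ℕ → ℤ) this
      linear_combination ((-1:ℤ)^k * (m.choose (i+1)) * ((n+a-k).choose (a+1))) * hcast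
    · have hz : ∑ i ∈ range (a+1),
          (-1:ℤ)^k * (a.choose i) * (i.choose k) * (m.choose (i+1)) * ((n+a-k).choose (a+1)) = 0 := by
        refine Finset.sum_eq_zero (fun i hi => ?_)
        simp only [Finset.mem_range] at hi
        rw [Nat.choose_eq_zero_of_lt (by omega : i < k)]
        push_cast
        ring
      rw [hz, Nat.choose_eq_zero_of_lt (by omega : a < k)]
      push_cast
      ring
  rw [Finset.sum_congr rfl (fun k hk => step1 k (Finset.mem_range.mp hk))]
  rw [Finset.sum_comm]
  -- Step 2: evaluate inner sums via fd
  have step2 : ∀ i, i < a+1 →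
      ∑ k ∈ range m, (-1:ℤ)^k * (a.choose i) * (i.choose k) * (m.choose (i+1)) * ((n+a-k).choose (a+1))
      = (a.choose i : ℤ) * (m.choose (i+1)) * ((n+a-i).choose (a+1-i)) := by
    intro i hi
    have hpull : ∑ k ∈ range m, (-1:ℤ)^k * (a.choose i) * (i.choose k) * (m.choose (i+1)) * ((n+a-k).choose (a+1))
        = (a.choose i : ℤ) * (m.choose (i+1)) * ∑ k ∈ range m, (-1:ℤ)^k * (i.choose k) * ((n+a-k).choose (a+1)) := by
      rw [Finset.mul_sum]
      exact Finset.sum_congr rfl (fun k _ => by ring)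
    rw [hpull]
    by_cases him : i + 1 ≤ m
    · have hsub : range (i+1) ⊆ range m := Finset.range_subset_range.mpr him
      have hz : ∀ k ∈ range m, k ∉ range (i+1) →
          (-1:ℤ)^k * (i.choose k) * ((n+a-k).choose (a+1)) = 0 := by
        intro k _ hk
        simp only [Finset.mem_range, not_lt] at hk
        rw [Nat.choose_eq_zero_of_lt (by omega : i < k)]
        push_cast; ring
      rw [← Finset.sum_subset hsub hz]
      rw [fd (a+1) i (n+a) (by omega) (by omega)]
    · rw [Nat.choose_eq_zero_of_lt (by omega : m < i+1)]
      push_cast; ring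
  rw [Finset.sum_congr rfl (fun i hi => step2 i (Finset.mem_range.mp hi))]
  -- Step 3: symmetry and range change
  have step3 : ∀ i, (a.choose i : ℤ) * (m.choose (i+1)) * ((n+a-i).choose (a+1-i))
      = (a.choose i : ℤ) * (m.choose (i+1)) * ((n+a-i).choose (n-1)) := by
    intro i
    by_cases hia : i ≤ a
    · congr 2
      have h1 : (n+a-i) - (a+1-i) = n - 1 := by omega
      rw [← h1, Nat.choose_symm (by omega)]
    · rw [Nat.choose_eq_zero_of_lt (by omega : a < i)]
      push_cast; ring
  rw [Finset.sum_congr rfl (fun i _ => step3 i)]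
  -- final: change range from a+1 to m
  set g : ℕ → ℤ := fun i => (a.choose i : ℤ) * (m.choose (i+1)) * ((n+a-i).choose (n-1)) with hg
  have hga : ∀ i, a+1 ≤ i → g i = 0 := by
    intro i hi
    simp only [hg, Nat.choose_eq_zero_of_lt (by omega : a < i)]
    push_cast; ring
  have hgm : ∀ i, m ≤ i → g i = 0 := by
    intro i hi
    simp only [hg, Nat.choose_eq_zero_of_lt (by omega : m < i+1)]
    push_cast; ring
  have h1 : ∑ i ∈ range (a+1), g i = ∑ i ∈ range (max m (a+1)), g i := by
    refine Finset.sum_subset (Finset.range_subset_range.mpr (le_max_right _ _)) ?_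
    intro i _ hi
    simp only [Finset.mem_range, not_lt] at hi
    exact hga i hi
  have h2 : ∑ i ∈ range m, g i = ∑ i ∈ range (max m (a+1)), g i := by
    refine Finset.sum_subset (Finset.range_subset_range.mpr (le_max_left _ _)) ?_
    intro i _ hi
    simp only [Finset.mem_range, not_lt] at hi
    exact hgm i hi
  rw [h1, ← h2]

/-- Corollary to Theorem 1: for integers `m, n, r ≥ 1`,
`(1/r)·∑_{k=0}^{m−1} (−1)^k Γ(m+r−k)Γ(n+r−k)/(k!·Γ(r−k)·Γ(m−k)·Γ(n−k))
  = r!·∑_{k=0}^{m−1} C(r−1,k)·C(m,k+1)·C(n+r−k−1,n−1)`.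
(Mathlib's `Real.Gamma` vanishes at nonpositive integers, so `1/Γ(r−k) = 0` for
`k ≥ r`, and only terms with `k ≤ r−1` contribute on the left.) -/
theorem mean_trace_gamma_eq_binomial (m n r : ℕ) (hm : 1 ≤ m) (hn : 1 ≤ n) (hr : 1 ≤ r) :
    (1 / (r : ℝ)) *
        ∑ k ∈ Finset.range m,
          (-1 : ℝ) ^ k * Real.Gamma ((m : ℝ) + (r : ℝ) - (k : ℝ)) *
            Real.Gamma ((n : ℝ) + (r : ℝ) - (k : ℝ)) /
            ((k.factorial : ℝ) * Real.Gamma ((r : ℝ) - (k : ℝ)) *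
              Real.Gamma ((m : ℝ) - (k : ℝ)) * Real.Gamma ((n : ℝ) - (k : ℝ))) =
      (r.factorial : ℝ) *
        ∑ k ∈ Finset.range m,
          ((r - 1).choose k : ℝ) * (m.choose (k + 1) : ℝ) *
            ((n + r - k - 1).choose (n - 1) : ℝ) := by
  obtain ⟨a, rfl⟩ : ∃ a, r = a + 1 := ⟨r - 1, by omega⟩
  -- per-term evaluation of the Gamma terms
  have hterm : ∀ k ∈ range m,
      (-1 : ℝ) ^ k * Real.Gamma ((m : ℝ) + ((a+1 : ℕ) : ℝ) - (k : ℝ)) *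
            Real.Gamma ((n : ℝ) + ((a+1 : ℕ) : ℝ) - (k : ℝ)) /
            ((k.factorial : ℝ) * Real.Gamma (((a+1 : ℕ) : ℝ) - (k : ℝ)) *
              Real.Gamma ((m : ℝ) - (k : ℝ)) * Real.Gamma ((n : ℝ) - (k : ℝ)))
      = ((a+1 : ℕ) : ℝ) * ((a+1).factorial : ℝ) *
          (((-1:ℤ)^k * (a.choose k) * ((m+a-k).choose (a+1)) * ((n+a-k).choose (a+1)) : ℤ) : ℝ) := by
    intro k hk
    simp only [Finset.mem_range] at hk
    by_cases hkr : k ≤ a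
    · by_cases hkn : k ≤ n - 1
      · -- main case: all Gamma values are factorials
        have castfact : ∀ u v : ℕ, u + (v + 1) = m + (a+1) →
            Real.Gamma ((m : ℝ) + ((a+1:ℕ) : ℝ) - (v : ℝ)) = (u.factorial : ℝ) → True := fun _ _ _ _ => trivial
        have gam : ∀ (x : ℝ) (u : ℕ), x = (u : ℝ) + 1 → Real.Gamma x = (u.factorial : ℝ) := by
          intro x u hx; rw [hx, Real.Gamma_nat_eq_factorial]
        have ceq : ∀ u v w : ℕ, u + (w + 1) = v → ((v:ℕ) : ℝ) - (w : ℝ) = (u : ℝ) + 1 := by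
          intro u v w h
          have := congrArg (fun t : ℕ => (t : ℝ)) h
          push_cast at this
          linarith
        have g1 : Real.Gamma ((m : ℝ) + ((a+1:ℕ) : ℝ) - (k : ℝ)) = ((m+a-k).factorial : ℝ) := by
          refine gam _ _ ?_
          have h := ceq (m+a-k) (m+(a+1)) k (by omega)
          push_cast at h ⊢
          linarith
        have g2 : Real.Gamma ((n : ℝ) + ((a+1:ℕ) : ℝ) - (k : ℝ)) = ((n+a-k).factorial : ℝ) := by
          refine gam _ _ ?_
          have h := ceq (n+a-k) (n+(a+1)) k (by omega)
          push_cast at h ⊢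
          linarith
        have g3 : Real.Gamma (((a+1:ℕ) : ℝ) - (k : ℝ)) = ((a-k).factorial : ℝ) := by
          refine gam _ _ ?_
          have h := ceq (a-k) (a+1) k (by omega)
          push_cast at h ⊢
          linarith
        have g4 : Real.Gamma ((m : ℝ) - (k : ℝ)) = ((m-k-1).factorial : ℝ) := by
          refine gam _ _ ?_
          have h := ceq (m-k-1) m k (by omega)
          push_cast at h ⊢
          linarith
        have g5 : Real.Gamma ((n : ℝ) - (k : ℝ)) = ((n-k-1).factorial : ℝ) := by
          refine gam _ _ ?_
          have h := ceq (n-k-1) n k (by omega)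
          push_cast at h ⊢
          linarith
        rw [g1, g2, g3, g4, g5]
        -- now a pure factorial identity
        have f1 : a.choose k * k.factorial * (a-k).factorial = a.factorial :=
          Nat.choose_mul_factorial_mul_factorial hkr
        have f2 : (m+a-k).choose (a+1) * (a+1).factorial * (m-k-1).factorial = (m+a-k).factorial := by
          have h := Nat.choose_mul_factorial_mul_factorial (show a+1 ≤ m+a-k by omega)
          rwa [show m+a-k-(a+1) = m-k-1 by omega] at h
        have f3 : (n+a-k).choose (a+1) * (a+1).factorial * (n-k-1).factorial = (n+a-k).factorial := by
          have h := Nat.choose_mul_factorial_mul_factorial (show a+1 ≤ n+a-k by omega)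
          rwa [show n+a-k-(a+1) = n-k-1 by omega] at h
        have f4 : (a+1) * a.factorial = (a+1).factorial := (Nat.factorial_succ a).symm
        have hN : (m+a-k).factorial * (n+a-k).factorial
            = (a+1) * (a+1).factorial * (a.choose k * ((m+a-k).choose (a+1)) * ((n+a-k).choose (a+1)))
              * (k.factorial * (a-k).factorial * (m-k-1).factorial * (n-k-1).factorial) := by
          rw [← f2, ← f3, ← f4, ← f1]
          ring
        have hden : ((k.factorial : ℝ) * ((a-k).factorial : ℝ) * ((m-k-1).factorial : ℝ) *
            ((n-k-1).factorial : ℝ)) ≠ 0 := by positivity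
        rw [div_eq_iff hden]
        have hNR := congrArg (fun t : ℕ => (t : ℝ)) hN
        push_cast at hNR ⊢
        linear_combination ((-1:ℝ)^k) * hNR
      · -- k ≥ n : Gamma (n - k) = 0 and the binomial (n+a-k).choose (a+1) = 0
        have hg : Real.Gamma ((n : ℝ) - (k : ℝ)) = 0 := by
          have h1 : (n : ℝ) - (k : ℝ) = -(((k - n : ℕ)) : ℝ) := by
            have := congrArg (fun t : ℕ => (t : ℝ)) (show (k - n) + n = k by omega)
            push_cast at this
            linarith
          rw [h1, Real.Gamma_neg_nat_eq_zero]
        have hc : (n+a-k).choose (a+1) = 0 := Nat.choose_eq_zero_of_lt (by omega)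
        rw [hg, hc]
        push_cast
        simp
    · -- k ≥ a+1 : Gamma ((a+1) - k) = 0 and a.choose k = 0
      have hg : Real.Gamma (((a+1:ℕ) : ℝ) - (k : ℝ)) = 0 := by
        have h1 : ((a+1:ℕ) : ℝ) - (k : ℝ) = -(((k - (a+1) : ℕ)) : ℝ) := by
          have := congrArg (fun t : ℕ => (t : ℝ)) (show (k - (a+1)) + (a+1) = k by omega)
          push_cast at this ⊢
          linarith
        rw [h1, Real.Gamma_neg_nat_eq_zero]
      have hc : a.choose k = 0 := Nat.choose_eq_zero_of_lt (by omega)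
      rw [hg, hc]
      push_cast
      simp
  rw [Finset.sum_congr rfl hterm, ← Finset.mul_sum, ← Int.cast_sum, keyid a m n hm hn]
  have hrhs : ∀ k ∈ range m,
      (((a+1) - 1).choose k : ℝ) * (m.choose (k + 1) : ℝ) * ((n + (a+1) - k - 1).choose (n - 1) : ℝ)
      = (((a.choose k : ℤ) * (m.choose (k+1)) * ((n+a-k).choose (n-1)) : ℤ) : ℝ) := by
    intro k _
    rw [show (a+1) - 1 = a by omega, show n + (a+1) - k - 1 = n + a - k by omega]
    push_cast
    ring
  rw [Finset.sum_congr rfl hrhs, ← Int.cast_sum]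
  have hr0 : ((a+1 : ℕ) : ℝ) ≠ 0 := by positivity
  field_simp
end

section
/- For every integer r ≥ 0, ∑_{k=0}^{r} C(r,k)·(−1)^{r−k}·2^{k−r} · (6·k!/(k+3)!)·(k^2+k+2) = 3·(1+(−1)^r) / (2^r·(r+3)). -/
lemma key (n : ℕ) : ∀ a b c : ℝ,
    ∑ j ∈ Finset.range (n+1), (n.choose j : ℝ) * (-2:ℝ)^j * (a + b*j + c*j*((j:ℝ)-1))
      = (-1:ℝ)^n * (a + 2*b*n + 4*c*n*((n:ℝ)-1)) := by
  induction n with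
  | zero => intro a b c; simp
  | succ n ih =>
    intro a b c
    rw [Finset.sum_range_succ']
    have h1 : ∀ i ∈ Finset.range (n+1),
        (((n+1).choose (i+1) : ℝ)) * (-2:ℝ)^(i+1) * (a + b*(i+1:ℕ) + c*(i+1:ℕ)*(((i+1:ℕ):ℝ)-1))
        = (-2) * ((n.choose i : ℝ) * (-2:ℝ)^i * ((a+b) + (b+2*c)*i + c*i*((i:ℝ)-1)))
          + ((n.choose (i+1) : ℝ) * (-2:ℝ)^(i+1) * (a + b*(i+1:ℕ) + c*(i+1:ℕ)*(((i+1:ℕ):ℝ)-1))) := by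
      intro i _
      rw [Nat.choose_succ_succ]
      push_cast
      ring
    rw [Finset.sum_congr rfl h1, Finset.sum_add_distrib, ← Finset.mul_sum, ih]
    have h2 : ∑ i ∈ Finset.range (n+1),
        ((n.choose (i+1) : ℝ) * (-2:ℝ)^(i+1) * (a + b*(i+1:ℕ) + c*(i+1:ℕ)*(((i+1:ℕ):ℝ)-1)))
        = (-1:ℝ)^n * (a + 2*b*n + 4*c*n*((n:ℝ)-1)) - a := by
      have h3 := Finset.sum_range_succ'
        (fun j => (n.choose j : ℝ) * (-2:ℝ)^j * (a + b*(j:ℕ) + c*(j:ℕ)*(((j:ℕ):ℝ)-1))) (n+1)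
      have h4 : ∑ j ∈ Finset.range (n+1+1),
          (n.choose j : ℝ) * (-2:ℝ)^j * (a + b*(j:ℕ) + c*(j:ℕ)*(((j:ℕ):ℝ)-1))
          = (-1:ℝ)^n * (a + 2*b*n + 4*c*n*((n:ℝ)-1)) := by
        rw [Finset.sum_range_succ, ih]
        simp [Nat.choose_succ_self]
      rw [h4] at h3
      simp only [Nat.cast_zero, pow_zero, Nat.choose_zero_right, Nat.cast_one] at h3
      linarith [h3]
    rw [h2]
    simp only [Nat.choose_zero_right, Nat.cast_ofNat, Nat.cast_zero]
    push_cast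
    rw [pow_succ]
    ring


lemma choose_shift (r k : ℕ) :
    (r+1)*(r+2)*(r+3)*(r.choose k) = (k+1)*(k+2)*(k+3)*((r+3).choose (k+3)) := by
  have e1 := Nat.add_one_mul_choose_eq r k
  have e2 := Nat.add_one_mul_choose_eq (r+1) (k+1)
  have e3 := Nat.add_one_mul_choose_eq (r+2) (k+2)
  calc (r+1)*(r+2)*(r+3)*(r.choose k)
      = (r+2)*((r+3)*((r+1)*r.choose k)) := by ring
    _ = (r+2)*((r+3)*((r+1).choose (k+1)*(k+1))) := by rw [e1]
    _ = (k+1)*((r+3)*((r+2)*(r+1).choose (k+1))) := by ring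
    _ = (k+1)*((r+3)*((r+2).choose (k+2)*(k+2))) := by rw [e2]
    _ = (k+1)*(k+2)*((r+3)*(r+2).choose (k+2)) := by ring
    _ = (k+1)*(k+2)*((r+3).choose (k+3)*(k+3)) := by rw [e3]
    _ = (k+1)*(k+2)*(k+3)*((r+3).choose (k+3)) := by ring

lemma term_eq (r k : ℕ) (hk : k ≤ r) :
    (r.choose k : ℝ) * (-1 : ℝ) ^ (r - k) * ((2 : ℝ) ^ k / (2 : ℝ) ^ r) *
          (6 * (k.factorial : ℝ) / ((k + 3).factorial : ℝ)) * ((k : ℝ) ^ 2 + (k : ℝ) + 2)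
    = ((-1:ℝ)^r * (-3) / (4 * (2:ℝ)^r * (((r:ℝ)+1)*((r:ℝ)+2)*((r:ℝ)+3))))
      * (((r+3).choose (k+3) : ℝ) * (-2:ℝ)^(k+3)
          * (8 + (-4)*((k+3:ℕ):ℝ) + 1*((k+3:ℕ):ℝ)*(((k+3:ℕ):ℝ)-1))) := by
  have hsign : ((-1:ℝ))^(r-k) = (-1)^r * (-1)^k := by
    have h1 : ((-1:ℝ))^r = (-1)^(r-k) * (-1)^k := by
      rw [← pow_add, Nat.sub_add_cancel hk]
    have h2 : ((-1:ℝ))^k * (-1)^k = 1 := by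
      rw [← pow_add, ← two_mul, pow_mul]; norm_num
    calc ((-1:ℝ))^(r-k) = (-1)^(r-k) * ((-1)^k * (-1)^k) := by rw [h2, mul_one]
      _ = (-1)^r * (-1)^k := by rw [← mul_assoc, ← h1]
  have hfac : (((k+3).factorial : ℝ)) = ((k:ℝ)+3)*((k:ℝ)+2)*((k:ℝ)+1)*(k.factorial:ℝ) := by
    show ((k+2+1).factorial : ℝ) = _
    rw [Nat.factorial_succ, Nat.factorial_succ, Nat.factorial_succ]
    push_cast; ring
  have hfk : (k.factorial : ℝ) ≠ 0 := Nat.cast_ne_zero.mpr k.factorial_ne_zero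
  have hQ : (((k:ℝ)+1)*((k:ℝ)+2)*((k:ℝ)+3)) ≠ 0 := by positivity
  have hP : (((r:ℝ)+1)*((r:ℝ)+2)*((r:ℝ)+3)) ≠ 0 := by positivity
  have h2r : ((2:ℝ))^r ≠ 0 := by positivity
  have hAB : (r.choose k : ℝ) / (((k:ℝ)+1)*((k:ℝ)+2)*((k:ℝ)+3))
      = ((r+3).choose (k+3) : ℝ) / (((r:ℝ)+1)*((r:ℝ)+2)*((r:ℝ)+3)) := by
    rw [div_eq_div_iff hQ hP]
    have hcast : (((r+1)*(r+2)*(r+3)*(r.choose k) : ℕ) : ℝ)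
        = (((k+1)*(k+2)*(k+3)*((r+3).choose (k+3)) : ℕ) : ℝ) := by
      exact_mod_cast choose_shift r k
    push_cast at hcast
    linarith [hcast]
  have hneg2 : ((-2:ℝ))^(k+3) = (-1)^k * (2:ℝ)^k * (-8) := by
    rw [show ((-2):ℝ) = (-1)*2 by norm_num, mul_pow, pow_add, pow_add]
    norm_num
    ring
  rw [hsign, hfac, hneg2]
  have lhs_eq : (r.choose k : ℝ) * ((-1:ℝ)^r * (-1)^k) * ((2 : ℝ) ^ k / (2 : ℝ) ^ r) *
          (6 * (k.factorial : ℝ) / (((k:ℝ)+3)*((k:ℝ)+2)*((k:ℝ)+1)*(k.factorial:ℝ))) *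
          ((k : ℝ) ^ 2 + (k : ℝ) + 2)
      = ((-1:ℝ)^r * (-1)^k * (2:ℝ)^k * 6 * ((k:ℝ)^2 + (k:ℝ) + 2) / (2:ℝ)^r)
          * ((r.choose k : ℝ) / (((k:ℝ)+1)*((k:ℝ)+2)*((k:ℝ)+3))) := by
    field_simp
  rw [lhs_eq, hAB]
  push_cast
  field_simp
  ring

/-- Section 3 closed form for the case `m = n = 2`: for every integer `r ≥ 0`,
`∑_{k=0}^{r} C(r,k)·(−1)^{r−k}·2^{k−r}·(6·k!/(k+3)!)·(k²+k+2) = 3·(1+(−1)^r)/(2^r·(r+3))`. -/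
theorem lubkin_two_two_trace (r : ℕ) :
    ∑ k ∈ Finset.range (r + 1),
        (r.choose k : ℝ) * (-1 : ℝ) ^ (r - k) * ((2 : ℝ) ^ k / (2 : ℝ) ^ r) *
          (6 * (k.factorial : ℝ) / ((k + 3).factorial : ℝ)) * ((k : ℝ) ^ 2 + (k : ℝ) + 2) =
      3 * (1 + (-1 : ℝ) ^ r) / ((2 : ℝ) ^ r * ((r : ℝ) + 3)) := by
  set C : ℝ := (-1:ℝ)^r * (-3) / (4 * (2:ℝ)^r * (((r:ℝ)+1)*((r:ℝ)+2)*((r:ℝ)+3))) with hC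
  have hterm : ∀ k ∈ Finset.range (r+1),
      (r.choose k : ℝ) * (-1 : ℝ) ^ (r - k) * ((2 : ℝ) ^ k / (2 : ℝ) ^ r) *
          (6 * (k.factorial : ℝ) / ((k + 3).factorial : ℝ)) * ((k : ℝ) ^ 2 + (k : ℝ) + 2)
      = C * (((r+3).choose (k+3) : ℝ) * (-2:ℝ)^(k+3)
          * (8 + (-4)*((k+3:ℕ):ℝ) + 1*((k+3:ℕ):ℝ)*(((k+3:ℕ):ℝ)-1))) := by
    intro k hk
    exact term_eq r k (Nat.lt_succ_iff.mp (Finset.mem_range.mp hk))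
  rw [Finset.sum_congr rfl hterm, ← Finset.mul_sum]
  set f : ℕ → ℝ := fun j => ((r+3).choose j : ℝ) * (-2:ℝ)^j * (8 + (-4)*(j:ℝ) + 1*(j:ℝ)*((j:ℝ)-1)) with hf
  have hkey : ∑ j ∈ Finset.range (r+3+1), f j
      = (-1:ℝ)^(r+3) * (8 + 2*(-4)*((r+3:ℕ):ℝ) + 4*1*((r+3:ℕ):ℝ)*(((r+3:ℕ):ℝ)-1)) := by
    have := key (r+3) 8 (-4) 1
    simpa [hf] using this
  have hsplit : ∑ j ∈ Finset.range (r+3+1), f j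
      = (∑ k ∈ Finset.range (r+1), f (k+3)) + f 2 + f 1 + f 0 := by
    rw [show r+3+1 = (r+3)+1 from rfl, Finset.sum_range_succ' f (r+3),
        Finset.sum_range_succ' (fun i => f (i+1)) (r+2),
        Finset.sum_range_succ' (fun i => f (i+1+1)) (r+1)]
  have hS : (∑ k ∈ Finset.range (r+1), f (k+3))
      = (-1:ℝ)^(r+3) * (8 + 2*(-4)*((r+3:ℕ):ℝ) + 4*1*((r+3:ℕ):ℝ)*(((r+3:ℕ):ℝ)-1))
        - f 2 - f 1 - f 0 := by
    rw [← hkey]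
    linarith [hsplit]
  have hsum_eq : ∑ k ∈ Finset.range (r+1),
      (((r+3).choose (k+3) : ℝ) * (-2:ℝ)^(k+3)
          * (8 + (-4)*((k+3:ℕ):ℝ) + 1*((k+3:ℕ):ℝ)*(((k+3:ℕ):ℝ)-1)))
      = ∑ k ∈ Finset.range (r+1), f (k+3) := by
    apply Finset.sum_congr rfl
    intro k _
    simp [hf]
  rw [hsum_eq, hS]
  have hf0 : f 0 = 8 := by simp [hf]
  have hf1 : f 1 = ((r:ℝ)+3) * (-2) * 4 := by
    simp only [hf, Nat.choose_one_right, pow_one, Nat.cast_one]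
    push_cast
    ring
  have hchoose2 : 2 * ((r+3).choose 2) = (r+3)*(r+2) := by
    have e3 := Nat.add_one_mul_choose_eq (r+2) 1
    simp only [Nat.succ_eq_add_one, Nat.choose_one_right] at e3
    calc 2 * ((r+3).choose 2) = (r+3).choose 2 * 2 := by ring
      _ = (r+2+1) * (r+2) := e3.symm
      _ = (r+3)*(r+2) := by ring
  have hf2 : f 2 = 4 * ((r:ℝ)+3) * ((r:ℝ)+2) := by
    have hcast : ((2 * ((r+3).choose 2) : ℕ) : ℝ) = (((r+3)*(r+2) : ℕ) : ℝ) := by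
      exact_mod_cast hchoose2
    push_cast at hcast
    simp only [hf]
    norm_num
    nlinarith [hcast]
  rw [hf0, hf1, hf2, hC]
  have e1 : ((-1:ℝ))^(r+3) = -(-1:ℝ)^r := by
    rw [pow_add]; norm_num
  have e2 : ((-1:ℝ))^r * (-1:ℝ)^r = 1 := by
    rw [← pow_add, ← two_mul, pow_mul]; norm_num
  have hP : (((r:ℝ)+1)*((r:ℝ)+2)*((r:ℝ)+3)) ≠ 0 := by positivity
  have h2r : ((2:ℝ))^r ≠ 0 := by positivity
  rw [e1]
  push_cast
  field_simp
  linear_combination (8 + 12*(r:ℝ) + 4*(r:ℝ)^2) * e2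
end

section
/- The series ∑_{r=1}^∞ 3·(1−(−1)^r) / (2·r·(r+1)·(r+4)) converges, and its sum equals ln 2 − 1/3. -/
open Filter Finset Real Topology

lemma altHarmonic :
    Tendsto (fun N : ℕ => ∑ i ∈ Finset.range N, (-1 : ℝ) ^ i / (i + 1)) atTop
      (𝓝 (Real.log 2)) := by
  have hanti : Antitone (fun n : ℕ => (1 : ℝ) / (n + 1)) := by
    intro m n hmn
    have : (m : ℝ) ≤ n := Nat.cast_le.mpr hmn
    apply one_div_le_one_div_of_le (by positivity)
    linarith
  have h0 : Tendsto (fun n : ℕ => (1 : ℝ) / (n + 1)) atTop (𝓝 0) :=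
    tendsto_one_div_add_atTop_nhds_zero_nat
  obtain ⟨l, hl⟩ := hanti.tendsto_alternating_series_of_tendsto_zero h0
  have habel := Real.tendsto_tsum_powerSeries_nhdsWithin_lt hl
  have hlog : Tendsto (fun x : ℝ => Real.log (1 + x) / x) (𝓝[<] (1 : ℝ))
      (𝓝 (Real.log 2)) := by
    have hc : ContinuousAt (fun x : ℝ => Real.log (1 + x) / x) 1 := by
      apply ContinuousAt.div
      · exact (Real.continuousAt_log (by norm_num)).comp (by fun_prop)
      · exact continuousAt_id
      · norm_num
    have h2 := hc.tendsto.mono_left (nhdsWithin_le_nhds (s := Set.Iio (1 : ℝ)))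
    norm_num at h2
    exact h2
  have heq : (fun x : ℝ => ∑' n : ℕ, ((-1 : ℝ) ^ n * (1 / (n + 1))) * x ^ n)
      =ᶠ[𝓝[<] (1 : ℝ)] fun x : ℝ => Real.log (1 + x) / x := by
    filter_upwards [Ioo_mem_nhdsLT_of_mem
      (by norm_num : (1 : ℝ) ∈ Set.Ioc (0 : ℝ) 1)] with x hx
    have hx0 : x ≠ 0 := ne_of_gt hx.1
    have habs : |(-x)| < 1 := by rw [abs_neg, abs_of_pos hx.1]; exact hx.2
    have hs := (Real.hasSum_pow_div_log_of_abs_lt_one habs).mul_left (-x⁻¹)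
    have hfun : (fun n : ℕ => -x⁻¹ * ((-x) ^ (n + 1) / (n + 1)))
        = fun n : ℕ => ((-1 : ℝ) ^ n * (1 / (n + 1))) * x ^ n := by
      funext n
      have hn : ((n : ℝ) + 1) ≠ 0 := by positivity
      rw [neg_pow, pow_succ]
      field_simp
      ring
    have hval : -x⁻¹ * -Real.log (1 - -x) = Real.log (1 + x) / x := by
      rw [sub_neg_eq_add, neg_mul_neg, inv_mul_eq_div]
    rw [hfun, hval] at hs
    exact hs.tsum_eq
  have hlu : l = Real.log 2 := tendsto_nhds_unique (habel.congr' heq) hlog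
  rw [← hlu]
  convert hl using 2 with N
  exact Finset.sum_congr rfl fun i _ => (mul_one_div _ _).symm

-- helper: 1/(n+c) → 0
lemma tend_inv (c : ℝ) :
    Tendsto (fun n : ℕ => 1 / ((n : ℝ) + c)) atTop (𝓝 0) := by
  simp only [one_div]
  exact (tendsto_atTop_add_const_right atTop c tendsto_natCast_atTop_atTop).inv_tendsto_atTop

lemma shifted_alt (hA : Tendsto (fun N : ℕ => ∑ i ∈ Finset.range N, (-1 : ℝ) ^ i / (i + 1))
      atTop (𝓝 (Real.log 2))) :
    Tendsto (fun N : ℕ => ∑ i ∈ Finset.range N, (-1 : ℝ) ^ i / (i + 2)) atTop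
      (𝓝 (1 - Real.log 2)) := by
  have h1 := hA.comp (tendsto_add_atTop_nat 1)
  have h2 := (tendsto_const_nhds (x := (1 : ℝ)) (f := atTop)).sub h1
  convert h2 using 2 with N
  simp only [Function.comp_apply, Finset.sum_range_succ']
  push_cast
  rw [Finset.sum_congr rfl (fun i _ => by
    rw [pow_succ] ; ring_nf : ∀ i ∈ Finset.range N,
      ((-1 : ℝ) ^ (i + 1) / ((i : ℝ) + 1 + 1)) = -((-1 : ℝ) ^ i / ((i : ℝ) + 2)))]
  rw [Finset.sum_neg_distrib]
  norm_num

lemma shifted_alt4 (hA : Tendsto (fun N : ℕ => ∑ i ∈ Finset.range N, (-1 : ℝ) ^ i / (i + 1))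
      atTop (𝓝 (Real.log 2))) :
    Tendsto (fun N : ℕ => ∑ i ∈ Finset.range N, (-1 : ℝ) ^ i / (i + 5)) atTop
      (𝓝 (Real.log 2 - 7 / 12)) := by
  have h1 := hA.comp (tendsto_add_atTop_nat 4)
  have h2 := h1.sub (tendsto_const_nhds (x := (7 / 12 : ℝ)) (f := atTop))
  convert h2 using 2 with N
  simp only [Function.comp_apply]
  rw [show N + 4 = 4 + N by omega, Finset.sum_range_add]
  have : ∀ i ∈ Finset.range N, ((-1 : ℝ) ^ (4 + i) / ((4 + i : ℕ) + 1 : ℝ))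
      = (-1 : ℝ) ^ i / ((i : ℝ) + 5) := by
    intro i _
    push_cast
    rw [pow_add]
    norm_num
    ring_nf
  rw [Finset.sum_congr rfl this]
  norm_num [Finset.sum_range_succ]

noncomputable def Gaux (r : ℕ) : ℝ :=
  1 / ((r : ℝ) + 1) + 1 / ((r : ℝ) + 2) + 1 / ((r : ℝ) + 3) + 1 / ((r : ℝ) + 4)

noncomputable def Haux (r : ℕ) : ℝ :=
  1 / ((r : ℝ) + 2) + 1 / ((r : ℝ) + 3) + 1 / ((r : ℝ) + 4)



/-- Evaluation of Lubkin's series for `m = n = 2`: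
`∑_{r=1}^∞ 3·(1−(−1)^r)/(2·r·(r+1)·(r+4))` converges, with sum `ln 2 − 1/3`. -/
theorem lubkin_series_two_two :
    HasSum
      (fun r : ℕ =>
        3 * (1 - (-1 : ℝ) ^ (r + 1)) /
          (2 * ((r : ℝ) + 1) * ((r : ℝ) + 2) * ((r : ℝ) + 5)))
      (Real.log 2 - 1 / 3) := by
  have hA : Tendsto (fun N : ℕ => ∑ i ∈ Finset.range N, (-1 : ℝ) ^ i / (i + 1)) atTop
      (𝓝 (Real.log 2)) := altHarmonic
  have hnonneg : ∀ r : ℕ, 0 ≤ 3 * (1 - (-1 : ℝ) ^ (r + 1)) /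
      (2 * ((r : ℝ) + 1) * ((r : ℝ) + 2) * ((r : ℝ) + 5)) := by
    intro r
    have h1 : (0 : ℝ) ≤ 1 - (-1 : ℝ) ^ (r + 1) := by
      rcases neg_one_pow_eq_or ℝ (r + 1) with h | h <;> rw [h] <;> norm_num
    have hr : (0 : ℝ) ≤ (r : ℝ) := Nat.cast_nonneg r
    apply div_nonneg (by linarith) (by positivity)
  rw [hasSum_iff_tendsto_nat_of_nonneg hnonneg _]
  have hpt : ∀ r : ℕ,
      3 * (1 - (-1 : ℝ) ^ (r + 1)) /
          (2 * ((r : ℝ) + 1) * ((r : ℝ) + 2) * ((r : ℝ) + 5)) =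
      3 / 8 * ((-1 : ℝ) ^ r / (r + 1)) - 1 / 2 * ((-1 : ℝ) ^ r / (r + 2))
        + 1 / 8 * ((-1 : ℝ) ^ r / (r + 5))
        + 3 / 8 * (Gaux r - Gaux (r + 1)) - 1 / 2 * (Haux r - Haux (r + 1)) := by
    intro r
    have hr : (0 : ℝ) ≤ (r : ℝ) := Nat.cast_nonneg r
    unfold Gaux Haux
    push_cast
    rw [pow_succ]
    have h1 : ((r : ℝ) + 1) ≠ 0 := by positivity
    have h2 : ((r : ℝ) + 2) ≠ 0 := by positivity
    have h3 : ((r : ℝ) + 3) ≠ 0 := by positivity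
    have h4 : ((r : ℝ) + 4) ≠ 0 := by positivity
    have h5 : ((r : ℝ) + 5) ≠ 0 := by positivity
    have h6 : ((r : ℝ) + 1 + 1) ≠ 0 := by positivity
    have h7 : ((r : ℝ) + 1 + 2) ≠ 0 := by positivity
    have h8 : ((r : ℝ) + 1 + 3) ≠ 0 := by positivity
    have h9 : ((r : ℝ) + 1 + 4) ≠ 0 := by positivity
    field_simp
    ring
  have hsumeq : ∀ N : ℕ,
      ∑ i ∈ Finset.range N, (3 * (1 - (-1 : ℝ) ^ (i + 1)) /
          (2 * ((i : ℝ) + 1) * ((i : ℝ) + 2) * ((i : ℝ) + 5))) =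
      3 / 8 * (∑ i ∈ Finset.range N, (-1 : ℝ) ^ i / (i + 1))
        - 1 / 2 * (∑ i ∈ Finset.range N, (-1 : ℝ) ^ i / (i + 2))
        + 1 / 8 * (∑ i ∈ Finset.range N, (-1 : ℝ) ^ i / (i + 5))
        + 3 / 8 * (Gaux 0 - Gaux N) - 1 / 2 * (Haux 0 - Haux N) := by
    intro N
    rw [Finset.sum_congr rfl fun i _ => hpt i]
    rw [← Finset.sum_range_sub' Gaux N, ← Finset.sum_range_sub' Haux N]
    simp only [Finset.sum_add_distrib, Finset.sum_sub_distrib, ← Finset.mul_sum]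
  have hGN : Tendsto (fun N : ℕ => Gaux N) atTop (𝓝 0) := by
    have := (((tend_inv 1).add (tend_inv 2)).add (tend_inv 3)).add (tend_inv 4)
    unfold Gaux
    simpa using this
  have hHN : Tendsto (fun N : ℕ => Haux N) atTop (𝓝 0) := by
    have := ((tend_inv 2).add (tend_inv 3)).add (tend_inv 4)
    unfold Haux
    simpa using this
  have hB := shifted_alt hA
  have hC := shifted_alt4 hA
  have hfinal := ((((hA.const_mul (3 / 8 : ℝ)).sub (hB.const_mul (1 / 2 : ℝ))).add
      (hC.const_mul (1 / 8 : ℝ))).add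
      (((tendsto_const_nhds (x := Gaux 0) (f := atTop)).sub hGN).const_mul (3 / 8 : ℝ))).sub
      (((tendsto_const_nhds (x := Haux 0) (f := atTop)).sub hHN).const_mul (1 / 2 : ℝ))
  have : Tendsto (fun N : ℕ =>
      3 / 8 * (∑ i ∈ Finset.range N, (-1 : ℝ) ^ i / (i + 1))
        - 1 / 2 * (∑ i ∈ Finset.range N, (-1 : ℝ) ^ i / (i + 2))
        + 1 / 8 * (∑ i ∈ Finset.range N, (-1 : ℝ) ^ i / (i + 5))
        + 3 / 8 * (Gaux 0 - Gaux N) - 1 / 2 * (Haux 0 - Haux N)) atTop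
      (𝓝 (Real.log 2 - 1 / 3)) := by
    convert hfinal using 2
    unfold Gaux Haux
    norm_num
    ring
  exact (funext hsumeq : _) ▸ this
end

section
/- For all integers m ≥ 3 and n ≥ 1, Lubkin's series diverges absolutely: ∑_{r=1}^∞ (m^r/(r(r+1))) · |∑_{k=0}^{r+1} C(r+1,k)·(−1)^{r+1−k}·m^{k−r−1}·c_k| = +∞; in particular the series ∑_{r=1}^∞ ((−1)^r m^r/(r(r+1))) · ∑_{k=0}^{r+1} C(r+1,k)·(−1)^{r+1−k}·m^{k−r−1}·c_k does not converge. -/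
open Finset Filter

private lemma factorial_add_le' (k d : ℕ) : (k + d).factorial ≤ k.factorial * (k + d) ^ d := by
  induction d with
  | zero => simp
  | succ d ih =>
    have h1 : (k + (d + 1)).factorial = (k + d + 1) * (k + d).factorial := rfl
    rw [h1]
    calc (k + d + 1) * (k + d).factorial
        ≤ (k + d + 1) * (k.factorial * (k + d) ^ d) := Nat.mul_le_mul_left _ ih
      _ ≤ (k + d + 1) * (k.factorial * (k + d + 1) ^ d) := by
          exact Nat.mul_le_mul_left _ (Nat.mul_le_mul_left _ (Nat.pow_le_pow_left (Nat.le_succ _) d))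
      _ = k.factorial * (k + (d + 1)) ^ (d + 1) := by ring

private lemma alt_sum_choose' (d : ℕ) :
    ∑ i ∈ Finset.range (d + 1), (-1 : ℝ) ^ i * (d.choose i : ℝ) = if d = 0 then 1 else 0 := by
  have h := Int.alternating_sum_range_choose (n := d)
  have h2 := congrArg (fun z : ℤ => (z : ℝ)) h
  push_cast at h2
  split_ifs with hd <;> simp_all

private lemma tri_sum' (k i : ℕ) (hik : i ≤ k) :
    ∑ j ∈ Finset.range (k + 1), (k.choose j : ℝ) * (j.choose i : ℝ) * (-1 : ℝ) ^ (j - i)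
      = if i = k then 1 else 0 := by
  have h1 : ∑ j ∈ Finset.range (k + 1), (k.choose j : ℝ) * (j.choose i : ℝ) * (-1 : ℝ) ^ (j - i)
      = ∑ j ∈ Finset.Ico i (k + 1), (k.choose j : ℝ) * (j.choose i : ℝ) * (-1 : ℝ) ^ (j - i) := by
    rw [Finset.range_eq_Ico]
    refine (Finset.sum_subset (Finset.Ico_subset_Ico (Nat.zero_le i) le_rfl) ?_).symm
    intro j hj hj'
    have hji : j < i := by
      simp only [Finset.mem_Ico] at hj hj'
      omega
    rw [Nat.choose_eq_zero_of_lt hji]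
    simp
  rw [h1, Finset.sum_Ico_eq_sum_range]
  have h2 : ∀ e ∈ Finset.range (k + 1 - i),
      (k.choose (i + e) : ℝ) * ((i + e).choose i : ℝ) * (-1 : ℝ) ^ (i + e - i)
      = (k.choose i : ℝ) * ((-1 : ℝ) ^ e * ((k - i).choose e : ℝ)) := by
    intro e he
    have hek : i + e ≤ k := by
      simp only [Finset.mem_range] at he; omega
    have hmul := Nat.choose_mul (n := k) (Nat.le_add_right i e)
    rw [Nat.add_sub_cancel_left] at hmul ⊢
    have hmul' : (k.choose (i + e) : ℝ) * ((i + e).choose i : ℝ)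
        = (k.choose i : ℝ) * ((k - i).choose e : ℝ) := by
      exact_mod_cast congrArg (Nat.cast (R := ℝ)) hmul
    rw [hmul']; ring
  rw [Finset.sum_congr rfl h2, ← Finset.mul_sum]
  have h3 : k + 1 - i = (k - i) + 1 := by omega
  rw [h3, alt_sum_choose' (k - i)]
  rcases eq_or_lt_of_le hik with h | h
  · subst h; simp
  · have hne : ¬ (i = k) := by omega
    have hne' : k - i ≠ 0 := by omega
    simp_all

private lemma inv_c' (m : ℕ) (hm : 0 < m) (c : ℕ → ℝ) (k : ℕ) :
    ∑ j ∈ Finset.range (k + 1), (k.choose j : ℝ) * ((m : ℝ) ^ j / (m : ℝ) ^ k) *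
      ∑ i ∈ Finset.range (j + 1), (j.choose i : ℝ) * (-1 : ℝ) ^ (j - i) *
        ((m : ℝ) ^ i / (m : ℝ) ^ j) * c i
    = c k := by
  have hm0 : (m : ℝ) ≠ 0 := Nat.cast_ne_zero.mpr hm.ne'
  have h1 : ∀ j ∈ Finset.range (k + 1),
      (k.choose j : ℝ) * ((m : ℝ) ^ j / (m : ℝ) ^ k) *
        ∑ i ∈ Finset.range (j + 1), (j.choose i : ℝ) * (-1 : ℝ) ^ (j - i) *
          ((m : ℝ) ^ i / (m : ℝ) ^ j) * c i
      = ∑ i ∈ Finset.range (k + 1),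
          ((m : ℝ) ^ i / (m : ℝ) ^ k * c i) *
            ((k.choose j : ℝ) * (j.choose i : ℝ) * (-1 : ℝ) ^ (j - i)) := by
    intro j hj
    have hjk : j + 1 ≤ k + 1 := by simp only [Finset.mem_range] at hj; omega
    have h2 : ∑ i ∈ Finset.range (j + 1), (j.choose i : ℝ) * (-1 : ℝ) ^ (j - i) *
          ((m : ℝ) ^ i / (m : ℝ) ^ j) * c i
        = ∑ i ∈ Finset.range (k + 1), (j.choose i : ℝ) * (-1 : ℝ) ^ (j - i) *
          ((m : ℝ) ^ i / (m : ℝ) ^ j) * c i := by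
      refine Finset.sum_subset (Finset.range_subset_range.mpr hjk) ?_
      intro i _ hi
      have hji : j < i := by simp only [Finset.mem_range] at hi ⊢; omega
      rw [Nat.choose_eq_zero_of_lt hji]
      simp
    rw [h2, Finset.mul_sum]
    refine Finset.sum_congr rfl fun i _ => ?_
    have hmj : (m : ℝ) ^ j ≠ 0 := pow_ne_zero _ hm0
    field_simp
  rw [Finset.sum_congr rfl h1, Finset.sum_comm]
  have h4 : ∀ i ∈ Finset.range (k + 1),
      ∑ j ∈ Finset.range (k + 1),
        ((m : ℝ) ^ i / (m : ℝ) ^ k * c i) *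
          ((k.choose j : ℝ) * (j.choose i : ℝ) * (-1 : ℝ) ^ (j - i))
      = if i = k then (m : ℝ) ^ i / (m : ℝ) ^ k * c i else 0 := by
    intro i hi
    have hik : i ≤ k := by simp only [Finset.mem_range] at hi; omega
    rw [← Finset.mul_sum, tri_sum' k i hik]
    split_ifs <;> simp
  rw [Finset.sum_congr rfl h4, Finset.sum_ite_eq' (Finset.range (k + 1)) k]
  simp [div_self (pow_ne_zero k hm0)]

set_option maxHeartbeats 2000000 in
/-- Divergence half of the paper's main theorem: for integers `m ≥ 3`, `n ≥ 1`, Lubkin's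
series diverges absolutely, i.e. the partial sums of
`∑_{r=1}^∞ (m^r/(r(r+1)))·|⟨Tr[(ρ_m^{mn} − Id/m)^{r+1}]⟩|` tend to `+∞`, and in particular
the partial sums of the signed series `∑_{r=1}^∞ ((−1)^r m^r/(r(r+1)))·⟨Tr[(ρ_m^{mn} − Id/m)^{r+1}]⟩`
do not converge.  Here `⟨Tr[(ρ_m^{mn} − Id/m)^{r+1}]⟩ = ∑_{k=0}^{r+1} C(r+1,k)(−1)^{r+1−k} m^{k−r−1} c_k`
with `c 0 = min m n` and, for `k ≥ 1`,
`c k = ((mn−1)!·k!/(mn+k−1)!)·∑_{s=0}^{m−1} C(m,s+1)·C(k−1,s)·C(n+k−s−1,n−1)`.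
(The series index is shifted: the summand at `r : ℕ` below is the term of index `r+1`.) -/
theorem lubkin_series_diverges_of_three_le (m n : ℕ) (hm : 3 ≤ m) (hn : 1 ≤ n)
    (c : ℕ → ℝ) (hc0 : c 0 = (min m n : ℕ))
    (hck : ∀ k : ℕ, 1 ≤ k → c k =
      ((m * n - 1).factorial : ℝ) * (k.factorial : ℝ) / ((m * n + k - 1).factorial : ℝ) *
        ∑ s ∈ Finset.range m,
          (m.choose (s + 1) : ℝ) * ((k - 1).choose s : ℝ) *
            ((n + k - s - 1).choose (n - 1) : ℝ)) :
    Filter.Tendsto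
      (fun N : ℕ => ∑ r ∈ Finset.range N,
        ((m : ℝ) ^ (r + 1) / (((r : ℝ) + 1) * ((r : ℝ) + 2))) *
          |∑ k ∈ Finset.range (r + 3),
            ((r + 2).choose k : ℝ) * (-1 : ℝ) ^ (r + 2 - k) *
              ((m : ℝ) ^ k / (m : ℝ) ^ (r + 2)) * c k|)
      Filter.atTop Filter.atTop ∧
    ¬ ∃ L : ℝ, Filter.Tendsto
      (fun N : ℕ => ∑ r ∈ Finset.range N,
        ((-1 : ℝ) ^ (r + 1) * (m : ℝ) ^ (r + 1) / (((r : ℝ) + 1) * ((r : ℝ) + 2))) *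
          ∑ k ∈ Finset.range (r + 3),
            ((r + 2).choose k : ℝ) * (-1 : ℝ) ^ (r + 2 - k) *
              ((m : ℝ) ^ k / (m : ℝ) ^ (r + 2)) * c k)
      Filter.atTop (nhds L) := by
  have hm0 : 0 < m := by omega
  have hmpos : (0:ℝ) < (m:ℝ) := by exact_mod_cast hm0
  have hmR : (3:ℝ) ≤ (m:ℝ) := by exact_mod_cast hm
  have hmn : 3 ≤ m * n := by
    have h := Nat.mul_le_mul_left m hn
    omega
  set d : ℕ := m * n - 1 with hd
  have hd1 : 1 ≤ d := by omega
  set A : ℕ → ℝ := fun j => ∑ i ∈ Finset.range (j + 1),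
      (j.choose i : ℝ) * (-1 : ℝ) ^ (j - i) * ((m : ℝ) ^ i / (m : ℝ) ^ j) * c i with hAdef
  have hmatch : ∀ r : ℕ, (∑ k ∈ Finset.range (r + 3),
      ((r + 2).choose k : ℝ) * (-1 : ℝ) ^ (r + 2 - k) *
        ((m : ℝ) ^ k / (m : ℝ) ^ (r + 2)) * c k) = A (r + 2) := by
    intro r
    rw [hAdef]
  -- lower bound on c k
  have hlow : ∀ k : ℕ, 1 ≤ k → (1:ℝ) / ((k + d : ℕ) : ℝ) ^ d ≤ c k := by
    intro k hk
    have hidx : m * n + k - 1 = k + d := by omega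
    rw [hck k hk, hidx]
    have hkd0 : (0:ℝ) < ((k + d : ℕ) : ℝ) := by
      have : 0 < k + d := by omega
      exact_mod_cast this
    have hS : (1:ℝ) ≤ ∑ s ∈ Finset.range m,
        (m.choose (s + 1) : ℝ) * ((k - 1).choose s : ℝ) *
          ((n + k - s - 1).choose (n - 1) : ℝ) := by
      have h0m : 0 ∈ Finset.range m := Finset.mem_range.mpr (by omega)
      have hterm : (1:ℝ) ≤ (m.choose (0 + 1) : ℝ) * ((k - 1).choose 0 : ℝ) *
          ((n + k - 0 - 1).choose (n - 1) : ℝ) := by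
        have e1 : m.choose (0 + 1) = m := Nat.choose_one_right m
        have e2 : (k - 1).choose 0 = 1 := Nat.choose_zero_right _
        have e3 : 0 < (n + k - 0 - 1).choose (n - 1) := Nat.choose_pos (by omega)
        have hnat : 1 ≤ m.choose (0 + 1) * ((k - 1).choose 0) * ((n + k - 0 - 1).choose (n - 1)) := by
          rw [e1, e2]
          have : 1 * 1 * 1 ≤ m * 1 * ((n + k - 0 - 1).choose (n - 1)) :=
            Nat.mul_le_mul (Nat.mul_le_mul (by omega) le_rfl) e3
          omega
        exact_mod_cast hnat
      exact le_trans hterm (Finset.single_le_sum (f := fun s =>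
        (m.choose (s + 1) : ℝ) * ((k - 1).choose s : ℝ) *
          ((n + k - s - 1).choose (n - 1) : ℝ)) (fun s _ => by positivity) h0m)
    have hP : (1:ℝ) / ((k + d : ℕ) : ℝ) ^ d
        ≤ (d.factorial : ℝ) * (k.factorial : ℝ) / ((k + d).factorial : ℝ) := by
      rw [div_le_div_iff₀ (by positivity) (by exact_mod_cast (k + d).factorial_pos)]
      have hnat : (k + d).factorial ≤ d.factorial * k.factorial * (k + d) ^ d := by
        calc (k + d).factorial ≤ k.factorial * (k + d) ^ d := factorial_add_le' k d
          _ ≤ d.factorial * (k.factorial * (k + d) ^ d) :=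
              Nat.le_mul_of_pos_left _ d.factorial_pos
          _ = d.factorial * k.factorial * (k + d) ^ d := by ring
      have hnat' : ((k + d).factorial : ℝ)
          ≤ (d.factorial : ℝ) * (k.factorial : ℝ) * ((k + d : ℕ) : ℝ) ^ d := by
        exact_mod_cast hnat
      linarith
    have hfin := mul_le_mul hP hS zero_le_one
      (le_trans (by positivity) hP)
    simpa using hfin
  -- the key unboundedness
  have key : ∀ B : ℝ, ∃ r : ℕ,
      B < (m:ℝ) ^ (r + 1) / (((r:ℝ) + 1) * ((r:ℝ) + 2)) * |A (r + 2)| := by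
    intro B
    by_contra hcon
    push_neg at hcon
    have hB0 : 0 ≤ B := le_trans (by positivity) (hcon 0)
    set M : ℝ := |A 0| + (m:ℝ) * |A 1| + B * (m:ℝ) + 1 with hM
    have hM1 : (1:ℝ) ≤ M := by
      have := abs_nonneg (A 0)
      have := abs_nonneg (A 1)
      nlinarith
    have hM0 : (0:ℝ) < M := lt_of_lt_of_le one_pos hM1
    have hBmM : B * (m:ℝ) ≤ M := by
      have := abs_nonneg (A 0)
      have := abs_nonneg (A 1)
      nlinarith
    have hAj : ∀ j : ℕ, |A j| * (m:ℝ) ^ j ≤ M * ((j:ℝ) + 1) ^ 2 := by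
      intro j
      match j with
      | 0 =>
        simp only [pow_zero, mul_one, Nat.cast_zero, zero_add, one_pow]
        have := abs_nonneg (A 1)
        nlinarith
      | 1 =>
        have h1 : (m:ℝ) * |A 1| ≤ M := by
          have := abs_nonneg (A 0)
          nlinarith [mul_nonneg hB0 hmpos.le]
        have h2 : |A 1| * (m:ℝ) ^ 1 ≤ M := by rw [pow_one]; linarith [h1]
        refine le_trans h2 ?_
        have hcast : (((1:ℕ):ℝ) + 1) ^ 2 = 4 := by norm_num
        rw [hcast]
        linarith [hM0.le]
      | (r + 2) =>
        have h := hcon r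
        have hq : (0:ℝ) < ((r:ℝ) + 1) * ((r:ℝ) + 2) := by positivity
        rw [div_mul_eq_mul_div, div_le_iff₀ hq] at h
        have hcast : ((r + 2 : ℕ) : ℝ) = (r:ℝ) + 2 := by push_cast; ring
        rw [hcast]
        have hr0 : (0:ℝ) ≤ (r:ℝ) := Nat.cast_nonneg r
        calc |A (r + 2)| * (m:ℝ) ^ (r + 2)
            = ((m:ℝ) ^ (r + 1) * |A (r + 2)|) * (m:ℝ) := by ring
          _ ≤ (B * (((r:ℝ) + 1) * ((r:ℝ) + 2))) * (m:ℝ) :=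
              mul_le_mul_of_nonneg_right h hmpos.le
          _ = (B * (m:ℝ)) * (((r:ℝ) + 1) * ((r:ℝ) + 2)) := by ring
          _ ≤ M * (((r:ℝ) + 2) + 1) ^ 2 := by nlinarith
    -- upper bound on c k
    have hup : ∀ k : ℕ, c k ≤ M * ((k:ℝ) + 1) ^ 2 * (2/3 : ℝ) ^ k := by
      intro k
      have hinv : ∑ j ∈ Finset.range (k + 1),
          (k.choose j : ℝ) * ((m:ℝ) ^ j / (m:ℝ) ^ k) * A j = c k := by
        simp only [hAdef]
        exact inv_c' m hm0 c k
      have hmk : (0:ℝ) < (m:ℝ) ^ k := by positivity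
      calc c k = ∑ j ∈ Finset.range (k + 1),
            (k.choose j : ℝ) * ((m:ℝ) ^ j / (m:ℝ) ^ k) * A j := hinv.symm
        _ ≤ ∑ j ∈ Finset.range (k + 1),
            (k.choose j : ℝ) * (M * ((k:ℝ) + 1) ^ 2 / (m:ℝ) ^ k) := by
          refine Finset.sum_le_sum fun j hj => ?_
          have hjk : j ≤ k := by simp only [Finset.mem_range] at hj; omega
          have h1 : (k.choose j : ℝ) * ((m:ℝ) ^ j / (m:ℝ) ^ k) * A j
              ≤ (k.choose j : ℝ) * ((|A j| * (m:ℝ) ^ j) / (m:ℝ) ^ k) := by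
            have : (k.choose j : ℝ) * ((m:ℝ) ^ j / (m:ℝ) ^ k) * A j
                = (k.choose j : ℝ) * ((A j * (m:ℝ) ^ j) / (m:ℝ) ^ k) := by ring
            rw [this]
            exact mul_le_mul_of_nonneg_left ((div_le_div_iff_of_pos_right hmk).mpr
              (mul_le_mul_of_nonneg_right (le_abs_self _) (by positivity))) (Nat.cast_nonneg _)
          refine le_trans h1 ?_
          have h2 : |A j| * (m:ℝ) ^ j ≤ M * ((k:ℝ) + 1) ^ 2 := by
            refine le_trans (hAj j) ?_
            have hj1 : ((j:ℝ) + 1) ≤ ((k:ℝ) + 1) := by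
              have : (j:ℝ) ≤ (k:ℝ) := by exact_mod_cast hjk
              linarith
            have hsq : ((j:ℝ) + 1) ^ 2 ≤ ((k:ℝ) + 1) ^ 2 := by
              nlinarith [Nat.cast_nonneg (α := ℝ) j]
            exact mul_le_mul_of_nonneg_left hsq hM0.le
          exact mul_le_mul_of_nonneg_left ((div_le_div_iff_of_pos_right hmk).mpr h2) (Nat.cast_nonneg _)
        _ = (M * ((k:ℝ) + 1) ^ 2 / (m:ℝ) ^ k) * ∑ j ∈ Finset.range (k + 1), (k.choose j : ℝ) := by
          rw [Finset.mul_sum]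
          exact Finset.sum_congr rfl fun j _ => by ring
        _ = (M * ((k:ℝ) + 1) ^ 2 / (m:ℝ) ^ k) * (2:ℝ) ^ k := by
          congr 1
          rw [← Nat.cast_sum, Nat.sum_range_choose]
          push_cast
          ring
        _ = M * ((k:ℝ) + 1) ^ 2 * (2 / (m:ℝ)) ^ k := by
          rw [div_pow]
          ring
        _ ≤ M * ((k:ℝ) + 1) ^ 2 * (2/3 : ℝ) ^ k := by
          have h23 : (2 / (m:ℝ)) ≤ 2/3 := by
            rw [div_le_div_iff₀ hmpos (by norm_num)]
            linarith
          have hpow : (2 / (m:ℝ)) ^ k ≤ (2/3 : ℝ) ^ k :=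
            pow_le_pow_left₀ (by positivity) h23 k
          exact mul_le_mul_of_nonneg_left hpow (by positivity)
    -- contradiction via limits
    have hF1 : ∀ k : ℕ, 1 ≤ k →
        (1:ℝ) ≤ M * ((k:ℝ) + 1) ^ 2 * (2/3 : ℝ) ^ k * ((k + d : ℕ) : ℝ) ^ d := by
      intro k hk
      have h1 := le_trans (hlow k hk) (hup k)
      have hX : (0:ℝ) < ((k + d : ℕ) : ℝ) ^ d := by
        have : (0:ℝ) < ((k + d : ℕ) : ℝ) := by
          have : 0 < k + d := by omega
          exact_mod_cast this
        positivity
      rw [div_le_iff₀ hX] at h1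
      exact h1
    have htend : Tendsto (fun k : ℕ =>
        M * ((k:ℝ) + 1) ^ 2 * (2/3 : ℝ) ^ k * ((k + d : ℕ) : ℝ) ^ d) atTop (nhds 0) := by
      apply squeeze_zero' (g := fun k : ℕ => (M * 4 * 2 ^ d) * ((k:ℝ) ^ (d + 2) * (2/3 : ℝ) ^ k))
      · filter_upwards with k
        positivity
      · filter_upwards [eventually_ge_atTop (max 1 d)] with k hk
        have hk1 : 1 ≤ k := le_trans (le_max_left 1 d) hk
        have hkd : d ≤ k := le_trans (le_max_right 1 d) hk
        have hk1R : (1:ℝ) ≤ (k:ℝ) := by exact_mod_cast hk1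
        have e1 : ((k:ℝ) + 1) ^ 2 ≤ 4 * (k:ℝ) ^ 2 := by nlinarith
        have e2 : ((k + d : ℕ) : ℝ) ^ d ≤ (2:ℝ) ^ d * (k:ℝ) ^ d := by
          have hb : ((k + d : ℕ) : ℝ) ≤ 2 * (k:ℝ) := by
            push_cast
            have : (d:ℝ) ≤ (k:ℝ) := by exact_mod_cast hkd
            linarith
          calc ((k + d : ℕ) : ℝ) ^ d ≤ (2 * (k:ℝ)) ^ d :=
              pow_le_pow_left₀ (by positivity) hb d
            _ = (2:ℝ) ^ d * (k:ℝ) ^ d := mul_pow 2 _ d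
        calc M * ((k:ℝ) + 1) ^ 2 * (2/3 : ℝ) ^ k * ((k + d : ℕ) : ℝ) ^ d
            ≤ M * (4 * (k:ℝ) ^ 2) * (2/3 : ℝ) ^ k * ((2:ℝ) ^ d * (k:ℝ) ^ d) := by
              gcongr
            _ = (M * 4 * 2 ^ d) * ((k:ℝ) ^ (d + 2) * (2/3 : ℝ) ^ k) := by ring
      · have h0 := tendsto_pow_const_mul_const_pow_of_lt_one (d + 2)
          (by norm_num : (0:ℝ) ≤ 2/3) (by norm_num : (2/3 : ℝ) < 1)
        have := h0.const_mul (M * 4 * 2 ^ d)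
        simpa using this
    have hev : ∀ᶠ k : ℕ in atTop,
        M * ((k:ℝ) + 1) ^ 2 * (2/3 : ℝ) ^ k * ((k + d : ℕ) : ℝ) ^ d < 1 :=
      htend.eventually_lt_const one_pos
    obtain ⟨k, hk1, hk2⟩ := (hev.and (eventually_ge_atTop 1)).exists
    exact absurd (hF1 k hk2) (by linarith)
  -- assemble the two goals
  constructor
  · simp only [hmatch]
    apply tendsto_atTop_atTop_of_monotone
    · apply monotone_nat_of_le_succ
      intro N
      rw [Finset.sum_range_succ]
      have h0 : (0:ℝ) ≤ ((m:ℝ) ^ (N + 1) / (((N:ℝ) + 1) * ((N:ℝ) + 2))) * |A (N + 2)| := by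
        positivity
      linarith
    · intro b
      obtain ⟨r, hr⟩ := key b
      refine ⟨r + 1, ?_⟩
      have hle : ((m:ℝ) ^ (r + 1) / (((r:ℝ) + 1) * ((r:ℝ) + 2))) * |A (r + 2)|
          ≤ ∑ r' ∈ Finset.range (r + 1),
            ((m:ℝ) ^ (r' + 1) / (((r':ℝ) + 1) * ((r':ℝ) + 2))) * |A (r' + 2)| :=
        Finset.single_le_sum (f := fun r' : ℕ =>
          ((m:ℝ) ^ (r' + 1) / (((r':ℝ) + 1) * ((r':ℝ) + 2))) * |A (r' + 2)|)
          (fun i _ => by positivity) (Finset.self_mem_range_succ r)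
      linarith
  · rintro ⟨L, hL⟩
    simp only [hmatch] at hL
    have hu0 : Tendsto (fun N : ℕ =>
        ((-1:ℝ) ^ (N + 1) * (m:ℝ) ^ (N + 1) / (((N:ℝ) + 1) * ((N:ℝ) + 2))) * A (N + 2))
        atTop (nhds 0) := by
      have heq : (fun N : ℕ =>
          ((-1:ℝ) ^ (N + 1) * (m:ℝ) ^ (N + 1) / (((N:ℝ) + 1) * ((N:ℝ) + 2))) * A (N + 2))
          = (fun N : ℕ => (∑ r ∈ Finset.range (N + 1),
              ((-1:ℝ) ^ (r + 1) * (m:ℝ) ^ (r + 1) / (((r:ℝ) + 1) * ((r:ℝ) + 2))) * A (r + 2)) -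
              ∑ r ∈ Finset.range N,
              ((-1:ℝ) ^ (r + 1) * (m:ℝ) ^ (r + 1) / (((r:ℝ) + 1) * ((r:ℝ) + 2))) * A (r + 2)) := by
        funext N
        rw [Finset.sum_range_succ]
        ring
      rw [heq]
      have h1 := (hL.comp (tendsto_add_atTop_nat 1)).sub hL
      simpa using h1
    have habs : Tendsto (fun N : ℕ =>
        |((-1:ℝ) ^ (N + 1) * (m:ℝ) ^ (N + 1) / (((N:ℝ) + 1) * ((N:ℝ) + 2))) * A (N + 2)|)
        atTop (nhds 0) := by
      simpa using hu0.abs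
    obtain ⟨B, hB⟩ := habs.bddAbove_range
    obtain ⟨r, hr⟩ := key B
    have h1 : |((-1:ℝ) ^ (r + 1) * (m:ℝ) ^ (r + 1) / (((r:ℝ) + 1) * ((r:ℝ) + 2))) * A (r + 2)|
        ≤ B := hB ⟨r, rfl⟩
    have h2 : |((-1:ℝ) ^ (r + 1) * (m:ℝ) ^ (r + 1) / (((r:ℝ) + 1) * ((r:ℝ) + 2))) * A (r + 2)|
        = (m:ℝ) ^ (r + 1) / (((r:ℝ) + 1) * ((r:ℝ) + 2)) * |A (r + 2)| := by
      rw [abs_mul, abs_div, abs_mul, abs_pow, abs_pow, abs_neg, abs_one, one_pow, one_mul,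
        abs_of_nonneg hmpos.le,
        abs_of_pos (show (0:ℝ) < ((r:ℝ) + 1) * ((r:ℝ) + 2) by positivity)]
    rw [h2] at h1
    linarith
end

section
/- For m = 2 and every integer n ≥ 1, Lubkin's series converges absolutely: ∑_{r=1}^∞ (2^r/(r(r+1))) · |∑_{k=0}^{r+1} C(r+1,k)·(−1)^{r+1−k}·2^{k−r−1}·c_k| < +∞, where c_0 = min(2,n) and, for k ≥ 1, c_k = ((2n−1)!·k!/(2n+k−1)!) · ∑_{s=0}^{1} C(2,s+1)·C(k−1,s)·C(n+k−s−1,n−1). -/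
open intervalIntegral MeasureTheory Set


open intervalIntegral MeasureTheory Set

lemma lubkin_beta_nat (b a : ℕ) : ∫ x in (0:ℝ)..1, x ^ a * (1 - x) ^ b
    = (a.factorial : ℝ) * (b.factorial : ℝ) / ((a + b + 1).factorial : ℝ) := by
  induction b generalizing a with
  | zero =>
      simp only [pow_zero, mul_one, integral_pow, one_pow, Nat.factorial]
      push_cast
      have h1 : (a:ℝ) + 1 ≠ 0 := by positivity
      have h2 : (a.factorial : ℝ) ≠ 0 := by positivity
      rw [zero_pow (by omega : a + 1 ≠ 0)]
      field_simp
      norm_num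
  | succ b ih =>
      have h := integral_mul_deriv_eq_deriv_mul_of_hasDerivAt (a := (0:ℝ)) (b := 1)
        (u := fun x => (1 - x) ^ (b + 1)) (v := fun x => x ^ (a + 1) / (a + 1))
        (u' := fun x => -((b + 1) * (1 - x) ^ b)) (v' := fun x => x ^ a)
        (by fun_prop) (by fun_prop)
        (fun x _ => by
          have h1 : HasDerivAt (fun x : ℝ => 1 - x) (-1) x := by
            simpa using (hasDerivAt_id x).const_sub 1
          have := h1.fun_pow (b + 1)
          simpa [mul_comm, mul_assoc, mul_left_comm] using this)
        (fun x _ => by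
          have h1 : HasDerivAt (fun x : ℝ => x ^ (a + 1)) ((a + 1) * x ^ a) x := by
            simpa using hasDerivAt_pow (a + 1) x
          have h2 := h1.div_const ((a:ℝ) + 1)
          have hne : ((a:ℝ) + 1) ≠ 0 := by positivity
          simpa [mul_div_assoc, mul_comm, hne, mul_div_cancel_left₀] using h2)
        ((Continuous.intervalIntegrable (by fun_prop) 0 1))
        ((Continuous.intervalIntegrable (by fun_prop) 0 1))
      have key : ∫ x in (0:ℝ)..1, x ^ a * (1 - x) ^ (b + 1)
          = ((b:ℝ) + 1) / ((a:ℝ) + 1) * ∫ x in (0:ℝ)..1, x ^ (a + 1) * (1 - x) ^ b := by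
        have flip : ∫ x in (0:ℝ)..1, x ^ a * (1 - x) ^ (b + 1)
            = ∫ x in (0:ℝ)..1, (1 - x) ^ (b + 1) * x ^ a :=
          integral_congr fun x _ => mul_comm _ _
        rw [flip, h, ← intervalIntegral.integral_const_mul]
        simp only [sub_self, one_pow, zero_pow (Nat.succ_ne_zero b), zero_pow (Nat.succ_ne_zero a),
          zero_mul, mul_zero, zero_div, zero_sub, sub_zero]
        rw [← intervalIntegral.integral_neg]
        exact integral_congr fun x _ => by ring
      rw [key, ih (a + 1)]
      rw [show a + 1 + b + 1 = a + (b + 1) + 1 by ring]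
      rw [Nat.factorial_succ a, Nat.factorial_succ b]
      have h1 : ((a:ℝ) + 1) ≠ 0 := by positivity
      have h2 : ((a + (b + 1) + 1).factorial : ℝ) ≠ 0 := by positivity
      push_cast
      field_simp

lemma lubkin_J_eq (a b : ℕ) : ∫ x in (0:ℝ)..1, x ^ a * (1 - x) ^ b * (1 - 2*x) ^ 2
    = (a.factorial : ℝ) * b.factorial *
        (((a:ℝ)+b+2)*((a:ℝ)+b+3) - 4*((a:ℝ)+1)*((a:ℝ)+b+3) + 4*((a:ℝ)+1)*((a:ℝ)+2))
      / ((a + b + 3).factorial : ℝ) := by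
  have split : (fun x : ℝ => x ^ a * (1 - x) ^ b * (1 - 2*x) ^ 2)
      = fun x : ℝ => (x ^ a * (1 - x) ^ b - 4 * (x ^ (a+1) * (1 - x) ^ b))
          + 4 * (x ^ (a+2) * (1 - x) ^ b) := by
    funext x; ring
  rw [split]
  have i1 : IntervalIntegrable (fun x : ℝ => x ^ a * (1 - x) ^ b) volume 0 1 :=
    Continuous.intervalIntegrable (by fun_prop) 0 1
  have i2 : IntervalIntegrable (fun x : ℝ => x ^ (a+1) * (1 - x) ^ b) volume 0 1 :=
    Continuous.intervalIntegrable (by fun_prop) 0 1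
  have i3 : IntervalIntegrable (fun x : ℝ => x ^ (a+2) * (1 - x) ^ b) volume 0 1 :=
    Continuous.intervalIntegrable (by fun_prop) 0 1
  rw [intervalIntegral.integral_add (i1.sub (i2.const_mul 4)) (i3.const_mul 4),
    intervalIntegral.integral_sub i1 (i2.const_mul 4),
    intervalIntegral.integral_const_mul, intervalIntegral.integral_const_mul,
    lubkin_beta_nat, lubkin_beta_nat, lubkin_beta_nat]
  rw [show a + 1 + b + 1 = a + b + 2 by ring, show a + 2 + b + 1 = a + b + 3 by ring]
  rw [show (a+b+3).factorial = (a+b+3) * ((a+b+2) * (a+b+1).factorial) by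
        rw [show a+b+3 = (a+b+2)+1 by ring, Nat.factorial_succ, Nat.factorial_succ],
    show (a+b+2).factorial = (a+b+2) * (a+b+1).factorial from Nat.factorial_succ _,
    Nat.factorial_succ a, show (a+2).factorial = (a+2)*((a+1)*a.factorial) by
        rw [show a+2 = (a+1)+1 by ring, Nat.factorial_succ, Nat.factorial_succ]]
  have h1 : ((a+b+1).factorial : ℝ) ≠ 0 := by positivity
  have h2 : ((a:ℝ)+b+2) ≠ 0 := by positivity
  have h3 : ((a:ℝ)+b+3) ≠ 0 := by positivity
  push_cast
  field_simp

lemma lubkin_moment (m k : ℕ) :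
    ∫ x in (0:ℝ)..1, x ^ k * (x ^ m * (1 - x) ^ m * (1 - 2*x) ^ 2)
      = ((k+m).factorial : ℝ) * (m.factorial : ℝ) * ((k:ℝ)^2 + (k:ℝ) + 2*m + 2)
        / ((k + 2*m + 3).factorial : ℝ) := by
  have e : (fun x : ℝ => x ^ k * (x ^ m * (1 - x) ^ m * (1 - 2*x) ^ 2))
      = fun x : ℝ => x ^ (k + m) * (1 - x) ^ m * (1 - 2*x) ^ 2 := by
    funext x; rw [pow_add]; ring
  rw [show ∫ x in (0:ℝ)..1, x ^ k * (x ^ m * (1 - x) ^ m * (1 - 2*x) ^ 2)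
      = ∫ x in (0:ℝ)..1, x ^ (k+m) * (1 - x) ^ m * (1 - 2*x) ^ 2 from by rw [e]]
  rw [lubkin_J_eq, show k + m + m + 3 = k + 2*m + 3 by ring]
  have hD : ((k + 2*m + 3).factorial : ℝ) ≠ 0 := by positivity
  field_simp
  push_cast
  ring

lemma lubkin_c_val (m : ℕ) (c : ℕ → ℝ)
    (hc0 : c 0 = (min 2 (m+2) : ℕ))
    (hck : ∀ k : ℕ, 1 ≤ k → c k =
      ((2 * (m+2) - 1).factorial : ℝ) * (k.factorial : ℝ) / ((2 * (m+2) + k - 1).factorial : ℝ) *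
        ∑ s ∈ Finset.range 2,
          (Nat.choose 2 (s + 1) : ℝ) * ((k - 1).choose s : ℝ) *
            (((m+2) + k - s - 1).choose ((m+2) - 1) : ℝ)) :
    ∀ k : ℕ, c k = ((2*m+3).factorial : ℝ) * ((k+m).factorial : ℝ) *
      ((k:ℝ)^2 + (k:ℝ) + 2*(m:ℝ) + 2)
      / (((m+1).factorial : ℝ) * ((k + 2*m + 3).factorial : ℝ)) := by
  intro k
  match k with
  | 0 =>
      rw [hc0, show min 2 (m+2) = 2 by omega]
      rw [show (0:ℕ) + 2*m + 3 = 2*m+3 by omega, Nat.factorial_succ m]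
      have h1 : ((2*m+3).factorial : ℝ) ≠ 0 := by positivity
      have h2 : (m.factorial : ℝ) ≠ 0 := by positivity
      have h3 : ((m:ℝ) + 1) ≠ 0 := by positivity
      push_cast
      field_simp
      ring
  | j+1 =>
      rw [hck (j+1) (by omega)]
      rw [show 2*(m+2) - 1 = 2*m+3 by omega, show 2*(m+2) + (j+1) - 1 = j+2*m+4 by omega]
      rw [Finset.sum_range_succ, Finset.sum_range_succ, Finset.sum_range_zero]
      rw [show (m+2) + (j+1) - 0 - 1 = m+j+2 by omega,
        show (m+2) + (j+1) - 1 - 1 = m+j+1 by omega,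
        show (m+2) - 1 = m+1 by omega,
        show (j+1) - 1 = j by omega]
      rw [show j+1+m = m+j+1 by omega, show j+1+2*m+3 = j+2*m+4 by omega]
      have hcc1 : ((m+j+2).choose (m+1) : ℝ)
          = ((m+j+2).factorial : ℝ) / (((m+1).factorial : ℝ) * ((j+1).factorial : ℝ)) := by
        rw [Nat.cast_choose ℝ (by omega : m+1 ≤ m+j+2), show m+j+2-(m+1) = j+1 by omega]
      have hcc2 : ((m+j+1).choose (m+1) : ℝ)
          = ((m+j+1).factorial : ℝ) / (((m+1).factorial : ℝ) * (j.factorial : ℝ)) := by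
        rw [Nat.cast_choose ℝ (by omega : m+1 ≤ m+j+1), show m+j+1-(m+1) = j by omega]
      rw [hcc1, hcc2]
      simp only [Nat.choose_zero_right, Nat.choose_one_right, Nat.choose_self]
      rw [show (m+j+2).factorial = (m+j+2) * (m+j+1).factorial from Nat.factorial_succ _,
        show (j+1).factorial = (j+1) * j.factorial from Nat.factorial_succ _]
      have h1 : ((m+1).factorial : ℝ) ≠ 0 := by positivity
      have h2 : (j.factorial : ℝ) ≠ 0 := by positivity
      have h3 : ((j+2*m+4).factorial : ℝ) ≠ 0 := by positivity
      have h4 : ((m+j+1).factorial : ℝ) ≠ 0 := by positivity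
      have h5 : ((j:ℝ) + 1) ≠ 0 := by positivity
      simp only [Nat.reduceAdd, Nat.choose_one_right]
      push_cast
      field_simp
      ring

lemma lubkin_inner_bound (m : ℕ) (c : ℕ → ℝ)
    (hC : ∀ k : ℕ, c k = ((2*m+3).factorial : ℝ) * ((k+m).factorial : ℝ) *
      ((k:ℝ)^2 + (k:ℝ) + 2*(m:ℝ) + 2)
      / (((m+1).factorial : ℝ) * ((k + 2*m + 3).factorial : ℝ))) (p : ℕ) :
    |∑ k ∈ Finset.range (p+1),
        (p.choose k : ℝ) * (-1 : ℝ) ^ (p - k) * ((2:ℝ)^k / (2:ℝ)^p) * c k|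
      ≤ 2 * (1/2 : ℝ) ^ p := by
  set g : ℝ → ℝ := fun x => x^m * (1-x)^m * (1-2*x)^2 with hg
  set C0 : ℝ := ((2*m+3).factorial : ℝ) / (((m+1).factorial : ℝ) * (m.factorial : ℝ)) with hC0def
  have hC0 : 0 ≤ C0 := by positivity
  have hgnn : ∀ x ∈ Icc (0:ℝ) 1, 0 ≤ g x := fun x hx =>
    mul_nonneg (mul_nonneg (pow_nonneg hx.1 m) (pow_nonneg (by linarith [hx.2]) m))
      (sq_nonneg _)
  have hrep : ∀ k : ℕ, c k = C0 * ∫ x in (0:ℝ)..1, x ^ k * g x := by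
    intro k
    rw [hC k, hg, lubkin_moment m k, hC0def]
    have h1 : ((m+1).factorial : ℝ) ≠ 0 := by positivity
    have h2 : (m.factorial : ℝ) ≠ 0 := by positivity
    have h3 : ((k+2*m+3).factorial : ℝ) ≠ 0 := by positivity
    field_simp
  have hsum : ∑ k ∈ Finset.range (p+1),
      (p.choose k : ℝ) * (-1 : ℝ) ^ (p - k) * ((2:ℝ)^k / (2:ℝ)^p) * c k
      = C0 * ∫ x in (0:ℝ)..1, (x - 1/2) ^ p * g x := by
    calc ∑ k ∈ Finset.range (p+1),
        (p.choose k : ℝ) * (-1 : ℝ) ^ (p - k) * ((2:ℝ)^k / (2:ℝ)^p) * c k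
        = ∑ k ∈ Finset.range (p+1), C0 * ∫ x in (0:ℝ)..1,
            (p.choose k : ℝ) * (-1 : ℝ) ^ (p - k) * ((2:ℝ)^k / (2:ℝ)^p) * (x ^ k * g x) :=
          Finset.sum_congr rfl (fun k _ => by
            rw [hrep k, intervalIntegral.integral_const_mul]; ring)
      _ = C0 * ∑ k ∈ Finset.range (p+1), ∫ x in (0:ℝ)..1,
            (p.choose k : ℝ) * (-1 : ℝ) ^ (p - k) * ((2:ℝ)^k / (2:ℝ)^p) * (x ^ k * g x) := by
          rw [Finset.mul_sum]
      _ = C0 * ∫ x in (0:ℝ)..1, ∑ k ∈ Finset.range (p+1),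
            (p.choose k : ℝ) * (-1 : ℝ) ^ (p - k) * ((2:ℝ)^k / (2:ℝ)^p) * (x ^ k * g x) := by
          rw [intervalIntegral.integral_finset_sum]
          exact fun k _ => Continuous.intervalIntegrable (by fun_prop) 0 1
      _ = C0 * ∫ x in (0:ℝ)..1, (x - 1/2) ^ p * g x := by
          congr 1
          apply intervalIntegral.integral_congr
          intro x _
          have hb := add_pow (2*x) (-1 : ℝ) p
          have h2p : ((2:ℝ)^p) ≠ 0 := by positivity
          have h2 : (x - 1/2 : ℝ)^p * g x = ((2*x + -1)^p / 2^p) * g x := by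
            rw [show (2*x + -1 : ℝ) = 2*(x - 1/2) by ring, mul_pow]
            field_simp
          dsimp only
          rw [h2, hb, Finset.sum_div, Finset.sum_mul]
          apply Finset.sum_congr rfl
          intro k _
          rw [mul_pow]
          ring
  rw [hsum, abs_mul, abs_of_nonneg hC0]
  have h1 : |∫ x in (0:ℝ)..1, (x - 1/2) ^ p * g x|
      ≤ ∫ x in (0:ℝ)..1, |(x - 1/2) ^ p * g x| :=
    intervalIntegral.abs_integral_le_integral_abs zero_le_one
  have h2 : (∫ x in (0:ℝ)..1, |(x - 1/2) ^ p * g x|)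
      ≤ ∫ x in (0:ℝ)..1, (1/2:ℝ)^p * g x := by
    apply intervalIntegral.integral_mono_on zero_le_one
      (Continuous.intervalIntegrable (by fun_prop) 0 1)
      (Continuous.intervalIntegrable (by fun_prop) 0 1)
    intro x hx
    rw [abs_mul, abs_pow, abs_of_nonneg (hgnn x hx)]
    apply mul_le_mul_of_nonneg_right _ (hgnn x hx)
    apply pow_le_pow_left₀ (abs_nonneg _)
    rw [abs_le]
    constructor <;> [linarith [hx.1]; linarith [hx.2]]
  have h4 : (∫ x in (0:ℝ)..1, g x)
      = (m.factorial : ℝ) * (m.factorial : ℝ) * (2*(m:ℝ)+2) / ((2*m+3).factorial : ℝ) := by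
    have h := lubkin_moment m 0
    simp only [pow_zero, one_mul, Nat.cast_zero, zero_add] at h
    rw [hg]
    rw [h]
    norm_num
  have h3 : (∫ x in (0:ℝ)..1, (1/2:ℝ)^p * g x) = (1/2:ℝ)^p * ∫ x in (0:ℝ)..1, g x :=
    intervalIntegral.integral_const_mul _ _
  have hfin : C0 * ((1/2:ℝ)^p * ∫ x in (0:ℝ)..1, g x) = 2 * (1/2:ℝ)^p := by
    rw [h4, hC0def, Nat.factorial_succ m]
    have e1 : ((2*m+3).factorial : ℝ) ≠ 0 := by positivity
    have e2 : (m.factorial : ℝ) ≠ 0 := by positivity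
    have e3 : ((m:ℝ) + 1) ≠ 0 := by positivity
    push_cast
    field_simp
  calc C0 * |∫ x in (0:ℝ)..1, (x - 1/2) ^ p * g x|
      ≤ C0 * ∫ x in (0:ℝ)..1, (1/2:ℝ)^p * g x := by
        apply mul_le_mul_of_nonneg_left (le_trans h1 h2) hC0
    _ = 2 * (1/2:ℝ)^p := by rw [h3, hfin]

lemma lubkin_inner_bound_one (c : ℕ → ℝ) (hone : ∀ k, c k = 1) (p : ℕ) :
    |∑ k ∈ Finset.range (p+1),
        (p.choose k : ℝ) * (-1 : ℝ) ^ (p - k) * ((2:ℝ)^k / (2:ℝ)^p) * c k|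
      ≤ 2 * (1/2 : ℝ) ^ p := by
  have hb := add_pow (2:ℝ) (-1) p
  have key : ∑ k ∈ Finset.range (p+1),
      (p.choose k : ℝ) * (-1 : ℝ) ^ (p - k) * ((2:ℝ)^k / (2:ℝ)^p) * c k = 1/2^p := by
    calc ∑ k ∈ Finset.range (p+1),
        (p.choose k : ℝ) * (-1 : ℝ) ^ (p - k) * ((2:ℝ)^k / (2:ℝ)^p) * c k
        = (∑ k ∈ Finset.range (p+1), (2:ℝ)^k * (-1:ℝ)^(p-k) * (p.choose k : ℝ)) / 2^p := by
          rw [Finset.sum_div]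
          exact Finset.sum_congr rfl fun k _ => by rw [hone k]; ring
      _ = 1/2^p := by rw [← hb]; norm_num
  rw [key, div_pow, one_pow]
  have h0 : (0:ℝ) < 1/2^p := by positivity
  rw [abs_of_nonneg h0.le]
  linarith


/-- Convergence half of the paper's main theorem: for `m = 2` and every integer `n ≥ 1`,
Lubkin's series converges absolutely:
`∑_{r=1}^∞ (2^r/(r(r+1)))·|⟨Tr[(ρ_2^{2n} − Id/2)^{r+1}]⟩| < +∞`, where
`⟨Tr[(ρ_2^{2n} − Id/2)^{r+1}]⟩ = ∑_{k=0}^{r+1} C(r+1,k)(−1)^{r+1−k} 2^{k−r−1} c_k`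
with `c 0 = min 2 n` and, for `k ≥ 1`,
`c k = ((2n−1)!·k!/(2n+k−1)!)·∑_{s=0}^{1} C(2,s+1)·C(k−1,s)·C(n+k−s−1,n−1)`.
(The series index is shifted: the summand at `r : ℕ` below is the term of index `r+1`.) -/
theorem lubkin_series_converges_of_two (n : ℕ) (hn : 1 ≤ n)
    (c : ℕ → ℝ) (hc0 : c 0 = (min 2 n : ℕ))
    (hck : ∀ k : ℕ, 1 ≤ k → c k =
      ((2 * n - 1).factorial : ℝ) * (k.factorial : ℝ) / ((2 * n + k - 1).factorial : ℝ) *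
        ∑ s ∈ Finset.range 2,
          (Nat.choose 2 (s + 1) : ℝ) * ((k - 1).choose s : ℝ) *
            ((n + k - s - 1).choose (n - 1) : ℝ)) :
    Summable (fun r : ℕ =>
      ((2 : ℝ) ^ (r + 1) / (((r : ℝ) + 1) * ((r : ℝ) + 2))) *
        |∑ k ∈ Finset.range (r + 3),
          ((r + 2).choose k : ℝ) * (-1 : ℝ) ^ (r + 2 - k) *
            ((2 : ℝ) ^ k / (2 : ℝ) ^ (r + 2)) * c k|) := by
  have hbound : ∀ r : ℕ, |∑ k ∈ Finset.range (r + 3),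
      ((r + 2).choose k : ℝ) * (-1 : ℝ) ^ (r + 2 - k) *
        ((2 : ℝ) ^ k / (2 : ℝ) ^ (r + 2)) * c k| ≤ 2 * (1/2 : ℝ) ^ (r + 2) := by
    intro r
    rcases Nat.lt_or_ge n 2 with h2 | h2
    · have hn1 : n = 1 := by omega
      subst hn1
      have hone : ∀ k, c k = 1 := by
        intro k
        match k with
        | 0 => rw [hc0]; norm_num
        | j+1 =>
          rw [hck (j+1) (by omega)]
          rw [show 2*1-1 = 1 by norm_num, show 2*1+(j+1)-1 = j+2 by omega]
          rw [Finset.sum_range_succ, Finset.sum_range_succ, Finset.sum_range_zero]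
          rw [show 1+(j+1)-0-1 = j+1 by omega, show 1+(j+1)-1-1 = j by omega,
            show (1:ℕ)-1 = 0 from rfl, show (j+1)-1 = j by omega]
          simp only [Nat.choose_zero_right, Nat.choose_one_right, Nat.choose_self]
          rw [show (j+2) = (j+1)+1 from rfl, Nat.factorial_succ (j+1)]
          have h1 : ((j+1).factorial : ℝ) ≠ 0 := by positivity
          have h5 : ((j:ℝ) + 1 + 1) ≠ 0 := by positivity
          simp only [Nat.reduceAdd, Nat.choose_one_right]
          push_cast
          field_simp
          ring
      simpa using lubkin_inner_bound_one c hone (r+2)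
    · obtain ⟨m, rfl⟩ : ∃ m, n = m + 2 := ⟨n - 2, by omega⟩
      have hCv := lubkin_c_val m c hc0 hck
      simpa using lubkin_inner_bound m c hCv (r+2)
  have hs : Summable (fun r : ℕ => 1/((r:ℝ)+1)^2) := by
    have h0 : Summable (fun j : ℕ => 1/(j:ℝ)^2) :=
      Real.summable_one_div_nat_pow.mpr (by norm_num)
    have h1 := (summable_nat_add_iff 1).mpr h0
    exact h1.congr fun r => by push_cast; ring
  apply Summable.of_nonneg_of_le (fun r => by positivity) (fun r => ?_) hs
  have hb := hbound r
  have key : (2:ℝ)^(r+1) * (2*(1/2:ℝ)^(r+2)) = 1 := by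
    rw [div_pow, one_pow, pow_succ (2:ℝ) (r+1)]
    have : ((2:ℝ)^(r+1) * 2) ≠ 0 := by positivity
    field_simp
  calc ((2 : ℝ) ^ (r + 1) / (((r : ℝ) + 1) * ((r : ℝ) + 2))) *
        |∑ k ∈ Finset.range (r + 3),
          ((r + 2).choose k : ℝ) * (-1 : ℝ) ^ (r + 2 - k) *
            ((2 : ℝ) ^ k / (2 : ℝ) ^ (r + 2)) * c k|
      ≤ ((2 : ℝ) ^ (r + 1) / (((r : ℝ) + 1) * ((r : ℝ) + 2))) * (2 * (1/2:ℝ)^(r+2)) :=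
        mul_le_mul_of_nonneg_left hb (by positivity)
    _ = 1 / (((r : ℝ) + 1) * ((r : ℝ) + 2)) := by
        rw [div_mul_eq_mul_div, key]
    _ ≤ 1/((r:ℝ)+1)^2 := by
        apply one_div_le_one_div_of_le (by positivity)
        nlinarith [Nat.cast_nonneg (α := ℝ) r]
end

section
/- For all integers m, n with 1 ≤ m ≤ n, the function f : ℝ → ℝ defined for r near 1 by f(r) = (Γ(mn)/(r·Γ(mn+r))) · ∑_{k=0}^{m−1} (−1)^k Γ(m+r−k)Γ(n+r−k)·(1/Γ(r−k)) / (k!·Γ(m−k)·Γ(n−k)) (with the convention 1/Γ(x) = 0 at nonpositive integers x, so that each summand is a smooth function of r) is differentiable at r = 1, and −f′(1) = ∑_{k=n+1}^{mn} 1/k − (m−1)/(2n). -/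
open Real Finset


noncomputable def Hsum (j : ℕ) : ℝ := ∑ i ∈ Finset.range j, 1 / ((i : ℝ) + 1)

lemma hasDerivAt_Gamma_pos {x : ℝ} (hx : 0 < x) :
    HasDerivAt Real.Gamma (deriv Real.Gamma x) x := by
  refine (Real.differentiableAt_Gamma fun m => ?_).hasDerivAt
  have : (0:ℝ) ≤ m := Nat.cast_nonneg m
  intro h; rw [h] at hx; linarith

lemma gamma_deriv_succ {x : ℝ} (hx : 0 < x) :
    deriv Real.Gamma (x + 1) = Real.Gamma x + x * deriv Real.Gamma x := by
  have h1 : HasDerivAt (fun y : ℝ => (y - 1) * Real.Gamma (y - 1))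
      (1 * Real.Gamma ((x+1) - 1) + ((x+1) - 1) * deriv Real.Gamma ((x+1)-1)) (x + 1) := by
    have hg : HasDerivAt (fun y : ℝ => Real.Gamma (y - 1)) (deriv Real.Gamma ((x+1)-1) * 1) (x+1) := by
      have := (hasDerivAt_Gamma_pos (by linarith : (0:ℝ) < (x+1)-1)).comp (x+1)
        ((hasDerivAt_id (x+1)).sub_const 1)
      simpa [Function.comp_def] using this
    simpa using ((hasDerivAt_id (x+1)).sub_const 1).fun_mul hg
  have heq : ∀ᶠ y in nhds (x + 1), (y - 1) * Real.Gamma (y - 1) = Real.Gamma y := by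
    have : ∀ᶠ y in nhds (x+1), y - 1 ≠ 0 := by
      have : ∀ᶠ y in nhds (x+1), 0 < y - 1 :=
        eventually_nhds_iff.mpr ⟨Set.Ioi 1, fun y hy => by simp at hy; linarith,
          isOpen_Ioi, by simp; linarith⟩
      exact this.mono fun y hy => ne_of_gt hy
    exact this.mono fun y hy => by
      rw [← Real.Gamma_add_one hy]; ring_nf
  have h2 : HasDerivAt Real.Gamma
      (1 * Real.Gamma ((x+1) - 1) + ((x+1) - 1) * deriv Real.Gamma ((x+1)-1)) (x + 1) :=
    h1.congr_of_eventuallyEq (heq.mono fun y hy => hy.symm)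
  rw [h2.deriv]
  simp only [add_sub_cancel_right]
  ring

lemma gamma_deriv_nat (j : ℕ) :
    deriv Real.Gamma ((j : ℝ) + 1) = (j.factorial : ℝ) * (deriv Real.Gamma 1 + Hsum j) := by
  induction j with
  | zero => simp [Hsum]
  | succ j ih =>
    have hpos : (0:ℝ) < (j:ℝ) + 1 := by positivity
    have : ((j+1 : ℕ) : ℝ) + 1 = ((j:ℝ) + 1) + 1 := by push_cast; ring
    rw [this, gamma_deriv_succ hpos, ih, Real.Gamma_nat_eq_factorial]
    have : Hsum (j+1) = Hsum j + 1/((j:ℝ)+1) := by simp [Hsum, Finset.sum_range_succ]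
    rw [this]
    have hne : ((j:ℝ)+1) ≠ 0 := by positivity
    push_cast [Nat.factorial_succ]
    field_simp
    ring

lemma gamma_arg_ne {r : ℝ} (hr1 : 1/2 < r) (hr2 : r < 3/2) (hr : r ≠ 1) (k : ℕ) :
    ∀ i : ℕ, r - (k:ℝ) ≠ -(i:ℝ) := by
  intro i h
  have hz : r = (k:ℝ) - (i:ℝ) := by linarith
  rcases le_or_gt k i with hki | hki
  · have : (k:ℝ) ≤ (i:ℝ) := by exact_mod_cast hki
    linarith
  · have h1 : (1:ℕ) ≤ k - i := by omega
    have h2 : ((k - i : ℕ) : ℝ) = (k:ℝ) - i := by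
      push_cast [Nat.cast_sub hki.le]; ring
    rcases Nat.lt_or_ge (k - i) 2 with h3 | h3
    · have : k - i = 1 := by omega
      rw [this] at h2; simp at h2; apply hr; linarith
    · have : (2:ℝ) ≤ ((k - i : ℕ):ℝ) := by exact_mod_cast h3
      rw [h2] at this; linarith

lemma one_div_gamma_eq {r : ℝ} (hr1 : 1/2 < r) (hr2 : r < 3/2) (k : ℕ) :
    1 / Real.Gamma (r - (k:ℝ)) =
      (∏ j ∈ Finset.range k, (r - ((j:ℝ) + 1))) / Real.Gamma r := by
  rcases eq_or_ne r 1 with rfl | hr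
  · cases k with
    | zero => simp
    | succ k' =>
      have hz : Real.Gamma (1 - ((k' + 1 : ℕ):ℝ)) = 0 := by
        rw [Real.Gamma_eq_zero_iff]
        exact ⟨k', by push_cast; ring⟩
      have hp : (∏ j ∈ Finset.range (k'+1), ((1:ℝ) - ((j:ℝ) + 1))) = 0 :=
        Finset.prod_eq_zero (Finset.mem_range.mpr (Nat.succ_pos k')) (by norm_num)
      rw [hz, hp]; simp
  · induction k with
    | zero => simp
    | succ k ih =>
      have hne : ∀ i : ℕ, ∀ j : ℕ, r - (j:ℝ) ≠ -(i:ℝ) := fun i j => gamma_arg_ne hr1 hr2 hr j i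
      have hΓk : Real.Gamma (r - (k:ℝ)) ≠ 0 := Real.Gamma_ne_zero (fun i => hne i k)
      have hΓk1 : Real.Gamma (r - ((k+1:ℕ):ℝ)) ≠ 0 := Real.Gamma_ne_zero (fun i => hne i (k+1))
      have hΓr : Real.Gamma r ≠ 0 := by
        have := Real.Gamma_ne_zero (fun i => by simpa using hne i 0)
        simpa using this
      have hx : r - ((k+1:ℕ):ℝ) ≠ 0 := by
        have := hne 0 (k+1); simpa using this
      have key : Real.Gamma (r - (k:ℝ)) = (r - ((k+1:ℕ):ℝ)) * Real.Gamma (r - ((k+1:ℕ):ℝ)) := by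
        have := Real.Gamma_add_one hx
        have harg : r - ((k+1:ℕ):ℝ) + 1 = r - (k:ℝ) := by push_cast; ring
        rw [harg] at this; exact this
      have step : 1 / Real.Gamma (r - ((k+1:ℕ):ℝ))
          = (r - ((k+1:ℕ):ℝ)) * (1 / Real.Gamma (r - (k:ℝ))) := by
        have hx' : r - ((k:ℝ)+1) ≠ 0 := by push_cast at hx; exact hx
        have hG' : Real.Gamma (r - ((k:ℝ)+1)) ≠ 0 := by push_cast at hΓk1; exact hΓk1
        rw [key]; push_cast
        field_simp
      rw [step, ih, Finset.prod_range_succ]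
      push_cast
      ring



lemma hasDerivAt_gamma_affine {a : ℝ} (ha : 0 < a + 1) :
    HasDerivAt (fun r : ℝ => Real.Gamma (a + r)) (deriv Real.Gamma (a + 1)) 1 := by
  have h := (hasDerivAt_Gamma_pos ha).comp 1 ((hasDerivAt_id (1:ℝ)).const_add a)
  simpa [Function.comp_def] using h

lemma gamma_nat_cast (j : ℕ) : Real.Gamma ((j:ℝ) + 1) = (j.factorial : ℝ) :=
  Real.Gamma_nat_eq_factorial j

lemma prod_neg_val (j : ℕ) :
    (∏ i ∈ Finset.range j, ((1:ℝ) - (((i:ℝ)+1) + 1))) = (-1)^j * (j.factorial : ℝ) := by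
  have h1 : ∀ i ∈ Finset.range j, (1:ℝ) - (((i:ℝ)+1)+1) = (-1) * ((i:ℝ)+1) := by
    intro i _; ring
  rw [Finset.prod_congr rfl h1, Finset.prod_mul_distrib, Finset.prod_const]
  have h2 : (∏ i ∈ Finset.range j, ((i:ℝ)+1)) = (j.factorial : ℝ) := by
    exact_mod_cast Finset.prod_range_add_one_eq_factorial j
  rw [h2, Finset.card_range]

lemma hasDerivAt_P_succ (j : ℕ) :
    HasDerivAt (fun r : ℝ => ∏ i ∈ Finset.range (j+1), (r - ((i:ℝ)+1)))
      ((-1:ℝ)^j * (j.factorial : ℝ)) 1 := by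
  have hrw : ∀ r : ℝ, (∏ i ∈ Finset.range (j+1), (r - ((i:ℝ)+1)))
      = (∏ i ∈ Finset.range j, (r - (((i:ℝ)+1)+1))) * (r - 1) := by
    intro r
    rw [Finset.prod_range_succ']
    push_cast
    norm_num
  have hQ : HasDerivAt (fun r : ℝ => ∏ i ∈ Finset.range j, (r - (((i:ℝ)+1)+1)))
      (deriv (fun r : ℝ => ∏ i ∈ Finset.range j, (r - (((i:ℝ)+1)+1))) 1) 1 := by
    refine (DifferentiableAt.fun_finsetProd fun i _ => ?_).hasDerivAt
    exact (differentiableAt_id.sub_const _)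
  have h := hQ.fun_mul ((hasDerivAt_id (1:ℝ)).sub_const 1)
  have h2 : HasDerivAt (fun r : ℝ => ∏ i ∈ Finset.range (j+1), (r - ((i:ℝ)+1)))
      (deriv (fun r : ℝ => ∏ i ∈ Finset.range j, (r - (((i:ℝ)+1)+1))) 1 * ((1:ℝ) - 1)
        + (∏ i ∈ Finset.range j, ((1:ℝ) - (((i:ℝ)+1)+1))) * 1) 1 := by
    simpa [hrw] using h
  convert h2 using 1
  rw [prod_neg_val j]
  ring

lemma term_hasDerivAt (m n k : ℕ) (hk : k < m) (hmn : m ≤ n) :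
    HasDerivAt (fun r : ℝ => (-1:ℝ)^k * Real.Gamma ((m:ℝ) + r - (k:ℝ)) *
        Real.Gamma ((n:ℝ) + r - (k:ℝ)) *
        ((∏ j ∈ Finset.range k, (r - ((j:ℝ)+1))) / Real.Gamma r) /
        ((k.factorial : ℝ) * Real.Gamma ((m:ℝ) - (k:ℝ)) * Real.Gamma ((n:ℝ) - (k:ℝ))))
      (if k = 0 then (m:ℝ) * (n:ℝ) * (deriv Real.Gamma 1 + Hsum m + Hsum n)
       else -(((m:ℝ) - (k:ℝ)) * ((n:ℝ) - (k:ℝ)) / (k:ℝ))) 1 := by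
  obtain ⟨a, rfl⟩ : ∃ a, m = k + a + 1 := ⟨m - k - 1, by omega⟩
  obtain ⟨b, rfl⟩ : ∃ b, n = k + b + 1 := ⟨n - k - 1, by omega⟩
  -- Gamma shifted factors
  have hma : HasDerivAt (fun r : ℝ => Real.Gamma (((k+a+1:ℕ):ℝ) + r - (k:ℝ)))
      (deriv Real.Gamma (((a:ℝ)+1) + 1)) 1 := by
    have h := hasDerivAt_gamma_affine (a := (a:ℝ)+1) (by positivity)
    refine h.congr_of_eventuallyEq (Filter.Eventually.of_forall fun r => ?_)
    push_cast; ring_nf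
  have hmb : HasDerivAt (fun r : ℝ => Real.Gamma (((k+b+1:ℕ):ℝ) + r - (k:ℝ)))
      (deriv Real.Gamma (((b:ℝ)+1) + 1)) 1 := by
    have h := hasDerivAt_gamma_affine (a := (b:ℝ)+1) (by positivity)
    refine h.congr_of_eventuallyEq (Filter.Eventually.of_forall fun r => ?_)
    push_cast; ring_nf
  have hΓ1 : HasDerivAt Real.Gamma (deriv Real.Gamma 1) 1 := hasDerivAt_Gamma_pos one_pos
  have hΓ1ne : Real.Gamma (1:ℝ) ≠ 0 := by rw [Real.Gamma_one]; norm_num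
  -- value lemmas
  have hva : Real.Gamma (((k+a+1:ℕ):ℝ) + 1 - (k:ℝ)) = ((a+1).factorial : ℝ) := by
    have : ((k+a+1:ℕ):ℝ) + 1 - (k:ℝ) = ((a+1:ℕ):ℝ) + 1 := by push_cast; ring
    rw [this, gamma_nat_cast]
  have hvb : Real.Gamma (((k+b+1:ℕ):ℝ) + 1 - (k:ℝ)) = ((b+1).factorial : ℝ) := by
    have : ((k+b+1:ℕ):ℝ) + 1 - (k:ℝ) = ((b+1:ℕ):ℝ) + 1 := by push_cast; ring
    rw [this, gamma_nat_cast]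
  have hga : Real.Gamma (((k+a+1:ℕ):ℝ) - (k:ℝ)) = (a.factorial : ℝ) := by
    have : ((k+a+1:ℕ):ℝ) - (k:ℝ) = ((a:ℕ):ℝ) + 1 := by push_cast; ring
    rw [this, gamma_nat_cast]
  have hgb : Real.Gamma (((k+b+1:ℕ):ℝ) - (k:ℝ)) = (b.factorial : ℝ) := by
    have : ((k+b+1:ℕ):ℝ) - (k:ℝ) = ((b:ℕ):ℝ) + 1 := by push_cast; ring
    rw [this, gamma_nat_cast]
  have hda : deriv Real.Gamma (((a:ℝ)+1) + 1)
      = ((a+1).factorial : ℝ) * (deriv Real.Gamma 1 + Hsum (a+1)) := by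
    have : ((a:ℝ)+1) + 1 = ((a+1:ℕ):ℝ) + 1 := by push_cast; ring
    rw [this, gamma_deriv_nat]
  have hdb : deriv Real.Gamma (((b:ℝ)+1) + 1)
      = ((b+1).factorial : ℝ) * (deriv Real.Gamma 1 + Hsum (b+1)) := by
    have : ((b:ℝ)+1) + 1 = ((b+1:ℕ):ℝ) + 1 := by push_cast; ring
    rw [this, gamma_deriv_nat]
  rcases Nat.eq_zero_or_pos k with rfl | hkpos
  · -- k = 0
    have hP : HasDerivAt (fun r : ℝ => ∏ j ∈ Finset.range 0, (r - ((j:ℝ)+1))) 0 1 := by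
      simpa using hasDerivAt_const (1:ℝ) (1:ℝ)
    have hdiv := hP.fun_div hΓ1 hΓ1ne
    have h := (((hma.const_mul ((-1:ℝ)^0)).fun_mul hmb).fun_mul hdiv).div_const
      (((0:ℕ).factorial : ℝ) * Real.Gamma (((0+a+1:ℕ):ℝ) - ((0:ℕ):ℝ)) *
        Real.Gamma (((0+b+1:ℕ):ℝ) - ((0:ℕ):ℝ)))
    rw [if_pos rfl]
    convert h using 1
    · rfl
    · rfl
    rw [hva, hvb, hga, hgb, hda, hdb]
    simp only [pow_zero, one_mul, Real.Gamma_one, Nat.factorial_zero,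
      Finset.prod_range_zero, Nat.cast_one]
    have hH1 : Hsum (0+a+1) = Hsum (a+1) := by norm_num
    have hH2 : Hsum (0+b+1) = Hsum (b+1) := by norm_num
    rw [hH1, hH2]
    have hfa : (0:ℝ) < (a.factorial : ℝ) := by positivity
    have hfb : (0:ℝ) < (b.factorial : ℝ) := by positivity
    push_cast [Nat.factorial_succ]
    field_simp
    ring
  · -- k ≥ 1
    obtain ⟨j, rfl⟩ : ∃ j, k = j + 1 := ⟨k - 1, by omega⟩
    have hP := hasDerivAt_P_succ j
    have hdiv := hP.fun_div hΓ1 hΓ1ne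
    have h := (((hma.const_mul ((-1:ℝ)^(j+1))).fun_mul hmb).fun_mul hdiv).div_const
      ((((j+1):ℕ).factorial : ℝ) * Real.Gamma (((j+1+a+1:ℕ):ℝ) - ((j+1:ℕ):ℝ)) *
        Real.Gamma (((j+1+b+1:ℕ):ℝ) - ((j+1:ℕ):ℝ)))
    rw [if_neg (Nat.succ_ne_zero j)]
    convert h using 1
    · rfl
    · rfl
    have hP1 : (∏ i ∈ Finset.range (j+1), ((1:ℝ) - ((i:ℝ)+1))) = 0 :=
      Finset.prod_eq_zero (Finset.mem_range.mpr (Nat.succ_pos j)) (by norm_num)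
    rw [hva, hvb, hga, hgb, hP1]
    simp only [Real.Gamma_one]
    have hsq : ((-1:ℝ))^j * (-1)^j = 1 := by
      rw [← pow_add]
      exact Even.neg_one_pow ⟨j, rfl⟩
    have hfa : (0:ℝ) < (a.factorial : ℝ) := by positivity
    have hfb : (0:ℝ) < (b.factorial : ℝ) := by positivity
    have hj1 : (0:ℝ) < ((j:ℝ) + 1) := by positivity
    push_cast [Nat.factorial_succ, pow_succ]
    field_simp
    linear_combination (((a:ℝ)+1) * (a.factorial:ℝ) * ((b:ℝ)+1) * (b.factorial:ℝ) * (j.factorial:ℝ)) * hsq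



lemma sum_aux (M Nv : ℝ) (j : ℕ) :
    ∑ k ∈ Finset.range j, ((M - ((k:ℝ)+1)) * (Nv - ((k:ℝ)+1)) / ((k:ℝ)+1))
      = M * Nv * Hsum j - (M + Nv) * (j:ℝ) + (j:ℝ) * ((j:ℝ)+1) / 2 := by
  induction j with
  | zero => simp [Hsum]
  | succ j ih =>
    rw [Finset.sum_range_succ, ih]
    have hH : Hsum (j+1) = Hsum j + 1/((j:ℝ)+1) := by simp [Hsum, Finset.sum_range_succ]
    rw [hH]
    have hne : ((j:ℝ)+1) ≠ 0 := by positivity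
    push_cast
    field_simp
    ring

lemma harmonic_Icc (n N : ℕ) (h : n ≤ N) :
    ∑ k ∈ Finset.Icc (n+1) N, (1:ℝ) / (k:ℝ) = Hsum N - Hsum n := by
  induction N, h using Nat.le_induction with
  | base => rw [Finset.Icc_eq_empty (by omega)]; simp
  | succ N hN ih =>
    rw [Finset.sum_Icc_succ_top (by omega), ih]
    have : Hsum (N+1) = Hsum N + 1/((N:ℝ)+1) := by simp [Hsum, Finset.sum_range_succ]
    rw [this]
    push_cast
    ring

lemma gamma_nat_pos_cast (j : ℕ) (h : 1 ≤ j) :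
    Real.Gamma ((j:ℝ)) = ((j-1).factorial : ℝ) := by
  obtain ⟨i, rfl⟩ : ∃ i, j = i + 1 := ⟨j - 1, by omega⟩
  have : ((i+1:ℕ):ℝ) = (i:ℝ) + 1 := by push_cast; ring
  rw [this, Real.Gamma_nat_eq_factorial]
  simp

lemma term_val_sum (m n : ℕ) (hm : 1 ≤ m) (hmn : m ≤ n) :
    (∑ k ∈ Finset.range m, ((-1:ℝ)^k * Real.Gamma ((m:ℝ) + 1 - (k:ℝ)) *
        Real.Gamma ((n:ℝ) + 1 - (k:ℝ)) *
        ((∏ j ∈ Finset.range k, ((1:ℝ) - ((j:ℝ)+1))) / Real.Gamma 1) /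
        ((k.factorial : ℝ) * Real.Gamma ((m:ℝ) - (k:ℝ)) * Real.Gamma ((n:ℝ) - (k:ℝ)))))
      = (m:ℝ) * (n:ℝ) := by
  rw [Finset.sum_eq_single 0]
  · have hm' : Real.Gamma ((m:ℝ) + 1 - ((0:ℕ):ℝ)) = (m.factorial : ℝ) := by
      simp only [Nat.cast_zero, sub_zero]
      exact Real.Gamma_nat_eq_factorial m
    have hn' : Real.Gamma ((n:ℝ) + 1 - ((0:ℕ):ℝ)) = (n.factorial : ℝ) := by
      simp only [Nat.cast_zero, sub_zero]
      exact Real.Gamma_nat_eq_factorial n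
    have hgm : Real.Gamma ((m:ℝ) - ((0:ℕ):ℝ)) = ((m-1).factorial : ℝ) := by
      simp only [Nat.cast_zero, sub_zero]; exact gamma_nat_pos_cast m hm
    have hgn : Real.Gamma ((n:ℝ) - ((0:ℕ):ℝ)) = ((n-1).factorial : ℝ) := by
      simp only [Nat.cast_zero, sub_zero]; exact gamma_nat_pos_cast n (le_trans hm hmn)
    rw [hm', hn', hgm, hgn]
    simp only [pow_zero, one_mul, Real.Gamma_one, Finset.prod_range_zero,
      Nat.factorial_zero, Nat.cast_one]
    obtain ⟨a, rfl⟩ : ∃ a, m = a + 1 := ⟨m - 1, by omega⟩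
    obtain ⟨b, rfl⟩ : ∃ b, n = b + 1 := ⟨n - 1, by omega⟩
    simp only [Nat.add_sub_cancel]
    have ha : (0:ℝ) < (a.factorial:ℝ) := by positivity
    have hb : (0:ℝ) < (b.factorial:ℝ) := by positivity
    push_cast [Nat.factorial_succ]
    field_simp
  · intro k hk hk0
    obtain ⟨j, rfl⟩ : ∃ j, k = j + 1 := ⟨k - 1, by omega⟩
    have hP1 : (∏ i ∈ Finset.range (j+1), ((1:ℝ) - ((i:ℝ)+1))) = 0 :=
      Finset.prod_eq_zero (Finset.mem_range.mpr (Nat.succ_pos j)) (by norm_num)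
    rw [hP1]
    simp
  · intro h
    exact absurd (Finset.mem_range.mpr (by omega)) h

lemma Tsum_eval (m n : ℕ) (hm : 1 ≤ m) (c : ℝ) :
    (∑ i ∈ Finset.range m, if i = 0 then (m:ℝ) * (n:ℝ) * (c + Hsum m + Hsum n)
        else -(((m:ℝ) - (i:ℝ)) * ((n:ℝ) - (i:ℝ)) / (i:ℝ)))
      = (m:ℝ) * (n:ℝ) * (c + Hsum m + Hsum n)
        - ((m:ℝ) * (n:ℝ) * (Hsum m - 1/(m:ℝ)) - ((m:ℝ) + (n:ℝ)) * ((m:ℝ) - 1)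
            + ((m:ℝ) - 1) * (m:ℝ) / 2) := by
  obtain ⟨j, rfl⟩ : ∃ j, m = j + 1 := ⟨m - 1, by omega⟩
  rw [Finset.sum_range_succ']
  have h1 : (∑ k ∈ Finset.range j,
      if k + 1 = 0 then (((j+1:ℕ)):ℝ) * (n:ℝ) * (c + Hsum (j+1) + Hsum n)
      else -((((j+1:ℕ):ℝ) - ((k+1:ℕ):ℝ)) * ((n:ℝ) - ((k+1:ℕ):ℝ)) / ((k+1:ℕ):ℝ)))
      = -∑ k ∈ Finset.range j,
          (((((j:ℝ)+1)) - ((k:ℝ)+1)) * ((n:ℝ) - ((k:ℝ)+1)) / ((k:ℝ)+1)) := by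
    rw [← Finset.sum_neg_distrib]
    refine Finset.sum_congr rfl fun k _ => ?_
    rw [if_neg (Nat.succ_ne_zero k)]
    push_cast
    ring
  rw [h1, sum_aux ((j:ℝ)+1) (n:ℝ) j, if_pos rfl]
  have hH : Hsum (j+1) = Hsum j + 1/((j:ℝ)+1) := by simp [Hsum, Finset.sum_range_succ]
  rw [hH]
  have hne : ((j:ℝ)+1) ≠ 0 := by positivity
  push_cast
  field_simp
  ring


/-- Appendix 1 (re-derivation of Page's formula): for integers `1 ≤ m ≤ n`, if `f` is
defined for `r` near `1` by
`f(r) = (Γ(mn)/(r·Γ(mn+r)))·∑_{k=0}^{m−1} (−1)^k Γ(m+r−k)Γ(n+r−k)·(1/Γ(r−k))/(k!·Γ(m−k)·Γ(n−k))`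
(with `1/Γ = 0` at nonpositive integers, as holds for Mathlib's `Real.Gamma`), then `f`
is differentiable at `r = 1` and `−f′(1) = ∑_{k=n+1}^{mn} 1/k − (m−1)/(2n)`. -/
theorem page_entropy_from_trace_powers (m n : ℕ) (hm : 1 ≤ m) (hmn : m ≤ n)
    (f : ℝ → ℝ)
    (hf : ∀ᶠ r in nhds (1 : ℝ), f r =
      (Real.Gamma ((m * n : ℕ) : ℝ) / (r * Real.Gamma (((m * n : ℕ) : ℝ) + r))) *
        ∑ k ∈ Finset.range m,
          (-1 : ℝ) ^ k * Real.Gamma ((m : ℝ) + r - (k : ℝ)) *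
            Real.Gamma ((n : ℝ) + r - (k : ℝ)) * (1 / Real.Gamma (r - (k : ℝ))) /
            ((k.factorial : ℝ) * Real.Gamma ((m : ℝ) - (k : ℝ)) *
              Real.Gamma ((n : ℝ) - (k : ℝ)))) :
    ∃ d : ℝ, HasDerivAt f d 1 ∧
      -d = (∑ k ∈ Finset.Icc (n + 1) (m * n), (1 : ℝ) / (k : ℝ)) -
        ((m : ℝ) - 1) / (2 * (n : ℝ)) := by
  classical
  have hterm : ∀ k ∈ Finset.range m, HasDerivAt
      (fun r : ℝ => (-1:ℝ)^k * Real.Gamma ((m:ℝ) + r - (k:ℝ)) *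
        Real.Gamma ((n:ℝ) + r - (k:ℝ)) *
        ((∏ j ∈ Finset.range k, (r - ((j:ℝ)+1))) / Real.Gamma r) /
        ((k.factorial : ℝ) * Real.Gamma ((m:ℝ) - (k:ℝ)) * Real.Gamma ((n:ℝ) - (k:ℝ))))
      (if k = 0 then (m:ℝ) * (n:ℝ) * (deriv Real.Gamma 1 + Hsum m + Hsum n)
       else -(((m:ℝ) - (k:ℝ)) * ((n:ℝ) - (k:ℝ)) / (k:ℝ))) 1 :=
    fun k hk => term_hasDerivAt m n k (Finset.mem_range.mp hk) hmn
  have hS := HasDerivAt.fun_sum hterm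
  have hNpos : (0:ℝ) < ((m*n:ℕ):ℝ) + 1 := by positivity
  have hden : HasDerivAt (fun r : ℝ => r * Real.Gamma (((m*n:ℕ):ℝ) + r))
      (Real.Gamma (((m*n:ℕ):ℝ) + 1) + deriv Real.Gamma (((m*n:ℕ):ℝ) + 1)) 1 := by
    have h := (hasDerivAt_id (1:ℝ)).fun_mul (hasDerivAt_gamma_affine (a := ((m*n:ℕ):ℝ)) hNpos)
    simpa using h
  have hdenne : (1:ℝ) * Real.Gamma (((m*n:ℕ):ℝ) + 1) ≠ 0 := by
    rw [one_mul]
    exact ne_of_gt (Real.Gamma_pos_of_pos hNpos)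
  have hA := (hasDerivAt_const (1:ℝ) (Real.Gamma ((m*n:ℕ):ℝ))).fun_div hden hdenne
  have hg := hA.fun_mul hS
  have hball : ∀ᶠ r : ℝ in nhds 1, 1/2 < r ∧ r < 3/2 := by
    filter_upwards [Ioo_mem_nhds (by norm_num : (1/2:ℝ) < 1) (by norm_num : (1:ℝ) < 3/2)]
      with r hr
    exact ⟨hr.1, hr.2⟩
  have hfg : f =ᶠ[nhds 1] (fun r => (fun _ : ℝ => Real.Gamma ((m*n:ℕ):ℝ)) r /
      (fun r : ℝ => r * Real.Gamma (((m*n:ℕ):ℝ) + r)) r *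
      ∑ k ∈ Finset.range m, (-1:ℝ)^k * Real.Gamma ((m:ℝ) + r - (k:ℝ)) *
        Real.Gamma ((n:ℝ) + r - (k:ℝ)) *
        ((∏ j ∈ Finset.range k, (r - ((j:ℝ)+1))) / Real.Gamma r) /
        ((k.factorial : ℝ) * Real.Gamma ((m:ℝ) - (k:ℝ)) * Real.Gamma ((n:ℝ) - (k:ℝ)))) := by
    filter_upwards [hf, hball] with r hfr hr
    rw [hfr]
    congr 1
    refine Finset.sum_congr rfl fun k _ => ?_
    rw [one_div_gamma_eq hr.1 hr.2 k]
  refine ⟨_, hg.congr_of_eventuallyEq hfg, ?_⟩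
  rw [term_val_sum m n hm hmn]
  rw [Tsum_eval m n hm (deriv Real.Gamma 1)]
  have hn1 : 1 ≤ n := le_trans hm hmn
  have hmn1 : 1 ≤ m * n := Nat.one_le_iff_ne_zero.mpr (by positivity)
  rw [harmonic_Icc n (m*n) (le_mul_of_one_le_left (Nat.zero_le n) hm)]
  rw [gamma_nat_pos_cast (m*n) hmn1, Real.Gamma_nat_eq_factorial (m*n),
    gamma_deriv_nat (m*n)]
  have hfact : ((m*n).factorial : ℝ) = ((m*n:ℕ):ℝ) * (((m*n-1).factorial : ℝ)) := by
    rw [← Nat.cast_mul, Nat.mul_factorial_pred (by omega)]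
  rw [hfact]
  have hmpos : (0:ℝ) < (m:ℝ) := by exact_mod_cast hm
  have hnpos : (0:ℝ) < (n:ℝ) := by exact_mod_cast hn1
  have hfpos : (0:ℝ) < (((m*n-1).factorial : ℕ):ℝ) := by positivity
  push_cast
  field_simp
  ring
end

section
/- For every positive integer k, the function r ↦ Γ′(r−k)/(Γ(r−k))^2 (i.e. ψ(r−k)/Γ(r−k), where ψ = Γ′/Γ is the digamma function) tends to (−1)^k·(k−1)! as r → 1 with r ≠ 1. -/
open Filter Finset

/-- The Gamma recurrence iterated `k` times. -/
lemma gamma_rec (k : ℕ) : ∀ x : ℝ, (∀ j < k, x + j ≠ 0) →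
    Real.Gamma (x + k) = (∏ j ∈ Finset.range k, (x + j)) * Real.Gamma x := by
  induction k with
  | zero => intro x _; simp
  | succ n ih =>
    intro x hx
    have h1 : Real.Gamma (x + (n + 1 : ℕ)) = (x + n) * Real.Gamma (x + n) := by
      have : (x + (n + 1 : ℕ) : ℝ) = (x + n) + 1 := by push_cast; ring
      rw [this, Real.Gamma_add_one (hx n (Nat.lt_succ_self n))]
    rw [h1, ih x (fun j hj => hx j (hj.trans (Nat.lt_succ_self n))), Finset.prod_range_succ]
    ring

/-- Product formula: `∏_{j<n} (j - n) = (-1)^n n!`. -/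
lemma prod_sub_nat (n : ℕ) :
    ∏ j ∈ Finset.range n, ((j : ℝ) - n) = (-1) ^ n * n.factorial := by
  have h1 : ∏ j ∈ Finset.range n, ((j : ℝ) - n)
      = ∏ j ∈ Finset.range n, ((-1 : ℝ) * ((n : ℝ) - j)) :=
    Finset.prod_congr rfl fun j _ => by ring
  have h2 : ∏ j ∈ Finset.range n, ((n : ℝ) - j) = (n.factorial : ℝ) := by
    have : ∏ j ∈ Finset.range n, ((n : ℝ) - j)
        = ((∏ j ∈ Finset.range n, (n - j) : ℕ) : ℝ) := by
      rw [Nat.cast_prod]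
      exact Finset.prod_congr rfl fun j hj =>
        (Nat.cast_sub (Finset.mem_range.mp hj).le).symm
    rw [this, ← Nat.descFactorial_eq_prod_range, Nat.descFactorial_self]
  rw [h1, Finset.prod_mul_distrib, Finset.prod_const, h2, Finset.card_range]

/-- On positive reals, the derivative of the real Gamma function is the real part of the
derivative of the complex Gamma function. -/
lemma deriv_realGamma_eq {s : ℝ} (hs : ∀ m : ℕ, s ≠ -m) :
    deriv Real.Gamma s = (deriv Complex.Gamma s).re := by
  have hs' : ∀ m : ℕ, (s : ℂ) ≠ -m := by
    intro m h
    exact hs m (by exact_mod_cast h)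
  exact ((Complex.differentiableAt_Gamma _ hs').hasDerivAt.real_of_complex).deriv

/-- `deriv Real.Gamma` is continuous at `1`. -/
lemma continuousAt_deriv_realGamma : ContinuousAt (deriv Real.Gamma) 1 := by
  -- complex Gamma is analytic on the ball of radius 1/2 around 1
  have hopen : IsOpen (Metric.ball (1 : ℂ) (1 / 2)) := Metric.isOpen_ball
  have hdiff : DifferentiableOn ℂ Complex.Gamma (Metric.ball (1 : ℂ) (1 / 2)) := by
    intro s hs
    refine (Complex.differentiableAt_Gamma s fun m => ?_).differentiableWithinAt
    intro h
    have hre : (1 / 2 : ℝ) < s.re := by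
      have := Complex.abs_re_le_norm (s - 1)
      have hd := Metric.mem_ball.mp hs
      rw [Complex.dist_eq] at hd
      have : |s.re - 1| < 1 / 2 := lt_of_le_of_lt (by
        simpa using Complex.abs_re_le_norm (s - 1)) hd
      cases abs_lt.mp this with
      | intro h1 h2 => linarith
    rw [h] at hre
    simp only [Complex.neg_re, Complex.natCast_re] at hre
    have : (0:ℝ) ≤ (m:ℝ) := Nat.cast_nonneg m
    linarith
  have hana : AnalyticOnNhd ℂ Complex.Gamma (Metric.ball (1 : ℂ) (1 / 2)) :=
    hdiff.analyticOnNhd hopen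
  have hderiv : AnalyticOnNhd ℂ (deriv Complex.Gamma) (Metric.ball (1 : ℂ) (1 / 2)) :=
    hana.deriv
  have hc : ContinuousAt (deriv Complex.Gamma) 1 :=
    (hderiv 1 (by norm_num [Metric.mem_ball])).continuousAt
  -- transfer to ℝ
  have hc2 : ContinuousAt (fun r : ℝ => (deriv Complex.Gamma r).re) 1 := by
    have h1 : ContinuousAt (fun r : ℝ => (r : ℂ)) 1 := Complex.continuous_ofReal.continuousAt
    have hc' : ContinuousAt (deriv Complex.Gamma) ((1 : ℝ) : ℂ) := by simpa using hc
    exact Complex.continuous_re.continuousAt.comp (hc'.comp h1)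
  refine hc2.congr ?_
  have hmem : Set.Ioi (0:ℝ) ∈ nhds (1:ℝ) := Ioi_mem_nhds one_pos
  filter_upwards [hmem] with r hr
  refine (deriv_realGamma_eq fun m h => ?_).symm
  have : (0:ℝ) < r := hr
  have : (0:ℝ) ≤ (m:ℝ) := Nat.cast_nonneg m
  linarith [h ▸ ‹(0:ℝ) < r›]

/-- Key limit in Appendix 1: for a positive integer `k`, `ψ(r−k)/Γ(r−k) = Γ′(r−k)/Γ(r−k)²`
tends to `(−1)^k·(k−1)!` as `r → 1`, `r ≠ 1`. -/
theorem digamma_over_gamma_limit (k : ℕ) (hk : 1 ≤ k) :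
    Filter.Tendsto
      (fun r : ℝ => deriv Real.Gamma (r - (k : ℝ)) / (Real.Gamma (r - (k : ℝ))) ^ 2)
      (nhdsWithin 1 {(1 : ℝ)}ᶜ)
      (nhds ((-1 : ℝ) ^ k * ((k - 1).factorial : ℝ))) := by
  classical
  set P : ℝ → ℝ := fun x => ∏ j ∈ Finset.range k, (x + j) with hP
  set S : ℝ → ℝ := fun x => ∑ i ∈ Finset.range k,
      ∏ j ∈ (Finset.range k).erase i, (x + j) with hS
  -- P has derivative S everywhere
  have hPderiv : ∀ x : ℝ, HasDerivAt P (S x) x := by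
    intro x
    have h := HasDerivAt.fun_finsetProd (u := Finset.range k)
      (f := fun i : ℕ => fun y : ℝ => y + i) (f' := fun _ => (1:ℝ)) (x := x)
      (fun i _ => (hasDerivAt_id x).add_const (i:ℝ))
    simpa [P, S, smul_eq_mul] using h
  -- nonvanishing of factors on the punctured neighborhood
  have hfac : ∀ r : ℝ, r ∈ Set.Ioo (0:ℝ) 2 → r ≠ 1 → ∀ j < k, (r - k + j : ℝ) ≠ 0 := by
    intro r hr hr1 j hj h0
    have hcast : ((k - j : ℕ) : ℝ) = r := by
      rw [Nat.cast_sub hj.le]; linarith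
    have h1 : 0 < k - j := Nat.sub_pos_of_lt hj
    have h2 : k - j < 2 := by
      by_contra h
      push_neg at h
      have : (2:ℝ) ≤ ((k - j : ℕ) : ℝ) := by exact_mod_cast h
      rw [hcast] at this; exact absurd hr.2 (not_lt.mpr this)
    have : k - j = 1 := by omega
    rw [this] at hcast
    exact hr1 (by exact_mod_cast hcast.symm)
  -- the key eventual equality
  have heq : ∀ᶠ r in nhdsWithin (1:ℝ) {(1:ℝ)}ᶜ,
      deriv Real.Gamma (r - (k : ℝ)) / (Real.Gamma (r - (k : ℝ))) ^ 2
        = (deriv Real.Gamma r * P (r - k) - Real.Gamma r * S (r - k)) / (Real.Gamma r) ^ 2 := by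
    have hmem : Set.Ioo (0:ℝ) 2 ∈ nhdsWithin (1:ℝ) {(1:ℝ)}ᶜ :=
      nhdsWithin_le_nhds (Ioo_mem_nhds one_pos one_lt_two)
    filter_upwards [hmem, self_mem_nhdsWithin] with r hr hr1
    have hr1 : r ≠ 1 := hr1
    set x := r - (k:ℝ) with hx
    have hxk : x + k = r := by simp [hx]
    have hne : ∀ j < k, x + (j:ℝ) ≠ 0 := fun j hj => hfac r hr hr1 j hj
    have hΓr_ne : Real.Gamma r ≠ 0 := by
      refine Real.Gamma_ne_zero fun m h => ?_
      have : (0:ℝ) ≤ (m:ℝ) := Nat.cast_nonneg m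
      have := hr.1; rw [h] at this; linarith
    have hrec : Real.Gamma r = P x * Real.Gamma x := by
      rw [← hxk]; exact gamma_rec k x hne
    have hP_ne : P x ≠ 0 :=
      Finset.prod_ne_zero_iff.mpr fun j hj => hne j (Finset.mem_range.mp hj)
    have hΓx_ne : Real.Gamma x ≠ 0 := by
      intro h; rw [hrec, h, mul_zero] at hΓr_ne; exact hΓr_ne rfl
    -- Γ agrees with Γ(·+k)/P on an open set around x
    have hV : IsOpen {y : ℝ | y + k ∈ Set.Ioo (0:ℝ) 2 ∧ y + k ≠ 1} := by
      have : Continuous fun y : ℝ => y + (k:ℝ) := continuous_id.add continuous_const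
      exact (isOpen_Ioo.preimage this).inter ((isOpen_compl_singleton).preimage this)
    have hxV : x ∈ {y : ℝ | y + k ∈ Set.Ioo (0:ℝ) 2 ∧ y + k ≠ 1} := by
      constructor <;> rw [hxk]
      · exact hr
      · exact hr1
    have hagree : ∀ y ∈ {y : ℝ | y + k ∈ Set.Ioo (0:ℝ) 2 ∧ y + k ≠ 1},
        Real.Gamma y = Real.Gamma (y + k) / P y := by
      intro y hy
      have hne' : ∀ j < k, y + (j:ℝ) ≠ 0 := by
        intro j hj
        have := hfac (y + k) hy.1 hy.2 j hj
        simpa [add_sub_cancel_right] using this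
      have hPy : P y ≠ 0 :=
        Finset.prod_ne_zero_iff.mpr fun j hj => hne' j (Finset.mem_range.mp hj)
      rw [gamma_rec k y hne', mul_comm, mul_div_assoc, div_self hPy, mul_one]
    -- derivative of Γ at r (needed for the chain rule)
    have hΓr_diff : DifferentiableAt ℝ Real.Gamma r := by
      refine Real.differentiableAt_Gamma fun m h => ?_
      have : (0:ℝ) ≤ (m:ℝ) := Nat.cast_nonneg m
      have := hr.1; rw [h] at this; linarith
    have hcomp : HasDerivAt (fun y : ℝ => Real.Gamma (y + k)) (deriv Real.Gamma r) x := by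
      have h1 : HasDerivAt (fun y : ℝ => y + (k:ℝ)) 1 x := (hasDerivAt_id x).add_const _
      have h2 : HasDerivAt Real.Gamma (deriv Real.Gamma r) (x + k) := by
        rw [hxk]; exact hΓr_diff.hasDerivAt
      have h3 := h2.comp x h1
      simp only [mul_one] at h3
      exact h3
    have hF : HasDerivAt (fun y : ℝ => Real.Gamma (y + k) / P y)
        ((deriv Real.Gamma r * P x - Real.Gamma (x + k) * S x) / (P x) ^ 2) x :=
      hcomp.div (hPderiv x) hP_ne
    have hD : HasDerivAt Real.Gamma
        ((deriv Real.Gamma r * P x - Real.Gamma (x + k) * S x) / (P x) ^ 2) x := by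
      refine hF.congr_of_eventuallyEq ?_
      filter_upwards [hV.mem_nhds hxV] with y hy
      exact hagree y hy
    rw [hD.deriv, hxk]
    have hΓx : Real.Gamma x = Real.Gamma r / P x := by
      rw [hrec]; field_simp
    rw [hΓx]
    field_simp
    try ring
  -- limit of the right-hand side by continuity
  obtain ⟨n, rfl⟩ : ∃ n, k = n + 1 := ⟨k - 1, (Nat.succ_pred_eq_of_pos hk).symm⟩
  have hPcont : Continuous P :=
    continuous_finset_prod _ fun i _ => continuous_id.add continuous_const
  have hScont : Continuous S :=
    continuous_finset_sum _ fun i _ =>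
      continuous_finset_prod _ fun j _ => continuous_id.add continuous_const
  have hΓcont : ContinuousAt Real.Gamma 1 :=
    (Real.differentiableAt_Gamma fun m h => by
      have : (0:ℝ) ≤ (m:ℝ) := Nat.cast_nonneg m
      linarith [h]).continuousAt
  have hsub : ContinuousAt (fun r : ℝ => r - ((n+1:ℕ):ℝ)) 1 :=
    (continuous_id.sub continuous_const).continuousAt
  have hP0 : P (1 - ((n+1:ℕ):ℝ)) = 0 := by
    refine Finset.prod_eq_zero (Finset.self_mem_range_succ n) ?_
    push_cast; ring
  have hS0 : S (1 - ((n+1:ℕ):ℝ)) = (-1:ℝ) ^ n * n.factorial := by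
    simp only [hS]
    rw [Finset.sum_eq_single n]
    · rw [Finset.range_add_one, Finset.erase_insert Finset.notMem_range_self]
      have : ∀ j ∈ Finset.range n, (1 - ((n+1:ℕ):ℝ)) + j = (j:ℝ) - n := by
        intro j _; push_cast; ring
      rw [Finset.prod_congr rfl this, prod_sub_nat]
    · intro i hi hin
      refine Finset.prod_eq_zero (Finset.mem_erase.mpr ⟨hin.symm, Finset.self_mem_range_succ n⟩) ?_
      push_cast; ring
    · intro h
      exact absurd (Finset.self_mem_range_succ n) h
  have hlim : Filter.Tendsto
      (fun r : ℝ => (deriv Real.Gamma r * P (r - ((n+1:ℕ):ℝ))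
        - Real.Gamma r * S (r - ((n+1:ℕ):ℝ))) / (Real.Gamma r) ^ 2)
      (nhdsWithin 1 {(1:ℝ)}ᶜ)
      (nhds ((-1 : ℝ) ^ (n+1) * (((n+1) - 1).factorial : ℝ))) := by
    have hcont : ContinuousAt (fun r : ℝ => (deriv Real.Gamma r * P (r - ((n+1:ℕ):ℝ))
        - Real.Gamma r * S (r - ((n+1:ℕ):ℝ))) / (Real.Gamma r) ^ 2) 1 := by
      refine ContinuousAt.div ?_ (hΓcont.pow 2) (by simp [Real.Gamma_one])
      exact (continuousAt_deriv_realGamma.mul (hPcont.continuousAt.comp hsub)).sub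
        (hΓcont.mul (hScont.continuousAt.comp hsub))
    have hval : (deriv Real.Gamma 1 * P ((1:ℝ) - ((n+1:ℕ):ℝ))
        - Real.Gamma 1 * S ((1:ℝ) - ((n+1:ℕ):ℝ))) / (Real.Gamma 1) ^ 2
        = (-1 : ℝ) ^ (n+1) * (((n+1) - 1).factorial : ℝ) := by
      rw [Real.Gamma_one, hP0, hS0]
      simp [pow_succ]
      try ring
    rw [← hval]
    exact hcont.tendsto.mono_left nhdsWithin_le_nhds
  have heq' : (fun r : ℝ => deriv Real.Gamma (r - ((n+1:ℕ):ℝ)) / (Real.Gamma (r - ((n+1:ℕ):ℝ))) ^ 2)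
      =ᶠ[nhdsWithin (1:ℝ) {(1:ℝ)}ᶜ]
      (fun r : ℝ => (deriv Real.Gamma r * P (r - ((n+1:ℕ):ℝ))
        - Real.Gamma r * S (r - ((n+1:ℕ):ℝ))) / (Real.Gamma r) ^ 2) := heq
  exact hlim.congr' heq'.symm
end

section
/- For every integer m ≥ 1 there exists a constant K > 0 such that for every integer n ≥ 1, |H_{mn} − H_n − (m−1)/(2n) − ln m + (m^2−1)/(2mn)| ≤ K/n^2; that is, the mean entropy ⟨S_{m,n}⟩ = H_{mn} − H_n − (m−1)/(2n) satisfies ⟨S_{m,n}⟩ = ln m − (m^2−1)/(2mn) + O(1/n^2) as n → ∞. -/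
/-- The `n`-th harmonic number `H_n = ∑_{k=1}^n 1/k`. -/
noncomputable def harmonicNum (n : ℕ) : ℝ := ∑ k ∈ Finset.range n, (1 : ℝ) / ((k : ℝ) + 1)

private lemma log_one_add_sub {y : ℝ} (h0 : 0 < y) (h1 : y ≤ 1/2) :
    |Real.log (1 + y) - y| ≤ 2 * y ^ 2 := by
  have hx : |(-y)| < 1 := by rw [abs_neg, abs_of_pos h0]; linarith
  have := Real.abs_log_sub_add_sum_range_le hx 1
  simp only [Finset.sum_range_one, pow_one, Nat.cast_zero, zero_add, div_one, abs_neg,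
    abs_of_pos h0, sub_neg_eq_add] at this
  have h2 : y ^ 2 / (1 - y) ≤ 2 * y ^ 2 := by
    rw [div_le_iff₀ (by linarith)]
    nlinarith [sq_nonneg y]
  calc |Real.log (1 + y) - y| = |(-y) + Real.log (1 + y)| := by ring_nf
    _ ≤ y ^ 2 / (1 - y) := this
    _ ≤ 2 * y ^ 2 := h2

private lemma atanh_bound {x : ℝ} (h0 : 0 < x) (h1 : x ≤ 1/4) :
    |Real.log (1 + x) - Real.log (1 - x) - 2 * x| ≤ (4/3) * x ^ 3 := by
  have hx1 : |x| < 1 := by rw [abs_of_pos h0]; linarith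
  have hx2 : |(-x)| < 1 := by rwa [abs_neg]
  have hI := Real.abs_log_sub_add_sum_range_le hx1 3
  have hII := Real.abs_log_sub_add_sum_range_le hx2 3
  rw [abs_of_pos h0] at hI
  rw [abs_neg, abs_of_pos h0] at hII
  simp only [Finset.sum_range_succ, Finset.sum_range_zero] at hI hII
  have e1 : (1 : ℝ) - -x = 1 + x := by ring
  rw [e1] at hII
  push_cast at hI hII
  norm_num at hI hII
  have hd : x ^ 4 / (1 - x) ≤ (1/3) * x ^ 3 := by
    rw [div_le_iff₀ (by linarith)]
    nlinarith [pow_pos h0 3, pow_pos h0 4]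
  have key : Real.log (1 + x) - Real.log (1 - x) - 2 * x - (2/3) * x ^ 3 =
      (-x + x ^ 2 / 2 + (-x) ^ 3 / 3 + Real.log (1 + x))
      - (x + x ^ 2 / 2 + x ^ 3 / 3 + Real.log (1 - x)) := by
    ring
  calc |Real.log (1 + x) - Real.log (1 - x) - 2 * x|
      ≤ |Real.log (1 + x) - Real.log (1 - x) - 2 * x - (2/3) * x ^ 3| + |(2/3) * x ^ 3| := by
        calc |Real.log (1 + x) - Real.log (1 - x) - 2 * x|
            = |(Real.log (1 + x) - Real.log (1 - x) - 2 * x - (2/3) * x ^ 3) + (2/3) * x ^ 3| := by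
              ring_nf
          _ ≤ _ := abs_add_le _ _
    _ ≤ (x ^ 4 / (1 - x) + x ^ 4 / (1 - x)) + (2/3) * x ^ 3 := by
        gcongr ?_ + ?_
        · rw [key]
          exact (abs_sub _ _).trans (add_le_add hII hI)
        · rw [abs_of_nonneg (by positivity)]
    _ ≤ ((1/3) * x ^ 3 + (1/3) * x ^ 3) + (2/3) * x ^ 3 := by gcongr
    _ = (4/3) * x ^ 3 := by ring

private lemma per_term {J : ℝ} (hJ : 2 ≤ J) :
    |1 / J - (Real.log (2 * J + 1) - Real.log (2 * J - 1))| ≤ 1 / (6 * J ^ 3) := by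
  set x : ℝ := 1 / (2 * J) with hx
  have hJ0 : (0:ℝ) < J := by linarith
  have hx0 : 0 < x := by positivity
  have hx1 : x ≤ 1/4 := by rw [hx, div_le_iff₀ (by linarith)]; linarith
  have h1 : Real.log (1 + x) = Real.log (2 * J + 1) - Real.log (2 * J) := by
    rw [← Real.log_div (by linarith) (by linarith)]
    congr 1
    rw [hx]; field_simp
  have h2 : Real.log (1 - x) = Real.log (2 * J - 1) - Real.log (2 * J) := by
    rw [← Real.log_div (by linarith) (by linarith)]
    congr 1
    rw [hx]; field_simp
  have h3 : 2 * x = 1 / J := by rw [hx]; field_simp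
  have := atanh_bound hx0 hx1
  rw [h1, h2, h3] at this
  have he : Real.log (2 * J + 1) - Real.log (2 * J) - (Real.log (2 * J - 1) - Real.log (2 * J)) -
      1 / J = -(1 / J - (Real.log (2 * J + 1) - Real.log (2 * J - 1))) := by ring
  rw [he, abs_neg] at this
  refine this.trans (le_of_eq ?_)
  rw [hx]
  field_simp
  ring

set_option maxHeartbeats 1000000 in
/-- Appendix 3: for every integer `m ≥ 1` there is `K > 0` such that for all `n ≥ 1`,
`|H_{mn} − H_n − (m−1)/(2n) − ln m + (m²−1)/(2mn)| ≤ K/n²`, i.e. the mean entropy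
`⟨S_{m,n}⟩ = H_{mn} − H_n − (m−1)/(2n)` equals `ln m − (m²−1)/(2mn) + O(1/n²)`. -/
theorem mean_entropy_asymptotic (m : ℕ) (hm : 1 ≤ m) :
    ∃ K : ℝ, 0 < K ∧ ∀ n : ℕ, 1 ≤ n →
      |harmonicNum (m * n) - harmonicNum n - ((m : ℝ) - 1) / (2 * (n : ℝ)) -
          Real.log (m : ℝ) + ((m : ℝ) ^ 2 - 1) / (2 * (m : ℝ) * (n : ℝ))| ≤
        K / (n : ℝ) ^ 2 := by
  refine ⟨(m : ℝ), Nat.cast_pos.mpr hm, fun n hn => ?_⟩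
  have hM : (1:ℝ) ≤ (m:ℝ) := by exact_mod_cast hm
  have hN : (1:ℝ) ≤ (n:ℝ) := by exact_mod_cast hn
  have hM0 : (0:ℝ) < m := by linarith
  have hN0 : (0:ℝ) < n := by linarith
  have hnmn : n ≤ m * n := Nat.le_mul_of_pos_left n hm
  set g : ℕ → ℝ := fun k => Real.log (2 * (k:ℝ) + 1) with hg
  -- step 1
  have step1 : harmonicNum (m * n) - harmonicNum n
      = ∑ k ∈ Finset.Ico n (m * n), 1 / ((k:ℝ) + 1) := by
    rw [harmonicNum, harmonicNum, eq_comm, Finset.sum_Ico_eq_sub _ hnmn]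
  -- step 2
  have step2 : ∑ k ∈ Finset.Ico n (m * n), (g (k + 1) - g k) = g (m * n) - g n := by
    rw [Finset.sum_Ico_eq_sub _ hnmn, Finset.sum_range_sub, Finset.sum_range_sub]
    ring
  -- step 3 : error sum bound
  have step3 : |∑ k ∈ Finset.Ico n (m * n), (1 / ((k:ℝ) + 1) - (g (k + 1) - g k))|
      ≤ ((m:ℝ) - 1) / (6 * (n:ℝ) ^ 2) := by
    have hb : ∀ k ∈ Finset.Ico n (m * n),
        |1 / ((k:ℝ) + 1) - (g (k + 1) - g k)| ≤ 1 / (6 * ((n:ℝ) + 1) ^ 3) := by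
      intro k hk
      have hkn : n ≤ k := (Finset.mem_Ico.mp hk).1
      have hkr : (n:ℝ) ≤ (k:ℝ) := by exact_mod_cast hkn
      have hJ : (2:ℝ) ≤ (k:ℝ) + 1 := by linarith
      have := per_term hJ
      have e1 : 2 * ((k:ℝ) + 1) + 1 = 2 * ((k:ℕ)+1 : ℕ) + 1 := by push_cast; ring
      have e2 : 2 * ((k:ℝ) + 1) - 1 = 2 * (k:ℝ) + 1 := by ring
      rw [e2] at this
      have e3 : g (k + 1) - g k = Real.log (2 * ((k:ℝ) + 1) + 1) - Real.log (2 * (k:ℝ) + 1) := by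
        simp only [hg]; push_cast; ring_nf
      rw [e3]
      refine this.trans ?_
      have : ((n:ℝ) + 1) ^ 3 ≤ ((k:ℝ) + 1) ^ 3 := by gcongr
      rw [div_le_div_iff₀ (by positivity) (by positivity)]
      linarith
    calc |∑ k ∈ Finset.Ico n (m * n), (1 / ((k:ℝ) + 1) - (g (k + 1) - g k))|
        ≤ ∑ k ∈ Finset.Ico n (m * n), |1 / ((k:ℝ) + 1) - (g (k + 1) - g k)| :=
          Finset.abs_sum_le_sum_abs _ _
      _ ≤ (Finset.Ico n (m * n)).card • (1 / (6 * ((n:ℝ) + 1) ^ 3)) :=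
          Finset.sum_le_card_nsmul _ _ _ hb
      _ = ((m:ℝ) * n - n) * (1 / (6 * ((n:ℝ) + 1) ^ 3)) := by
          rw [Nat.card_Ico, nsmul_eq_mul, Nat.cast_sub hnmn]
          push_cast
          ring
      _ ≤ ((m:ℝ) - 1) / (6 * (n:ℝ) ^ 2) := by
          rw [mul_one_div, div_le_div_iff₀ (by positivity) (by positivity)]
          have h1 : ((m:ℝ) * n - n) = ((m:ℝ) - 1) * n := by ring
          have h2 : (n:ℝ) ^ 2 * (n:ℝ) ≤ ((n:ℝ)+1) ^ 3 := by nlinarith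
          nlinarith [sub_nonneg.mpr hM]
  -- step 4
  set a : ℝ := 1 / (2 * (m:ℝ) * (n:ℝ)) with ha
  set b : ℝ := 1 / (2 * (n:ℝ)) with hb
  have ha0 : 0 < a := by positivity
  have hb0 : 0 < b := by positivity
  have ha1 : a ≤ 1/2 := by rw [ha, div_le_div_iff₀ (by positivity) (by norm_num)]; nlinarith
  have hb1 : b ≤ 1/2 := by rw [hb, div_le_div_iff₀ (by positivity) (by norm_num)]; linarith
  have hapos : (0:ℝ) < 1 + a := by linarith
  have hbpos : (0:ℝ) < 1 + b := by linarith
  have step4 : g (m * n) - g n = Real.log (m:ℝ) + Real.log (1 + a) - Real.log (1 + b) := by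
    have e1 : 2 * ((m * n : ℕ):ℝ) + 1 = (m:ℝ) * (2 * (n:ℝ)) * (1 + a) := by
      rw [ha]; push_cast; field_simp
    have e2 : 2 * ((n:ℕ):ℝ) + 1 = (2 * (n:ℝ)) * (1 + b) := by
      rw [hb]; field_simp
    have l1 : g (m * n) = Real.log (m:ℝ) + Real.log (2 * (n:ℝ)) + Real.log (1 + a) := by
      simp only [hg]
      rw [e1, Real.log_mul (by positivity) hapos.ne', Real.log_mul hM0.ne' (by positivity)]
    have l2 : g n = Real.log (2 * (n:ℝ)) + Real.log (1 + b) := by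
      simp only [hg]
      rw [e2, Real.log_mul (by positivity) hbpos.ne']
    rw [l1, l2]; ring
  -- combine
  have key : harmonicNum (m * n) - harmonicNum n - ((m : ℝ) - 1) / (2 * (n : ℝ)) -
      Real.log (m : ℝ) + ((m : ℝ) ^ 2 - 1) / (2 * (m : ℝ) * (n : ℝ))
      = (∑ k ∈ Finset.Ico n (m * n), (1 / ((k:ℝ) + 1) - (g (k + 1) - g k)))
        + (Real.log (1 + a) - a) - (Real.log (1 + b) - b) := by
    rw [Finset.sum_sub_distrib, step2, step4, step1]
    have hz : a - b - ((m:ℝ) - 1) / (2 * (n:ℝ)) + ((m:ℝ) ^ 2 - 1) / (2 * (m:ℝ) * (n:ℝ)) = 0 := by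
      rw [ha, hb]; field_simp; ring
    linarith [hz]
  rw [key]
  have la := log_one_add_sub ha0 ha1
  have lb := log_one_add_sub hb0 hb1
  have habs : |(∑ k ∈ Finset.Ico n (m * n), (1 / ((k:ℝ) + 1) - (g (k + 1) - g k)))
        + (Real.log (1 + a) - a) - (Real.log (1 + b) - b)|
      ≤ ((m:ℝ) - 1) / (6 * (n:ℝ) ^ 2) + 2 * a ^ 2 + 2 * b ^ 2 := by
    calc _ ≤ |(∑ k ∈ Finset.Ico n (m * n), (1 / ((k:ℝ) + 1) - (g (k + 1) - g k)))
          + (Real.log (1 + a) - a)| + |Real.log (1 + b) - b| := abs_sub _ _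
      _ ≤ (|∑ k ∈ Finset.Ico n (m * n), (1 / ((k:ℝ) + 1) - (g (k + 1) - g k))|
          + |Real.log (1 + a) - a|) + |Real.log (1 + b) - b| := by gcongr; exact abs_add_le _ _
      _ ≤ _ := by gcongr
  refine habs.trans ?_
  have ha2 : 2 * a ^ 2 ≤ 1 / (2 * (n:ℝ) ^ 2) := by
    rw [ha, div_pow, one_pow, mul_one_div, div_le_div_iff₀ (by positivity) (by positivity)]
    nlinarith [mul_nonneg (by nlinarith : (0:ℝ) ≤ (m:ℝ) ^ 2 - 1) (sq_nonneg (n:ℝ))]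
  have hb2 : 2 * b ^ 2 ≤ 1 / (2 * (n:ℝ) ^ 2) := by
    rw [hb, div_pow, one_pow, mul_one_div, div_le_div_iff₀ (by positivity) (by positivity)]
    nlinarith
  have hfin : ((m:ℝ) - 1) / (6 * (n:ℝ) ^ 2) + 1 / (2 * (n:ℝ) ^ 2) + 1 / (2 * (n:ℝ) ^ 2)
      ≤ (m:ℝ) / (n:ℝ) ^ 2 := by
    rw [div_add_div _ _ (by positivity) (by positivity), div_add_div _ _ (by positivity) (by positivity),
      div_le_div_iff₀ (by positivity) (by positivity)]
    nlinarith [mul_nonneg (sub_nonneg.mpr hM) (pow_pos hN0 6).le]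
  linarith
end

section
/- There exists a constant C > 0 such that for all integers m, n with 1 ≤ m ≤ n, |ln m − (H_{mn} − H_n − (m−1)/(2n)) − m/(2n)| ≤ C/(mn); that is, the deviation of the mean entropy from the maximal entropy satisfies ln m − ⟨S_{m,n}⟩ = m/(2n) + O(1/(mn)) uniformly over all 1 ≤ m ≤ n. -/
open Finset

lemma tele_aux (f : ℕ → ℝ) {a b : ℕ} (h : a ≤ b) :
    ∑ k ∈ Finset.Ico a b, (f (k+1) - f k) = f b - f a := by
  rw [Finset.sum_Ico_eq_sub _ h, Finset.sum_range_sub, Finset.sum_range_sub]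
  ring

lemma term_bound (x : ℝ) (hx : 2 ≤ x) :
    |Real.log (x+1) - Real.log x - 1/(x+1) - (1/(2*x) - 1/(2*(x+1)))| ≤
      7/(2*x^2*(x+1)) := by
  have hx0 : (0:ℝ) < x := by linarith
  have hx1 : (0:ℝ) < x + 1 := by linarith
  have habs : |(-1/x : ℝ)| < 1 := by
    rw [abs_div, abs_neg, abs_one, abs_of_pos hx0, div_lt_one hx0]; linarith
  have h1 := Real.abs_log_sub_add_sum_range_le habs 2
  have hsum : (∑ i ∈ range 2, (-1/x) ^ (i + 1) / (i + 1)) = -1/x + 1/(2*x^2) := by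
    simp [Finset.sum_range_succ]
    ring
  have hlog : Real.log (1 - (-1/x)) = Real.log (x+1) - Real.log x := by
    rw [show (1 - (-1/x)) = (x+1)/x by field_simp; ring, Real.log_div (by positivity) (ne_of_gt hx0)]
  have habsx : |(-1/x : ℝ)| = 1/x := by
    rw [abs_div, abs_neg, abs_one, abs_of_pos hx0]
  rw [hsum, hlog, habsx] at h1
  have hxm1 : (0:ℝ) < x - 1 := by linarith
  have hbnd : (1/x)^(2+1) / (1 - 1/x) = 1/(x^2*(x-1)) := by
    rw [show (1 - 1/x) = (x-1)/x by field_simp]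
    norm_num
    field_simp [hxm1.ne']
  rw [hbnd] at h1
  have key : Real.log (x+1) - Real.log x - 1/(x+1) - (1/(2*x) - 1/(2*(x+1)))
      = (-1/x + 1/(2*x^2) + (Real.log (x+1) - Real.log x)) + (-1/(2*x^2*(x+1))) := by
    field_simp
    ring
  rw [key]
  have h2 : |(-1/(2*x^2*(x+1)) : ℝ)| = 1/(2*x^2*(x+1)) := by
    rw [abs_div, abs_neg, abs_one, abs_of_pos (by positivity)]
  calc |(-1/x + 1/(2*x^2) + (Real.log (x+1) - Real.log x)) + (-1/(2*x^2*(x+1)))|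
      ≤ 1/(x^2*(x-1)) + 1/(2*x^2*(x+1)) := by
        refine (abs_add_le _ _).trans ?_
        rw [h2]; exact add_le_add h1 le_rfl
    _ ≤ 7/(2*x^2*(x+1)) := by
        rw [div_add_div _ _ (by positivity) (by positivity),
          div_le_div_iff₀ (by positivity) (by positivity)]
        nlinarith [mul_nonneg (mul_nonneg (pow_nonneg hx0.le 4) (sub_nonneg.2 hx)) hx1.le]

/-- Appendix 3 footnote: there is `C > 0` such that uniformly over all integers `1 ≤ m ≤ n`,
`|ln m − ⟨S_{m,n}⟩ − m/(2n)| ≤ C/(mn)`, where `⟨S_{m,n}⟩ = H_{mn} − H_n − (m−1)/(2n)`. -/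
theorem entropy_deficit_uniform :
    ∃ C : ℝ, 0 < C ∧ ∀ m n : ℕ, 1 ≤ m → m ≤ n →
      |Real.log (m : ℝ) -
          (harmonicNum (m * n) - harmonicNum n - ((m : ℝ) - 1) / (2 * (n : ℝ))) -
          (m : ℝ) / (2 * (n : ℝ))| ≤
        C / ((m : ℝ) * (n : ℝ)) := by
  refine ⟨4, by norm_num, fun m n hm hmn => ?_⟩
  have hn : 1 ≤ n := hm.trans hmn
  set N := m * n with hN
  have hnN : n ≤ N := Nat.le_mul_of_pos_left n hm
  have hn0 : (0:ℝ) < n := by exact_mod_cast hn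
  have hm0 : (0:ℝ) < m := by exact_mod_cast hm
  have hN0 : (0:ℝ) < N := by positivity
  have hNcast : (N:ℝ) = (m:ℝ) * n := by push_cast [hN]; ring
  set F : ℕ → ℝ := fun k => Real.log k - harmonicNum k + 1/(2*(k:ℝ)) with hF
  -- telescoping identity
  have hsumT : ∑ k ∈ Finset.Ico n N, (F (k+1) - F k) = F N - F n := tele_aux F hnN
  -- per-term expression
  have hterm : ∀ k ∈ Finset.Ico n N, F (k+1) - F k =
      Real.log ((k:ℝ)+1) - Real.log k - 1/((k:ℝ)+1) - (1/(2*(k:ℝ)) - 1/(2*((k:ℝ)+1))) := by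
    intro k hk
    simp only [hF, harmonicNum, Finset.sum_range_succ]
    push_cast
    ring
  -- bound each term
  have hbound : ∀ k ∈ Finset.Ico n N, |F (k+1) - F k| ≤
      7/(2*((k:ℝ))^2) - 7/(2*(((k:ℝ))+1)^2) := by
    intro k hk
    rw [Finset.mem_Ico] at hk
    have hm2 : 2 ≤ m := by
      by_contra h
      interval_cases m <;> omega
    have hk2 : 2 ≤ k := le_trans (le_trans hm2 hmn) hk.1
    have hk2' : (2:ℝ) ≤ k := by exact_mod_cast hk2
    have hk0 : (0:ℝ) < k := by linarith
    rw [hterm k (Finset.mem_Ico.2 hk)]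
    refine (term_bound _ hk2').trans ?_
    rw [div_sub_div _ _ (by positivity) (by positivity),
      div_le_div_iff₀ (by positivity) (by positivity)]
    nlinarith [pow_pos hk0 2, pow_pos hk0 4, mul_pos hk0 hk0]
  -- sum of bounds telescopes
  have htele2 : ∑ k ∈ Finset.Ico n N, (7/(2*((k:ℝ))^2) - 7/(2*(((k:ℝ))+1)^2))
      = 7/(2*((n:ℝ))^2) - 7/(2*((N:ℝ))^2) := by
    have h := tele_aux (fun k : ℕ => -(7/(2*((k:ℝ))^2))) hnN
    have : ∑ k ∈ Finset.Ico n N, (7/(2*((k:ℝ))^2) - 7/(2*(((k:ℝ))+1)^2))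
        = ∑ k ∈ Finset.Ico n N, (-(7/(2*((k+1:ℕ):ℝ)^2)) - -(7/(2*((k:ℝ))^2))) := by
      refine Finset.sum_congr rfl fun k _ => ?_
      push_cast
      ring
    rw [this, h]
    ring
  have hFsum : |F N - F n| ≤ 7/(2*((n:ℝ))^2) := by
    rw [← hsumT]
    refine le_trans (Finset.abs_sum_le_sum_abs _ _) ?_
    refine le_trans (Finset.sum_le_sum hbound) ?_
    rw [htele2]
    have : (0:ℝ) ≤ 7/(2*((N:ℝ))^2) := by positivity
    linarith
  -- identify the goal expression
  have hlogm : Real.log (m:ℝ) = Real.log (N:ℝ) - Real.log (n:ℝ) := by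
    rw [hNcast, Real.log_mul (ne_of_gt hm0) (ne_of_gt hn0)]; ring
  have hexpr : Real.log (m : ℝ) -
      (harmonicNum (m * n) - harmonicNum n - ((m : ℝ) - 1) / (2 * (n : ℝ))) -
      (m : ℝ) / (2 * (n : ℝ)) = (F N - F n) - 1/(2*(N:ℝ)) := by
    rw [hlogm]
    simp only [hF, ← hN]
    field_simp
    ring
  rw [hexpr]
  have h1 : |(F N - F n) - 1/(2*(N:ℝ))| ≤ |F N - F n| + 1/(2*(N:ℝ)) := by
    refine le_trans (abs_sub _ _) ?_
    rw [abs_div, abs_of_pos (by positivity : (0:ℝ) < 2*(N:ℝ)), abs_one]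
  have h2 : 7/(2*((n:ℝ))^2) ≤ 7/(2*(N:ℝ)) := by
    apply div_le_div_of_nonneg_left (by norm_num) (by positivity)
    rw [hNcast]
    have hmn' : (m:ℝ) ≤ n := by exact_mod_cast hmn
    nlinarith
  have h3 : 7/(2*(N:ℝ)) + 1/(2*(N:ℝ)) = 4/(N:ℝ) := by
    field_simp
    ring
  calc |(F N - F n) - 1/(2*(N:ℝ))| ≤ |F N - F n| + 1/(2*(N:ℝ)) := h1
    _ ≤ 7/(2*(N:ℝ)) + 1/(2*(N:ℝ)) := by linarith [hFsum]
    _ = 4/(N:ℝ) := h3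
    _ = 4/((m:ℝ)*(n:ℝ)) := by rw [hNcast]
end
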